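/- arXiv:2406.17674 — 8 statements merged into one kernel-verified Lean document; each statement's English description precedes it below -/
import Mathlib

section
/- Let (X,d) be a metric space, A ⊆ X nonempty closed, p ∈ [1,∞). For y ∈ X define ψ_y : X → ℝ ∪ {−∞} by ψ_y(z) = −∞ if z ∉ A ∪ {y}, ψ_y(y) = 0 (when y ∉ A), and ψ_y(z) = −dist(y,A)^p for z ∈ A. Then for all x ∈ X, inf_{z∈X} (d(x,z)^p − ψ_y(z)) = min{d(x,y)^p, dist(x,A)^p + dist(y,A)^p}. In particular, the function x ↦ c̃(x,y) is c-concave for the cost c(x,y) = d(x,y)^p. -/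
open Metric Set

open Classical in
noncomputable def psiAux {X : Type*} [MetricSpace X] (A : Set X) (p : ℝ) (y : X) :
    X → EReal := fun z =>
  if z ∈ A then ((-(infDist y A ^ p) : ℝ) : EReal)
  else if z = y then ((0 : ℝ) : EReal)
  else ⊥

theorem ctilde_is_c_concave
    {X : Type*} [MetricSpace X] (A : Set X) (hA : IsClosed A) (hne : A.Nonempty)
    (p : ℝ) (hp : 1 ≤ p) (y : X) :
    (∀ x : X,
      (⨅ z : X, (((dist x z ^ p : ℝ) : EReal) - psiAux A p y z)) =
        ((min (dist x y ^ p) (infDist x A ^ p + infDist y A ^ p) : ℝ) : EReal)) ∧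
    (∃ ψ : X → EReal, ∀ x : X,
      ((min (dist x y ^ p) (infDist x A ^ p + infDist y A ^ p) : ℝ) : EReal) =
        ⨅ z : X, (((dist x z ^ p : ℝ) : EReal) - ψ z)) := by
  have hp0 : 0 ≤ p := le_trans zero_le_one hp
  have key : ∀ x : X,
      (⨅ z : X, (((dist x z ^ p : ℝ) : EReal) - psiAux A p y z)) =
        ((min (dist x y ^ p) (infDist x A ^ p + infDist y A ^ p) : ℝ) : EReal) := by
    intro x
    set dyA := infDist y A with hdyA
    set dxA := infDist x A with hdxA
    have hterm_mem : ∀ z, z ∈ A →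
        (((dist x z ^ p : ℝ) : EReal) - psiAux A p y z) = ((dist x z ^ p + dyA ^ p : ℝ) : EReal) := by
      intro z hz
      simp only [psiAux, if_pos hz, ← EReal.coe_sub]
      norm_num
      rfl
    have hterm_y : (((dist x y ^ p : ℝ) : EReal) - psiAux A p y y) = ((dist x y ^ p : ℝ) : EReal) := by
      by_cases hyA : y ∈ A
      · rw [hterm_mem y hyA, hdyA, infDist_zero_of_mem hyA,
          Real.zero_rpow (by linarith), add_zero]
      · simp only [psiAux, if_neg hyA, if_pos rfl, ← EReal.coe_sub]
        norm_num
    apply le_antisymm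
    · -- inf ≤ min
      have hcoe_min : ((min (dist x y ^ p) (dxA ^ p + dyA ^ p) : ℝ) : EReal)
          = min ((dist x y ^ p : ℝ) : EReal) ((dxA ^ p + dyA ^ p : ℝ) : EReal) :=
        Monotone.map_min (fun _ _ h => EReal.coe_le_coe_iff.mpr h)
      rw [hcoe_min]
      refine le_min ?_ ?_
      · exact hterm_y ▸ iInf_le _ y
      · rw [← EReal.le_of_forall_lt_iff_le]
        intro w hw
        set ε : ℝ := w - (dxA ^ p + dyA ^ p) with hε
        have hεpos : 0 < ε := by
          have := EReal.coe_lt_coe_iff.mp hw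
          linarith
        have hc : ContinuousAt (fun t : ℝ => t ^ p) dxA :=
          Real.continuousAt_rpow_const _ _ (Or.inr hp0)
        have hev : ∀ᶠ t in nhds dxA, t ^ p < dxA ^ p + ε :=
          hc.eventually_lt_const (by linarith)
        obtain ⟨δ, δpos, hδ⟩ := Metric.eventually_nhds_iff.mp hev
        obtain ⟨a, haA, hda⟩ := (infDist_lt_iff hne).mp
          (show dxA < dxA + δ by linarith)
        have hge : dxA ≤ dist x a := infDist_le_dist_of_mem haA
        have h1 : dist (dist x a) dxA < δ := by
          rw [Real.dist_eq, abs_of_nonneg (by linarith)]; linarith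
        have h2 : dist x a ^ p < dxA ^ p + ε := hδ h1
        calc (⨅ z : X, (((dist x z ^ p : ℝ) : EReal) - psiAux A p y z))
            ≤ ((dist x a ^ p + dyA ^ p : ℝ) : EReal) := hterm_mem a haA ▸ iInf_le _ a
          _ ≤ (w : EReal) := EReal.coe_le_coe_iff.mpr (by linarith)
    · -- min ≤ inf
      refine le_iInf fun z => ?_
      by_cases hz : z ∈ A
      · rw [hterm_mem z hz]
        refine (min_le_right _ _).trans ?_ |>.trans (le_refl _) |> EReal.coe_le_coe_iff.mpr
        have : dxA ^ p ≤ dist x z ^ p :=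
          Real.rpow_le_rpow infDist_nonneg (infDist_le_dist_of_mem hz) hp0
        linarith
      · by_cases hzy : z = y
        · subst hzy
          rw [hterm_y]
          exact EReal.coe_le_coe_iff.mpr (min_le_left _ _)
        · have : psiAux A p y z = ⊥ := by simp [psiAux, hz, hzy]
          rw [this, EReal.coe_sub_bot]
          exact le_top
  exact ⟨key, ⟨psiAux A p y, fun x => (key x).symm⟩⟩
end

section
/- Let (X,A) be a metric pair with X complete separable proper, Ω = X \ A, p ∈ [1,∞), and μ, ν ∈ M_p(X,A). If γ ∈ Adm(μ,ν) satisfies ∫_{E_Ω} d(x,y)^p dγ = 0, then μ = ν. Conversely, if μ = ν there exists γ ∈ Adm(μ,ν) with zero cost, namely γ = (id,id)_# μ. Hence Wb_p(μ,ν) = 0 if and only if μ = ν, given existence of optimal plans. -/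
open MeasureTheory Metric Set ENNReal Filter

noncomputable def ptCost {X : Type*} [PseudoMetricSpace X] [MeasurableSpace X]
    (p : ℝ) (γ : Measure (X × X)) : ℝ≥0∞ :=
  ∫⁻ z, ENNReal.ofReal (dist z.1 z.2 ^ p) ∂γ

def ptAdm {X : Type*} [MeasurableSpace X] (A : Set X) (μ ν : Measure X) :
    Set (Measure (X × X)) :=
  {γ | γ (A ×ˢ A) = 0 ∧ (γ.map Prod.fst).restrict Aᶜ = μ ∧ (γ.map Prod.snd).restrict Aᶜ = ν}

noncomputable def WbPow {X : Type*} [PseudoMetricSpace X] [MeasurableSpace X]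
    (p : ℝ) (A : Set X) (μ ν : Measure X) : ℝ≥0∞ :=
  ⨅ γ ∈ ptAdm A μ ν, ptCost p γ

noncomputable def Wb {X : Type*} [PseudoMetricSpace X] [MeasurableSpace X]
    (p : ℝ) (A : Set X) (μ ν : Measure X) : ℝ≥0∞ :=
  WbPow p A μ ν ^ (1 / p)

def MemMp {X : Type*} [PseudoMetricSpace X] [MeasurableSpace X] (p : ℝ) (A : Set X)
    (μ : Measure X) : Prop :=
  μ A = 0 ∧ IsLocallyFiniteMeasure μ ∧
    ∫⁻ x, ENNReal.ofReal (Metric.infDist x A ^ p) ∂μ ≠ ⊤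

theorem wb_eq_zero_iff_eq
    {X : Type*} [MetricSpace X] [CompleteSpace X] [TopologicalSpace.SeparableSpace X]
    [ProperSpace X] [MeasurableSpace X] [BorelSpace X]
    (A : Set X) (hA : IsClosed A) (hne : A.Nonempty)
    (p : ℝ) (hp : 1 ≤ p)
    (μ ν : Measure X) (hμ : MemMp p A μ) (hν : MemMp p A ν) :
    (∀ γ ∈ ptAdm A μ ν, ptCost p γ = 0 → μ = ν) ∧
    (μ = ν → μ.map (fun x => (x, x)) ∈ ptAdm A μ ν ∧
      ptCost p (μ.map (fun x => (x, x))) = 0) ∧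
    ((∃ γ ∈ ptAdm A μ ν, ptCost p γ = WbPow p A μ ν) →
      (WbPow p A μ ν = 0 ↔ μ = ν)) := by
  have hp0 : p ≠ 0 := by linarith
  have hmeas : Measurable fun z : X × X => ENNReal.ofReal (dist z.1 z.2 ^ p) := by
    apply Measurable.ennreal_ofReal
    exact ((Real.continuous_rpow_const (by linarith)).comp continuous_dist).measurable
  have part1 : ∀ γ ∈ ptAdm A μ ν, ptCost p γ = 0 → μ = ν := by
    intro γ hγ h0
    obtain ⟨-, h1, h2⟩ := hγ
    have hae : ∀ᵐ z : X × X ∂γ, ENNReal.ofReal (dist z.1 z.2 ^ p) = 0 :=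
      (lintegral_eq_zero_iff hmeas).mp h0
    have hdiag : (Prod.fst : X × X → X) =ᵐ[γ] Prod.snd := by
      filter_upwards [hae] with z hz
      have hd : dist z.1 z.2 ^ p = 0 := by
        have := ENNReal.ofReal_eq_zero.mp hz
        have hnn : 0 ≤ dist z.1 z.2 ^ p := Real.rpow_nonneg dist_nonneg p
        linarith
      have : dist z.1 z.2 = 0 := by
        by_contra hne'
        exact hne' ((Real.rpow_eq_zero dist_nonneg hp0).mp hd)
      simpa [dist_eq_zero] using this
    rw [← h1, ← h2, Measure.map_congr hdiag]
  refine ⟨part1, ?_, ?_⟩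
  · rintro rfl
    have hmd : Measurable fun x : X => (x, x) := measurable_id.prodMk measurable_id
    have hmem : μ.map (fun x => (x, x)) ∈ ptAdm A μ μ := by
      refine ⟨?_, ?_, ?_⟩
      · rw [Measure.map_apply hmd ((hA.measurableSet).prod hA.measurableSet)]
        have : (fun x : X => (x, x)) ⁻¹' (A ×ˢ A) = A := by
          ext x; simp [Set.mem_prod]
        rw [this]; exact hμ.1
      · rw [Measure.map_map (by measurability) hmd,
          show (Prod.fst ∘ fun x : X => (x, x)) = id from rfl, Measure.map_id]
        exact Measure.restrict_eq_self_of_ae_mem (mem_ae_iff.mpr (by simpa [Set.compl_setOf] using hμ.1))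
      · rw [Measure.map_map (by measurability) hmd,
          show (Prod.snd ∘ fun x : X => (x, x)) = id from rfl, Measure.map_id]
        exact Measure.restrict_eq_self_of_ae_mem (mem_ae_iff.mpr (by simpa [Set.compl_setOf] using hμ.1))
    refine ⟨hmem, ?_⟩
    unfold ptCost
    rw [lintegral_map hmeas hmd]
    simp [Real.zero_rpow hp0]
  · rintro ⟨γ, hγ, hcost⟩
    constructor
    · intro h0
      exact part1 γ hγ (by rw [hcost]; exact h0)
    · rintro rfl
      have hdiag : μ.map (fun x => (x, x)) ∈ ptAdm A μ μ ∧
          ptCost p (μ.map (fun x => (x, x))) = 0 := by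
        have hmd : Measurable fun x : X => (x, x) := measurable_id.prodMk measurable_id
        refine ⟨⟨?_, ?_, ?_⟩, ?_⟩
        · rw [Measure.map_apply hmd ((hA.measurableSet).prod hA.measurableSet)]
          have : (fun x : X => (x, x)) ⁻¹' (A ×ˢ A) = A := by
            ext x; simp [Set.mem_prod]
          rw [this]; exact hμ.1
        · rw [Measure.map_map (by measurability) hmd,
            show (Prod.fst ∘ fun x : X => (x, x)) = id from rfl, Measure.map_id]
          exact Measure.restrict_eq_self_of_ae_mem (mem_ae_iff.mpr (by simpa [Set.compl_setOf] using hμ.1))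
        · rw [Measure.map_map (by measurability) hmd,
            show (Prod.snd ∘ fun x : X => (x, x)) = id from rfl, Measure.map_id]
          exact Measure.restrict_eq_self_of_ae_mem (mem_ae_iff.mpr (by simpa [Set.compl_setOf] using hμ.1))
        · unfold ptCost
          rw [lintegral_map hmeas hmd]
          simp [Real.zero_rpow hp0]
      have hle : WbPow p A μ μ ≤ ptCost p (μ.map (fun x => (x, x))) :=
        iInf₂_le _ hdiag.1
      rw [hdiag.2] at hle
      exact le_antisymm hle zero_le
end

section
/- Let (X,A) be a metric pair with X complete separable proper and p ∈ [1,∞). Then Wb_p satisfies the triangle inequality on M_p(X,A): for all μ¹, μ², μ³ ∈ M_p(X,A), Wb_p(μ¹,μ³) ≤ Wb_p(μ¹,μ²) + Wb_p(μ²,μ³). -/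
open MeasureTheory Metric Set ENNReal Filter ProbabilityTheory

namespace WbAux

variable {α β γ : Type*} [MeasurableSpace α] [MeasurableSpace β] [MeasurableSpace γ]

lemma map_snd_compProd_comap (ν : Measure (α × β)) [SFinite ν]
    (K : Kernel β γ) [IsSFiniteKernel K] :
    (ν ⊗ₘ (K.comap Prod.snd measurable_snd)).map (fun z : (α × β) × γ => (z.1.2, z.2))
      = (ν.map Prod.snd) ⊗ₘ K := by
  ext S hS
  rw [Measure.map_apply (by fun_prop) hS,
    Measure.compProd_apply (hS.preimage (by fun_prop)),
    Measure.compProd_apply hS,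
    lintegral_map (Kernel.measurable_kernel_prodMk_left hS) measurable_snd]
  refine lintegral_congr fun ab => ?_
  rw [Kernel.comap_apply]
  rfl

lemma map_fst_compProd_comap (ν : Measure (α × β)) [SFinite ν]
    (K : Kernel β γ) [IsMarkovKernel K] :
    (ν ⊗ₘ (K.comap Prod.snd measurable_snd)).map Prod.fst = ν :=
  Measure.fst_compProd ν (K.comap Prod.snd measurable_snd)

end WbAux

open WbAux

theorem wb_core {X : Type*} [MetricSpace X] [CompleteSpace X]
    [TopologicalSpace.SeparableSpace X]
    [ProperSpace X] [MeasurableSpace X] [BorelSpace X]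
    (A : Set X) (hA : IsClosed A) (hne : A.Nonempty) (p : ℝ) (hp : 1 ≤ p)
    (μ₁ μ₂ μ₃ : Measure X) (h₂fin : IsLocallyFiniteMeasure μ₂)
    (γa : Measure (X × X)) (ha : γa ∈ ptAdm A μ₁ μ₂)
    (γb : Measure (X × X)) (hb : γb ∈ ptAdm A μ₂ μ₃) :
    Wb p A μ₁ μ₃ ≤ ptCost p γa ^ (1 / p) + ptCost p γb ^ (1 / p) := by
  haveI : Nonempty X := ⟨hne.some⟩
  haveI : SecondCountableTopology X := UniformSpace.secondCountable_of_separable X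
  haveI : SigmaFinite μ₂ := inferInstance
  have hp0 : (0:ℝ) < p := lt_of_lt_of_le one_pos hp
  have hAm : MeasurableSet A := hA.measurableSet
  -- decompositions
  set α : Measure (X × X) := γa.restrict (Prod.snd ⁻¹' Aᶜ) with hα_def
  set β : Measure (X × X) := γa.restrict (Prod.snd ⁻¹' A) with hβ_def
  set α' : Measure (X × X) := γb.restrict (Prod.fst ⁻¹' Aᶜ) with hα'_def
  set β' : Measure (X × X) := γb.restrict (Prod.fst ⁻¹' A) with hβ'_def
  set ν₂ : Measure X := (γa.map Prod.snd).restrict A with hν₂_def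
  set ν₂' : Measure X := (γb.map Prod.fst).restrict A with hν₂'_def
  have hαβ : α + β = γa := by
    rw [hα_def, hβ_def, Set.preimage_compl]
    exact Measure.restrict_compl_add_restrict (hAm.preimage measurable_snd)
  have hα'β' : α' + β' = γb := by
    rw [hα'_def, hβ'_def, Set.preimage_compl]
    exact Measure.restrict_compl_add_restrict (hAm.preimage measurable_fst)
  have hαsnd : α.map Prod.snd = μ₂ := by
    rw [hα_def, ← Measure.restrict_map measurable_snd hAm.compl, ha.2.2]
  have hβsnd : β.map Prod.snd = ν₂ := by
    rw [hβ_def, ← Measure.restrict_map measurable_snd hAm]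
  have hα'fst : α'.map Prod.fst = μ₂ := by
    rw [hα'_def, ← Measure.restrict_map measurable_fst hAm.compl, hb.2.1]
  have hβ'fst : β'.map Prod.fst = ν₂' := by
    rw [hβ'_def, ← Measure.restrict_map measurable_fst hAm]
  -- partition of X into sets of finite μ₂ measure
  set B : ℕ → Set X := disjointed (spanningSets μ₂) with hB_def
  have hBm : ∀ n, MeasurableSet (B n) :=
    MeasurableSet.disjointed fun n => measurableSet_spanningSets μ₂ n
  have hBd : Pairwise (Function.onFun Disjoint B) := disjoint_disjointed _
  have hBU : ⋃ n, B n = univ := by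
    rw [hB_def, iUnion_disjointed, iUnion_spanningSets]
  have hBfin : ∀ n, μ₂ (B n) < ⊤ := fun n =>
    lt_of_le_of_lt (measure_mono (disjointed_subset _ n)) (measure_spanningSets_lt_top μ₂ n)
  -- pieces
  set αn : ℕ → Measure (X × X) := fun n => α.restrict (Prod.snd ⁻¹' B n) with hαn_def
  set α'n : ℕ → Measure (X × X) := fun n => α'.restrict (Prod.fst ⁻¹' B n) with hα'n_def
  have hαnsnd : ∀ n, (αn n).map Prod.snd = μ₂.restrict (B n) := fun n => by
    rw [hαn_def, ← Measure.restrict_map measurable_snd (hBm n), hαsnd]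
  have hα'nfst : ∀ n, (α'n n).map Prod.fst = μ₂.restrict (B n) := fun n => by
    rw [hα'n_def, ← Measure.restrict_map measurable_fst (hBm n), hα'fst]
  haveI hαnfin : ∀ n, IsFiniteMeasure (αn n) := fun n => by
    constructor
    have : (αn n) univ = ((αn n).map Prod.snd) univ := by
      rw [Measure.map_apply measurable_snd MeasurableSet.univ, Set.preimage_univ]
    rw [this, hαnsnd n, Measure.restrict_apply_univ]
    exact hBfin n
  haveI hα'nfin : ∀ n, IsFiniteMeasure (α'n n) := fun n => by
    constructor
    have : (α'n n) univ = ((α'n n).map Prod.fst) univ := by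
      rw [Measure.map_apply measurable_fst MeasurableSet.univ, Set.preimage_univ]
    rw [this, hα'nfst n, Measure.restrict_apply_univ]
    exact hBfin n
  -- kernels and glued triple measure
  set K : ℕ → Kernel X X := fun n => (α'n n).condKernel with hK_def
  set mn : ℕ → Measure ((X × X) × X) :=
    fun n => (αn n) ⊗ₘ ((K n).comap Prod.snd measurable_snd) with hmn_def
  have hdis : ∀ n, (μ₂.restrict (B n)) ⊗ₘ K n = α'n n := fun n => by
    have h1 : (α'n n).fst ⊗ₘ (α'n n).condKernel = α'n n := (α'n n).disintegrate _
    have h2 : (α'n n).fst = μ₂.restrict (B n) := hα'nfst n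
    rw [hK_def, ← h2]; exact h1
  set j2 : X × X → (X × X) × X := fun q => ((q.1, q.2), q.2) with hj2_def
  set j3 : X × X → (X × X) × X := fun q => ((q.1, q.1), q.2) with hj3_def
  have hj2m : Measurable j2 := by fun_prop
  have hj3m : Measurable j3 := by fun_prop
  set m : Measure ((X × X) × X) := Measure.sum mn + β.map j2 + β'.map j3 with hm_def
  set π23 : (X × X) × X → X × X := fun z => (z.1.2, z.2) with hπ23_def
  set π13 : (X × X) × X → X × X := fun z => (z.1.1, z.2) with hπ13_def
  have hπ23m : Measurable π23 := by fun_prop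
  have hπ13m : Measurable π13 := by fun_prop
  set dg : X → X × X := fun a => (a, a) with hdg_def
  have hdgm : Measurable dg := by fun_prop
  -- marginal 12
  have hsum12 : (Measure.sum mn).map Prod.fst = α := by
    rw [Measure.map_sum measurable_fst.aemeasurable]
    have he : ∀ n, (mn n).map Prod.fst = αn n := fun n =>
      map_fst_compProd_comap (αn n) (K n)
    simp_rw [he]
    rw [hαn_def]
    have : ∀ n, Prod.snd ⁻¹' B n = (fun q : X × X => q.2) ⁻¹' B n := fun n => rfl
    rw [← Measure.restrict_iUnion (hd := ?_) (hm := fun n => (hBm n).preimage measurable_snd)]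
    · rw [← Set.preimage_iUnion, hBU, Set.preimage_univ, Measure.restrict_univ]
    · intro i j hij
      exact Set.disjoint_left.mpr fun q hqi hqj =>
        Set.disjoint_left.mp (hBd hij) hqi hqj
  have hm12 : m.map Prod.fst = γa + ν₂'.map dg := by
    rw [hm_def, Measure.map_add _ _ measurable_fst, Measure.map_add _ _ measurable_fst,
      hsum12]
    have h2 : (β.map j2).map Prod.fst = β := by
      rw [Measure.map_map measurable_fst hj2m]
      have : (Prod.fst ∘ j2) = id := by funext q; rfl
      rw [this, Measure.map_id]
    have h3 : (β'.map j3).map Prod.fst = ν₂'.map dg := by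
      rw [Measure.map_map measurable_fst hj3m, ← hβ'fst,
        Measure.map_map hdgm measurable_fst]
      rfl
    rw [h2, h3, hαβ]
  -- marginal 23
  have hsum23 : (Measure.sum mn).map π23 = α' := by
    rw [Measure.map_sum hπ23m.aemeasurable]
    have he : ∀ n, (mn n).map π23 = α'n n := fun n => by
      rw [hmn_def, hπ23_def]
      have := map_snd_compProd_comap (αn n) (K n)
      rw [this, hαnsnd n, hdis n]
    simp_rw [he]
    rw [hα'n_def]
    rw [← Measure.restrict_iUnion (hd := ?_) (hm := fun n => (hBm n).preimage measurable_fst)]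
    · rw [← Set.preimage_iUnion, hBU, Set.preimage_univ, Measure.restrict_univ]
    · intro i j hij
      exact Set.disjoint_left.mpr fun q hqi hqj =>
        Set.disjoint_left.mp (hBd hij) hqi hqj
  have hm23 : m.map π23 = γb + ν₂.map dg := by
    rw [hm_def, Measure.map_add _ _ hπ23m, Measure.map_add _ _ hπ23m, hsum23]
    have h2 : (β.map j2).map π23 = ν₂.map dg := by
      rw [Measure.map_map hπ23m hj2m, ← hβsnd, Measure.map_map hdgm measurable_snd]
      rfl
    have h3 : (β'.map j3).map π23 = β' := by
      rw [Measure.map_map hπ23m hj3m]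
      have : (π23 ∘ j3) = id := by funext q; rfl
      rw [this, Measure.map_id]
    rw [h2, h3]
    rw [add_right_comm, hα'β']
  -- the candidate plan
  set γc : Measure (X × X) := (m.map π13).restrict ((A ×ˢ A)ᶜ) with hγc_def
  have hAAm : MeasurableSet (A ×ˢ A : Set (X × X)) := hAm.prod hAm
  have hfst_sub : (Prod.fst ⁻¹' Aᶜ : Set (X × X)) ⊆ (A ×ˢ A)ᶜ := by
    intro q hq hq'
    exact hq hq'.1
  have hsnd_sub : (Prod.snd ⁻¹' Aᶜ : Set (X × X)) ⊆ (A ×ˢ A)ᶜ := by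
    intro q hq hq'
    exact hq hq'.2
  have hmem : γc ∈ ptAdm A μ₁ μ₃ := by
    refine ⟨?_, ?_, ?_⟩
    · rw [hγc_def, Measure.restrict_apply hAAm, Set.inter_compl_self, measure_empty]
    · rw [hγc_def, Measure.restrict_map measurable_fst hAm.compl,
        Measure.restrict_restrict (hAm.compl.preimage measurable_fst),
        Set.inter_eq_left.mpr hfst_sub, ← Measure.restrict_map measurable_fst hAm.compl,
        Measure.map_map measurable_fst hπ13m]
      have he : (Prod.fst ∘ π13) = (Prod.fst ∘ (Prod.fst : (X × X) × X → X × X)) := rfl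
      rw [he, ← Measure.map_map measurable_fst measurable_fst, hm12,
        Measure.map_add _ _ measurable_fst, Measure.map_map measurable_fst hdgm]
      have he2 : (Prod.fst ∘ dg) = id := rfl
      rw [he2, Measure.map_id, Measure.restrict_add, ha.2.1, hν₂'_def,
        Measure.restrict_restrict hAm.compl, Set.compl_inter_self,
        Measure.restrict_empty, add_zero]
    · rw [hγc_def, Measure.restrict_map measurable_snd hAm.compl,
        Measure.restrict_restrict (hAm.compl.preimage measurable_snd),
        Set.inter_eq_left.mpr hsnd_sub, ← Measure.restrict_map measurable_snd hAm.compl,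
        Measure.map_map measurable_snd hπ13m]
      have he : (Prod.snd ∘ π13) = (Prod.snd ∘ π23) := rfl
      rw [he, ← Measure.map_map measurable_snd hπ23m, hm23,
        Measure.map_add _ _ measurable_snd, Measure.map_map measurable_snd hdgm]
      have he2 : (Prod.snd ∘ dg) = id := rfl
      rw [he2, Measure.map_id, Measure.restrict_add, hb.2.2, hν₂_def,
        Measure.restrict_restrict hAm.compl, Set.compl_inter_self,
        Measure.restrict_empty, add_zero]
  -- cost estimates
  set F : X × X → ℝ≥0∞ := fun z => ENNReal.ofReal (dist z.1 z.2 ^ p) with hF_def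
  have hFm : Measurable F := by
    apply Measurable.ennreal_ofReal
    exact (measurable_fst.dist measurable_snd).pow measurable_const
  set G12 : (X × X) × X → ℝ≥0∞ := fun z => ENNReal.ofReal (dist z.1.1 z.1.2) with hG12_def
  set G23 : (X × X) × X → ℝ≥0∞ := fun z => ENNReal.ofReal (dist z.1.2 z.2) with hG23_def
  have hG12m : Measurable G12 := by fun_prop
  have hG23m : Measurable G23 := by fun_prop
  have hdiag : ∀ ν : Measure X, ∫⁻ z, F z ∂(ν.map dg) = 0 := fun ν => by
    rw [lintegral_map hFm hdgm]
    simp [hF_def, hdg_def, Real.zero_rpow hp0.ne']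
  have hc : ptCost p γc ≤ ∫⁻ z, F (π13 z) ∂m := by
    calc ptCost p γc = ∫⁻ z, F z ∂γc := rfl
      _ ≤ ∫⁻ z, F z ∂(m.map π13) := lintegral_mono' Measure.restrict_le_self le_rfl
      _ = ∫⁻ z, F (π13 z) ∂m := lintegral_map hFm hπ13m
  have hpt : ∀ z, F (π13 z) ≤ (G12 z + G23 z) ^ p := fun z => by
    rw [hF_def]
    calc ENNReal.ofReal (dist (π13 z).1 (π13 z).2 ^ p)
        = ENNReal.ofReal (dist z.1.1 z.2) ^ p :=
          (ENNReal.ofReal_rpow_of_nonneg dist_nonneg hp0.le).symm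
      _ ≤ (G12 z + G23 z) ^ p := by
          apply ENNReal.rpow_le_rpow _ hp0.le
          calc ENNReal.ofReal (dist z.1.1 z.2)
              ≤ ENNReal.ofReal (dist z.1.1 z.1.2 + dist z.1.2 z.2) :=
                ENNReal.ofReal_le_ofReal (dist_triangle _ _ _)
            _ ≤ G12 z + G23 z := ENNReal.ofReal_add_le
  have h12 : ∫⁻ z, G12 z ^ p ∂m = ptCost p γa := by
    have he : ∀ z : (X × X) × X, G12 z ^ p = F z.1 := fun z => by
      rw [hG12_def, hF_def, ENNReal.ofReal_rpow_of_nonneg dist_nonneg hp0.le]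
    simp_rw [he]
    rw [← lintegral_map hFm measurable_fst, hm12, lintegral_add_measure, hdiag, add_zero]
    rfl
  have h23 : ∫⁻ z, G23 z ^ p ∂m = ptCost p γb := by
    have he : ∀ z : (X × X) × X, G23 z ^ p = F (π23 z) := fun z => by
      rw [hG23_def, hF_def, ENNReal.ofReal_rpow_of_nonneg dist_nonneg hp0.le]
    simp_rw [he]
    rw [← lintegral_map hFm hπ23m, hm23, lintegral_add_measure, hdiag, add_zero]
    rfl
  have hle : WbPow p A μ₁ μ₃ ≤ ptCost p γc := iInf₂_le γc hmem
  have h1p : (0:ℝ) ≤ 1 / p := by positivity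
  calc Wb p A μ₁ μ₃ = WbPow p A μ₁ μ₃ ^ (1 / p) := rfl
    _ ≤ ptCost p γc ^ (1 / p) := ENNReal.rpow_le_rpow hle h1p
    _ ≤ (∫⁻ z, (G12 z + G23 z) ^ p ∂m) ^ (1 / p) :=
        ENNReal.rpow_le_rpow (hc.trans (lintegral_mono hpt)) h1p
    _ ≤ (∫⁻ z, G12 z ^ p ∂m) ^ (1 / p) + (∫⁻ z, G23 z ^ p ∂m) ^ (1 / p) :=
        ENNReal.lintegral_Lp_add_le hG12m.aemeasurable hG23m.aemeasurable hp
    _ = ptCost p γa ^ (1 / p) + ptCost p γb ^ (1 / p) := by rw [h12, h23]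


theorem wb_triangle_inequality
    {X : Type*} [MetricSpace X] [CompleteSpace X] [TopologicalSpace.SeparableSpace X]
    [ProperSpace X] [MeasurableSpace X] [BorelSpace X]
    (A : Set X) (hA : IsClosed A) (hne : A.Nonempty)
    (p : ℝ) (hp : 1 ≤ p)
    (μ₁ μ₂ μ₃ : Measure X)
    (h₁ : MemMp p A μ₁) (h₂ : MemMp p A μ₂) (h₃ : MemMp p A μ₃) :
    Wb p A μ₁ μ₃ ≤ Wb p A μ₁ μ₂ + Wb p A μ₂ μ₃ := by
  have h2loc := h₂.2.1
  have hp0 : (0:ℝ) < p := lt_of_lt_of_le one_pos hp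
  have h1p : (0:ℝ) < 1 / p := by positivity
  have hWb : ∀ (μ ν : Measure X), Wb p A μ ν = ⨅ (γ : ptAdm A μ ν), ptCost p γ.1 ^ (1 / p) := by
    intro μ ν
    rw [Wb, WbPow, iInf_subtype']
    exact (ENNReal.orderIsoRpow (1 / p) h1p).map_iInf _
  rw [hWb μ₁ μ₂, hWb μ₂ μ₃, ENNReal.iInf_add]
  refine le_iInf fun γa => ?_
  rw [ENNReal.add_iInf]
  refine le_iInf fun γb => ?_
  exact wb_core A hA hne p hp μ₁ μ₂ μ₃ h2loc γa.1 γa.2 γb.1 γb.2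
end

section
/- Let (X,A) be a metric pair with X complete separable proper, Ω = X \ A, and let μ¹, μ², μ³ ∈ M_p(X,A), γ¹² ∈ Adm(μ¹,μ²), γ²³ ∈ Adm(μ²,μ³). Then there exists a Borel measure γ¹²³ on X × X × X such that π¹²_# γ¹²³ = γ¹² + σ¹² and π²³_# γ¹²³ = γ²³ + σ²³, where σ¹² and σ²³ are Borel measures supported on the diagonal Δ(A×A) = {(a,a) : a ∈ A}. -/
open MeasureTheory Metric Set ENNReal Filter

open ProbabilityTheory

section Glue

variable {Y : Type*} [MeasurableSpace Y] [StandardBorelSpace Y]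

/-- Mapping a compProd with a product kernel to the first two coordinates. -/
lemma map_compProd_prod_fst (ν : Measure Y) [SFinite ν]
    (κ₁ κ₂ : ProbabilityTheory.Kernel Y Y) [IsMarkovKernel κ₁] [IsMarkovKernel κ₂] :
    (ν ⊗ₘ (κ₁ ×ₖ κ₂)).map (fun q : Y × Y × Y => (q.1, q.2.1)) = ν ⊗ₘ κ₁ := by
  ext s hs
  rw [Measure.map_apply (by fun_prop) hs, Measure.compProd_apply (hs.preimage (by fun_prop)),
    Measure.compProd_apply hs]
  refine lintegral_congr fun a => ?_
  have h1 : (Prod.mk a ⁻¹' ((fun q : Y × Y × Y => (q.1, q.2.1)) ⁻¹' s))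
      = (Prod.mk a ⁻¹' s) ×ˢ (univ : Set Y) := by
    ext z; simp [Set.mem_prod]
  rw [h1, Kernel.prod_apply, Measure.prod_prod, measure_univ, mul_one]

lemma map_compProd_prod_snd (ν : Measure Y) [SFinite ν]
    (κ₁ κ₂ : ProbabilityTheory.Kernel Y Y) [IsMarkovKernel κ₁] [IsMarkovKernel κ₂] :
    (ν ⊗ₘ (κ₁ ×ₖ κ₂)).map (fun q : Y × Y × Y => (q.1, q.2.2)) = ν ⊗ₘ κ₂ := by
  ext s hs
  rw [Measure.map_apply (by fun_prop) hs, Measure.compProd_apply (hs.preimage (by fun_prop)),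
    Measure.compProd_apply hs]
  refine lintegral_congr fun a => ?_
  have h1 : (Prod.mk a ⁻¹' ((fun q : Y × Y × Y => (q.1, q.2.2)) ⁻¹' s))
      = (univ : Set Y) ×ˢ (Prod.mk a ⁻¹' s) := by
    ext z; simp [Set.mem_prod]
  rw [h1, Kernel.prod_apply, Measure.prod_prod, measure_univ, one_mul]

/-- Gluing of two finite measures with matching middle marginal. -/
lemma glue_finite [Nonempty Y] (ρ₁ ρ₂ : Measure (Y × Y)) [IsFiniteMeasure ρ₁] [IsFiniteMeasure ρ₂]
    (h : ρ₁.map Prod.snd = ρ₂.map Prod.fst) :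
    ∃ γ : Measure (Y × Y × Y),
      γ.map (fun z => (z.1, z.2.1)) = ρ₁ ∧ γ.map (fun z => (z.2.1, z.2.2)) = ρ₂ := by
  haveI : IsFiniteMeasure (ρ₁.map Prod.swap) := Measure.isFiniteMeasure_map _ _
  have hfst : (ρ₁.map Prod.swap).fst = ρ₂.fst := by
    rw [Measure.fst_map_swap]; exact h
  refine ⟨(ρ₂.fst ⊗ₘ ((ρ₁.map Prod.swap).condKernel ×ₖ ρ₂.condKernel)).map
    (fun q => (q.2.1, q.1, q.2.2)), ?_, ?_⟩
  · rw [Measure.map_map (by fun_prop) (by fun_prop)]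
    have heq : ((fun z : Y × Y × Y => (z.1, z.2.1)) ∘ (fun q : Y × Y × Y => (q.2.1, q.1, q.2.2)))
        = Prod.swap ∘ (fun q : Y × Y × Y => (q.1, q.2.1)) := rfl
    rw [heq, ← Measure.map_map measurable_swap (by fun_prop),
      map_compProd_prod_fst]
    have h1 : ρ₂.fst ⊗ₘ (ρ₁.map Prod.swap).condKernel = ρ₁.map Prod.swap := by
      rw [← hfst]; exact (ρ₁.map Prod.swap).disintegrate _
    rw [h1, Measure.map_map measurable_swap measurable_swap]
    simp [Prod.swap_swap_eq]
  · rw [Measure.map_map (by fun_prop) (by fun_prop)]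
    have heq : ((fun z : Y × Y × Y => (z.2.1, z.2.2)) ∘ (fun q : Y × Y × Y => (q.2.1, q.1, q.2.2)))
        = (fun q : Y × Y × Y => (q.1, q.2.2)) := rfl
    rw [heq, map_compProd_prod_snd]
    exact ρ₂.disintegrate _

/-- Gluing of two measures with matching σ-finite middle marginal. -/
lemma glue_sigmaFinite [Nonempty Y] (ρ₁ ρ₂ : Measure (Y × Y)) (ν : Measure Y) [SigmaFinite ν]
    (h₁ : ρ₁.map Prod.snd = ν) (h₂ : ρ₂.map Prod.fst = ν) :
    ∃ γ : Measure (Y × Y × Y),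
      γ.map (fun z => (z.1, z.2.1)) = ρ₁ ∧ γ.map (fun z => (z.2.1, z.2.2)) = ρ₂ := by
  set S : ℕ → Set Y := disjointed (spanningSets ν) with hS
  have hSmeas : ∀ n, MeasurableSet (S n) :=
    MeasurableSet.disjointed fun n => measurableSet_spanningSets ν n
  have hSdisj : Pairwise (Function.onFun Disjoint S) := disjoint_disjointed _
  have hSunion : (⋃ n, S n) = univ := by
    rw [hS, iUnion_disjointed, iUnion_spanningSets]
  have hSfin : ∀ n, ν (S n) < ⊤ := fun n =>
    lt_of_le_of_lt (measure_mono (disjointed_subset _ n)) (measure_spanningSets_lt_top ν n)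
  set ρ₁n : ℕ → Measure (Y × Y) := fun n => ρ₁.restrict (Prod.snd ⁻¹' S n) with hρ₁n
  set ρ₂n : ℕ → Measure (Y × Y) := fun n => ρ₂.restrict (Prod.fst ⁻¹' S n) with hρ₂n
  have hfin₁ : ∀ n, IsFiniteMeasure (ρ₁n n) := by
    intro n
    constructor
    rw [hρ₁n, Measure.restrict_apply_univ, ← Measure.map_apply measurable_snd (hSmeas n), h₁]
    exact hSfin n
  have hfin₂ : ∀ n, IsFiniteMeasure (ρ₂n n) := by
    intro n
    constructor
    rw [hρ₂n, Measure.restrict_apply_univ, ← Measure.map_apply measurable_fst (hSmeas n), h₂]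
    exact hSfin n
  have hmarg : ∀ n, (ρ₁n n).map Prod.snd = (ρ₂n n).map Prod.fst := by
    intro n
    rw [hρ₁n, hρ₂n, ← Measure.restrict_map measurable_snd (hSmeas n),
      ← Measure.restrict_map measurable_fst (hSmeas n), h₁, h₂]
  have hglue : ∀ n, ∃ γ : Measure (Y × Y × Y),
      γ.map (fun z => (z.1, z.2.1)) = ρ₁n n ∧ γ.map (fun z => (z.2.1, z.2.2)) = ρ₂n n := by
    intro n
    haveI := hfin₁ n
    haveI := hfin₂ n
    exact glue_finite (ρ₁n n) (ρ₂n n) (hmarg n)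
  choose γn hγn₁ hγn₂ using hglue
  refine ⟨Measure.sum γn, ?_, ?_⟩
  · rw [Measure.map_sum (by fun_prop)]
    simp_rw [hγn₁, hρ₁n]
    rw [← Measure.restrict_iUnion (fun i j hij => (hSdisj hij).preimage _)
      (fun n => (hSmeas n).preimage measurable_snd), ← preimage_iUnion, hSunion,
      preimage_univ, Measure.restrict_univ]
  · rw [Measure.map_sum (by fun_prop)]
    simp_rw [hγn₂, hρ₂n]
    rw [← Measure.restrict_iUnion (fun i j hij => (hSdisj hij).preimage _)
      (fun n => (hSmeas n).preimage measurable_fst), ← preimage_iUnion, hSunion,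
      preimage_univ, Measure.restrict_univ]

end Glue

theorem gluing_lemma_partial_transport
    {X : Type*} [MetricSpace X] [CompleteSpace X] [TopologicalSpace.SeparableSpace X]
    [ProperSpace X] [MeasurableSpace X] [BorelSpace X]
    (A : Set X) (hA : IsClosed A) (hne : A.Nonempty)
    (p : ℝ) (hp : 1 ≤ p)
    (μ₁ μ₂ μ₃ : Measure X)
    (h₁ : MemMp p A μ₁) (h₂ : MemMp p A μ₂) (h₃ : MemMp p A μ₃)
    (γ₁₂ : Measure (X × X)) (hγ₁₂ : γ₁₂ ∈ ptAdm A μ₁ μ₂)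
    (γ₂₃ : Measure (X × X)) (hγ₂₃ : γ₂₃ ∈ ptAdm A μ₂ μ₃) :
    ∃ (γ : Measure (X × X × X)) (σ₁₂ σ₂₃ : Measure (X × X)),
      σ₁₂ {z : X × X | z.1 = z.2 ∧ z.1 ∈ A}ᶜ = 0 ∧
      σ₂₃ {z : X × X | z.1 = z.2 ∧ z.1 ∈ A}ᶜ = 0 ∧
      γ.map (fun z => (z.1, z.2.1)) = γ₁₂ + σ₁₂ ∧
      γ.map (fun z => (z.2.1, z.2.2)) = γ₂₃ + σ₂₃ := by
  haveI : StandardBorelSpace X := inferInstance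
  haveI : IsLocallyFiniteMeasure μ₂ := h₂.2.1
  haveI : SigmaFinite μ₂ := inferInstance
  have hAm : MeasurableSet A := hA.measurableSet
  have hD : MeasurableSet {z : X × X | z.1 = z.2 ∧ z.1 ∈ A} := by
    have h1 : {z : X × X | z.1 = z.2 ∧ z.1 ∈ A}
        = {z : X × X | z.1 = z.2} ∩ (Prod.fst ⁻¹' A) := by ext z; simp [and_comm]
    rw [h1]
    exact (isClosed_diagonal.measurableSet).inter (hAm.preimage measurable_fst)
  -- diagonal map
  set d : X → X × X := fun a => (a, a) with hd
  have hdm : Measurable d := by fun_prop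
  -- middle marginals
  set β : Measure X := γ₁₂.map Prod.snd with hβ
  set α : Measure X := γ₂₃.map Prod.fst with hα
  -- σ measures
  set σ₁₂ : Measure (X × X) := (α.restrict A).map d with hσ₁₂
  set σ₂₃ : Measure (X × X) := (β.restrict A).map d with hσ₂₃
  -- core gluing over Aᶜ
  set ρ₁ : Measure (X × X) := γ₁₂.restrict (Prod.snd ⁻¹' Aᶜ) with hρ₁
  set ρ₂ : Measure (X × X) := γ₂₃.restrict (Prod.fst ⁻¹' Aᶜ) with hρ₂
  have hρ₁m : ρ₁.map Prod.snd = μ₂ := by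
    rw [hρ₁, ← Measure.restrict_map measurable_snd hAm.compl, ← hβ]
    exact hγ₁₂.2.2
  have hρ₂m : ρ₂.map Prod.fst = μ₂ := by
    rw [hρ₂, ← Measure.restrict_map measurable_fst hAm.compl, ← hα]
    exact hγ₂₃.2.1
  haveI : Nonempty X := ⟨hne.some⟩
  obtain ⟨γc, hγc₁, hγc₂⟩ := glue_sigmaFinite ρ₁ ρ₂ μ₂ hρ₁m hρ₂m
  set γleft : Measure (X × X × X) :=
    (γ₁₂.restrict (Prod.snd ⁻¹' A)).map (fun z => (z.1, z.2, z.2)) with hγleft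
  set γright : Measure (X × X × X) :=
    (γ₂₃.restrict (Prod.fst ⁻¹' A)).map (fun z => (z.1, z.1, z.2)) with hγright
  refine ⟨γc + γleft + γright, σ₁₂, σ₂₃, ?_, ?_, ?_, ?_⟩
  · rw [hσ₁₂, Measure.map_apply hdm hD.compl]
    have h1 : d ⁻¹' {z : X × X | z.1 = z.2 ∧ z.1 ∈ A}ᶜ = Aᶜ := by
      ext a; simp [hd]
    rw [h1, Measure.restrict_apply hAm.compl, compl_inter_self, measure_empty]
  · rw [hσ₂₃, Measure.map_apply hdm hD.compl]
    have h1 : d ⁻¹' {z : X × X | z.1 = z.2 ∧ z.1 ∈ A}ᶜ = Aᶜ := by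
      ext a; simp [hd]
    rw [h1, Measure.restrict_apply hAm.compl, compl_inter_self, measure_empty]
  · rw [Measure.map_add _ _ (by fun_prop), Measure.map_add _ _ (by fun_prop), hγc₁]
    have hl : γleft.map (fun z : X × X × X => (z.1, z.2.1)) = γ₁₂.restrict (Prod.snd ⁻¹' A) := by
      rw [hγleft, Measure.map_map (by fun_prop) (by fun_prop)]
      have : ((fun z : X × X × X => (z.1, z.2.1)) ∘ (fun z : X × X => (z.1, z.2, z.2)))
          = id := rfl
      rw [this, Measure.map_id]
    have hr : γright.map (fun z : X × X × X => (z.1, z.2.1)) = σ₁₂ := by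
      rw [hγright, Measure.map_map (by fun_prop) (by fun_prop)]
      have : ((fun z : X × X × X => (z.1, z.2.1)) ∘ (fun z : X × X => (z.1, z.1, z.2)))
          = d ∘ Prod.fst := rfl
      rw [this, ← Measure.map_map hdm measurable_fst,
        ← Measure.restrict_map measurable_fst hAm, ← hα, hσ₁₂]
    rw [hl, hr, hρ₁]
    congr 1
    have h2 : (Prod.snd : X × X → X) ⁻¹' Aᶜ = (Prod.snd ⁻¹' A)ᶜ := rfl
    rw [h2, add_comm, Measure.restrict_add_restrict_compl (hAm.preimage measurable_snd)]
  · rw [Measure.map_add _ _ (by fun_prop), Measure.map_add _ _ (by fun_prop), hγc₂]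
    have hl : γleft.map (fun z : X × X × X => (z.2.1, z.2.2)) = σ₂₃ := by
      rw [hγleft, Measure.map_map (by fun_prop) (by fun_prop)]
      have : ((fun z : X × X × X => (z.2.1, z.2.2)) ∘ (fun z : X × X => (z.1, z.2, z.2)))
          = d ∘ Prod.snd := rfl
      rw [this, ← Measure.map_map hdm measurable_snd,
        ← Measure.restrict_map measurable_snd hAm, ← hβ, hσ₂₃]
    have hr : γright.map (fun z : X × X × X => (z.2.1, z.2.2)) = γ₂₃.restrict (Prod.fst ⁻¹' A) := by
      rw [hγright, Measure.map_map (by fun_prop) (by fun_prop)]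
      have : ((fun z : X × X × X => (z.2.1, z.2.2)) ∘ (fun z : X × X => (z.1, z.1, z.2)))
          = id := rfl
      rw [this, Measure.map_id]
    rw [hl, hr, hρ₂]
    have h2 : (Prod.fst : X × X → X) ⁻¹' Aᶜ = (Prod.fst ⁻¹' A)ᶜ := rfl
    rw [h2, add_right_comm]
    congr 1
    rw [add_comm, Measure.restrict_add_restrict_compl (hAm.preimage measurable_fst)]
end

section
/- Let (X,A) be a metric pair with X complete, separable and proper, and p ∈ [1,∞). For any μ, ν ∈ M_p(X,A), the set Opt(μ,ν) = {γ ∈ Adm(μ,ν) : C(γ) = Wb_p(μ,ν)^p} of optimal partial transport plans is nonempty. -/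
open MeasureTheory Metric Set ENNReal Filter

open NNReal TopologicalSpace Topology

/-! ### Ultrafilter limits in `ℝ≥0∞` -/

section LimF

variable (F : Ultrafilter ℕ)

noncomputable def limF (a : ℕ → ℝ≥0∞) : ℝ≥0∞ :=
  (isCompact_univ.ultrafilter_le_nhds (F.map a) (by simp)).choose

lemma tendsto_limF (a : ℕ → ℝ≥0∞) : Tendsto a ↑F (𝓝 (limF F a)) :=
  (isCompact_univ.ultrafilter_le_nhds (F.map a) (by simp)).choose_spec.2

lemma limF_eq_of_tendsto {a : ℕ → ℝ≥0∞} {x : ℝ≥0∞} (h : Tendsto a ↑F (𝓝 x)) :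
    limF F a = x :=
  tendsto_nhds_unique (tendsto_limF F a) h

lemma limF_const (c : ℝ≥0∞) : limF F (fun _ => c) = c :=
  limF_eq_of_tendsto F tendsto_const_nhds

lemma limF_mono {a b : ℕ → ℝ≥0∞} (h : ∀ n, a n ≤ b n) : limF F a ≤ limF F b :=
  le_of_tendsto_of_tendsto' (tendsto_limF F a) (tendsto_limF F b) h

lemma limF_add (a b : ℕ → ℝ≥0∞) :
    limF F (fun n => a n + b n) = limF F a + limF F b :=
  limF_eq_of_tendsto F ((tendsto_limF F a).add (tendsto_limF F b))

lemma limF_const_mul (c : ℝ≥0∞) (hc : c ≠ ⊤) (a : ℕ → ℝ≥0∞) :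
    limF F (fun n => c * a n) = c * limF F a :=
  limF_eq_of_tendsto F (ENNReal.Tendsto.const_mul (tendsto_limF F a) (Or.inr hc))

lemma limF_finset_sum {ι : Type*} (s : Finset ι) (a : ι → ℕ → ℝ≥0∞) :
    limF F (fun n => ∑ i ∈ s, a i n) = ∑ i ∈ s, limF F (a i) :=
  limF_eq_of_tendsto F (tendsto_finset_sum s (fun i _ => tendsto_limF F (a i)))

end LimF

/-! ### Dyadic approximation from below with open superlevel sets -/

section Dyadic

noncomputable def dyThr (m i : ℕ) : ℝ≥0∞ := ((i : ℝ≥0∞) + 1) / 2 ^ m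

noncomputable def dy (m : ℕ) (a : ℝ≥0∞) : ℝ≥0∞ :=
  ∑ i ∈ Finset.range (m * 2 ^ m), ((2 : ℝ≥0∞) ^ m)⁻¹ * (if dyThr m i < a then 1 else 0)

lemma dy_le (m : ℕ) (a : ℝ≥0∞) : dy m a ≤ a := by
  classical
  set s := (Finset.range (m * 2 ^ m)).filter (fun i => dyThr m i < a) with hs
  have hdy : dy m a = s.card * ((2:ℝ≥0∞) ^ m)⁻¹ := by
    rw [dy]
    simp only [mul_ite, mul_one, mul_zero]
    rw [← Finset.sum_filter, ← hs, Finset.sum_const, nsmul_eq_mul]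
  rcases s.eq_empty_or_nonempty with h | h
  · simp [hdy, h]
  · set M := s.max' h with hM
    have hMs : M ∈ s := s.max'_mem h
    have hlt : dyThr m M < a := (Finset.mem_filter.mp hMs).2
    have hcard : s.card ≤ M + 1 := by
      have hsub : s ⊆ Finset.range (M+1) :=
        fun j hj => Finset.mem_range.mpr (Nat.lt_succ_of_le (Finset.le_max' s j hj))
      simpa using Finset.card_le_card hsub
    calc dy m a = s.card * ((2:ℝ≥0∞)^m)⁻¹ := hdy
    _ ≤ ((M:ℝ≥0∞)+1) * ((2:ℝ≥0∞)^m)⁻¹ := by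
        gcongr
        exact_mod_cast hcard
    _ = dyThr m M := by rw [dyThr, div_eq_mul_inv]
    _ ≤ a := hlt.le

lemma sum_range_two_mul (N : ℕ) (g : ℕ → ℝ≥0∞) :
    ∑ i ∈ Finset.range N, (g (2*i) + g (2*i+1)) = ∑ j ∈ Finset.range (2*N), g j := by
  induction N with
  | zero => simp
  | succ n ih =>
    rw [Finset.sum_range_succ, ih, Nat.mul_succ]
    rw [Finset.sum_range_succ, Finset.sum_range_succ]
    ring_nf

lemma dy_mono (a : ℝ≥0∞) : Monotone fun m => dy m a := by
  apply monotone_nat_of_le_succ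
  intro m
  classical
  set g : ℕ → ℝ≥0∞ := fun j => ((2:ℝ≥0∞)^(m+1))⁻¹ * (if dyThr (m+1) j < a then 1 else 0) with hg
  have halfsum : ((2:ℝ≥0∞)^(m+1))⁻¹ + ((2:ℝ≥0∞)^(m+1))⁻¹ = ((2:ℝ≥0∞)^m)⁻¹ := by
    rw [← two_mul, pow_succ,
      ENNReal.mul_inv (Or.inl (pow_ne_zero m two_ne_zero)) (Or.inl (ENNReal.pow_ne_top ENNReal.ofNat_ne_top)),
      ← mul_assoc, mul_comm (2:ℝ≥0∞) _, mul_assoc,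
      ENNReal.mul_inv_cancel two_ne_zero ENNReal.ofNat_ne_top, mul_one]
  have key : ∀ i, ((2:ℝ≥0∞)^m)⁻¹ * (if dyThr m i < a then 1 else 0) ≤ g (2*i) + g (2*i+1) := by
    intro i
    have h1 : dyThr (m+1) (2*i+1) = dyThr m i := by
      rw [dyThr, dyThr]
      have h2 : ((2*i+1 : ℕ) : ℝ≥0∞) + 1 = 2 * ((i:ℝ≥0∞)+1) := by push_cast; ring
      rw [h2, pow_succ, mul_comm ((2:ℝ≥0∞)^m) 2]
      exact ENNReal.mul_div_mul_left _ _ two_ne_zero ENNReal.ofNat_ne_top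
    have h2 : dyThr (m+1) (2*i) ≤ dyThr m i := by
      rw [← h1, dyThr, dyThr]
      gcongr
      push_cast
      exact le_self_add
    by_cases h : dyThr m i < a
    · have e1 : g (2*i) = ((2:ℝ≥0∞)^(m+1))⁻¹ := by
        rw [hg]; simp only
        rw [if_pos (lt_of_le_of_lt h2 h), mul_one]
      have e2 : g (2*i+1) = ((2:ℝ≥0∞)^(m+1))⁻¹ := by
        rw [hg]; simp only
        rw [if_pos (by rw [h1]; exact h), mul_one]
      rw [if_pos h, mul_one, e1, e2, halfsum]
    · rw [if_neg h, mul_zero]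
      exact zero_le
  calc dy m a ≤ ∑ i ∈ Finset.range (m*2^m), (g (2*i) + g (2*i+1)) :=
        Finset.sum_le_sum (fun i _ => key i)
  _ = ∑ j ∈ Finset.range (2*(m*2^m)), g j := sum_range_two_mul _ g
  _ ≤ ∑ j ∈ Finset.range ((m+1)*2^(m+1)), g j := by
      apply Finset.sum_le_sum_of_subset
      apply Finset.range_subset_range.mpr
      have he : 2*(m*2^m) = m * 2^(m+1) := by ring
      rw [he]
      exact Nat.mul_le_mul_right _ (Nat.le_succ m)
  _ = dy (m+1) a := rfl

lemma iSup_dy (a : ℝ≥0∞) : ⨆ m, dy m a = a := by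
  classical
  apply le_antisymm (iSup_le fun m => dy_le m a)
  apply le_of_forall_lt
  intro b hb
  obtain ⟨r, hbr, hra⟩ := ENNReal.lt_iff_exists_nnreal_btwn.mp hb
  have hbt : b ≠ ⊤ := hbr.ne_top
  have hε : (r : ℝ≥0∞) - b ≠ 0 := by
    simp only [ne_eq, tsub_eq_zero_iff_le, not_le]
    exact hbr
  obtain ⟨k, hk⟩ := ENNReal.exists_inv_two_pow_lt hε
  set m := max k ⌈(r:ℝ)⌉₊ with hm
  set M := ⌊(r:ℝ≥0) * 2^m⌋₊ with hMdef
  have hrm : (r:ℝ≥0) ≤ (m:ℝ≥0) := by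
    have h1 : (r:ℝ) ≤ (⌈(r:ℝ)⌉₊ : ℝ) := Nat.le_ceil _
    have h2 : (⌈(r:ℝ)⌉₊ : ℝ) ≤ (m:ℝ) := by exact_mod_cast le_max_right k _
    have h3 := h1.trans h2
    exact_mod_cast h3
  have hMle : M ≤ m * 2^m := by
    have h1 : (r:ℝ≥0) * 2^m ≤ (m:ℝ≥0) * 2^m := by gcongr
    have h2 : M ≤ ⌊(m:ℝ≥0) * 2^m⌋₊ := Nat.floor_mono h1
    have h3 : ((m * 2^m : ℕ) : ℝ≥0) = (m:ℝ≥0) * 2^m := by push_cast; ring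
    rwa [← h3, Nat.floor_natCast] at h2
  have hcount : ∀ i ∈ Finset.range M, dyThr m i < a := by
    intro i hi
    have hiM : i + 1 ≤ M := Finset.mem_range.mp hi
    have h1 : ((i:ℝ≥0) + 1) ≤ (r:ℝ≥0) * 2^m := by
      calc ((i:ℝ≥0)+1) ≤ (M:ℝ≥0) := by exact_mod_cast hiM
      _ ≤ (r:ℝ≥0) * 2^m := Nat.floor_le (by positivity)
    have h2 : dyThr m i ≤ (r : ℝ≥0∞) := by
      rw [dyThr]
      apply ENNReal.div_le_of_le_mul
      calc ((i:ℝ≥0∞)+1) = (((i:ℝ≥0) + 1 : ℝ≥0) : ℝ≥0∞) := by push_cast; ring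
      _ ≤ (((r:ℝ≥0) * 2^m : ℝ≥0) : ℝ≥0∞) := by exact_mod_cast h1
      _ = (r:ℝ≥0∞) * 2^m := by push_cast; ring
    exact lt_of_le_of_lt h2 hra
  have hdyge : (M:ℝ≥0∞) * ((2:ℝ≥0∞)^m)⁻¹ ≤ dy m a := by
    have h1 : ∑ i ∈ Finset.range M, ((2:ℝ≥0∞)^m)⁻¹ * (if dyThr m i < a then 1 else 0)
        ≤ dy m a :=
      Finset.sum_le_sum_of_subset (Finset.range_subset_range.mpr hMle)
    calc (M:ℝ≥0∞) * ((2:ℝ≥0∞)^m)⁻¹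
        = ∑ _i ∈ Finset.range M, ((2:ℝ≥0∞)^m)⁻¹ := by
          rw [Finset.sum_const, nsmul_eq_mul, Finset.card_range]
    _ = ∑ i ∈ Finset.range M, ((2:ℝ≥0∞)^m)⁻¹ * (if dyThr m i < a then 1 else 0) := by
          apply Finset.sum_congr rfl
          intro i hi
          rw [if_pos (hcount i hi), mul_one]
    _ ≤ dy m a := h1
  have hblt : b < (M:ℝ≥0∞) * ((2:ℝ≥0∞)^m)⁻¹ := by
    set bb := b.toNNReal with hbb
    have hb' : b = (bb : ℝ≥0∞) := (ENNReal.coe_toNNReal hbt).symm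
    have hbbr : (bb:ℝ) < (r:ℝ) := by
      have h0 : (bb:ℝ≥0∞) < (r:ℝ≥0∞) := hb' ▸ hbr
      exact_mod_cast h0
    have hkr : (2:ℝ)⁻¹^k < (r:ℝ) - (bb:ℝ) := by
      have h1 : ((2:ℝ≥0∞)⁻¹^k).toReal < ((r:ℝ≥0∞) - b).toReal := by
        apply ENNReal.toReal_strict_mono ?_ hk
        simp [ne_eq, ENNReal.sub_eq_top_iff]
      have h2 : ((r:ℝ≥0∞) - b).toReal = (r:ℝ) - (bb:ℝ) := by
        rw [hb', ← ENNReal.coe_sub, ENNReal.coe_toReal,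
          NNReal.coe_sub (by exact_mod_cast hbbr.le)]
      have h3 : ((2:ℝ≥0∞)⁻¹^k).toReal = (2:ℝ)⁻¹^k := by
        simp [ENNReal.toReal_pow, ENNReal.toReal_inv]
      rwa [h3, h2] at h1
    have h2m : (0:ℝ) < 2^m := by positivity
    have hMgt : (r:ℝ) * 2^m < (M:ℝ) + 1 := by
      have h := Nat.lt_floor_add_one ((r:ℝ≥0) * 2^m)
      have h' : ((r:ℝ≥0) * 2^m : ℝ≥0) < (M:ℝ≥0) + 1 := h
      have h'' := NNReal.coe_lt_coe.mpr h'
      push_cast at h''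
      convert h'' using 2
    have hpow : (1:ℝ)/2^m ≤ 1/2^k := by
      apply one_div_le_one_div_of_le (by positivity)
      exact pow_le_pow_right₀ (by norm_num) (le_max_left k _)
    have hfinR : (bb:ℝ) < (M:ℝ) / 2^m := by
      have h2 : (2:ℝ)⁻¹^k = 1/2^k := by rw [inv_pow, one_div]
      have h3 : (bb:ℝ) < (r:ℝ) - 1/2^m := by
        rw [h2] at hkr; linarith
      rw [lt_div_iff₀ h2m]
      have h4 : (bb:ℝ)*2^m < ((r:ℝ) - 1/2^m)*2^m := by nlinarith
      have h5 : ((r:ℝ) - 1/2^m)*2^m = (r:ℝ)*2^m - 1 := by field_simp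
      nlinarith
    have h6 : bb < ((M:ℝ≥0) * ((2:ℝ≥0)^m)⁻¹ : ℝ≥0) := by
      have h7 : (bb:ℝ) < (((M:ℝ≥0) * ((2:ℝ≥0)^m)⁻¹ : ℝ≥0):ℝ) := by
        push_cast
        rw [← div_eq_mul_inv]
        exact hfinR
      exact_mod_cast h7
    have hco : ((M:ℝ≥0) * ((2:ℝ≥0)^m)⁻¹ : ℝ≥0∞) = (M:ℝ≥0∞) * ((2:ℝ≥0∞)^m)⁻¹ := by
      rw [ENNReal.coe_inv (pow_ne_zero m two_ne_zero)]
      norm_cast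
      push_cast
      rfl
    rw [hb', ← hco]
    exact ENNReal.coe_lt_coe.mpr h6
  exact lt_of_lt_of_le hblt (le_trans hdyge (le_iSup (fun n => dy n a) m))

lemma measurable_dy_comp {α : Type*} [MeasurableSpace α] {g : α → ℝ≥0∞} (hg : Measurable g)
    (m : ℕ) : Measurable fun z => dy m (g z) := by
  apply Finset.measurable_sum
  intro i _
  exact (Measurable.ite (measurableSet_lt measurable_const hg)
    measurable_const measurable_const).const_mul _

lemma lintegral_dy {α : Type*} [MeasurableSpace α] (ρ : Measure α) {g : α → ℝ≥0∞}
    (hg : Measurable g) (m : ℕ) :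
    ∫⁻ z, dy m (g z) ∂ρ
      = ∑ i ∈ Finset.range (m*2^m), ((2:ℝ≥0∞)^m)⁻¹ * ρ {z | dyThr m i < g z} := by
  rw [show (fun z => dy m (g z))
      = fun z => ∑ i ∈ Finset.range (m*2^m),
          ((2:ℝ≥0∞)^m)⁻¹ * (if dyThr m i < g z then 1 else 0) from rfl]
  rw [lintegral_finset_sum]
  · apply Finset.sum_congr rfl
    intro i _
    rw [lintegral_const_mul _ (Measurable.ite (measurableSet_lt measurable_const hg)
      measurable_const measurable_const)]
    congr 1
    calc ∫⁻ z, (if dyThr m i < g z then (1:ℝ≥0∞) else 0) ∂ρ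
        = ∫⁻ z, {z | dyThr m i < g z}.indicator (fun _ => 1) z ∂ρ := by
          apply lintegral_congr
          intro z
          by_cases h : dyThr m i < g z <;> simp [h]
    _ = ρ {z | dyThr m i < g z} :=
          lintegral_indicator_one (measurableSet_lt measurable_const hg)
  · intro i _
    exact (Measurable.ite (measurableSet_lt measurable_const hg)
      measurable_const measurable_const).const_mul _

end Dyadic

/-! ### A uniqueness lemma for measures vanishing on a closed set -/

section Ext

variable {X : Type*} [MetricSpace X] [ProperSpace X] [MeasurableSpace X] [BorelSpace X]

lemma ext_on_compl (A : Set X) (hA : IsClosed A) (hne : A.Nonempty)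
    (ρ μ : Measure X) (hρA : ρ A = 0) (hμA : μ A = 0) [IsFiniteMeasureOnCompacts μ]
    (hρμ : ∀ U : Set X, IsOpen U → U ⊆ Aᶜ → ρ U = μ U) : ρ = μ := by
  classical
  obtain ⟨x0, _hx0⟩ := id hne
  set W : ℕ → Set X := fun j => {x | (1:ℝ)/(j+1) < infDist x A} ∩ ball x0 (j+1) with hW
  have hWopen : ∀ j, IsOpen (W j) :=
    fun j => ((isOpen_lt continuous_const (continuous_infDist_pt A)).inter isOpen_ball)
  have hWsub : ∀ j, W j ⊆ Aᶜ := by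
    intro j x hx hxA
    have h1 : (1:ℝ)/(j+1) < infDist x A := hx.1
    rw [infDist_zero_of_mem hxA] at h1
    have h2 : (0:ℝ) < 1/(j+1) := by positivity
    linarith
  have hWmono : Monotone W := by
    intro j k hjk
    apply inter_subset_inter
    · intro x hx
      simp only [mem_setOf_eq] at hx ⊢
      have h1 : (1:ℝ)/(k+1) ≤ 1/(j+1) := by
        apply one_div_le_one_div_of_le (by positivity)
        have : (j:ℝ) ≤ k := by exact_mod_cast hjk
        linarith
      linarith
    · exact ball_subset_ball (by exact_mod_cast Nat.succ_le_succ hjk)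
  have hWunion : ⋃ j, W j = Aᶜ := by
    apply subset_antisymm
    · exact iUnion_subset hWsub
    · intro x hx
      have hpos : 0 < infDist x A := (hA.notMem_iff_infDist_pos hne).mp hx
      obtain ⟨j, hj⟩ := exists_nat_one_div_lt hpos
      obtain ⟨k, hk⟩ := exists_nat_gt (dist x x0)
      refine mem_iUnion.mpr ⟨max j k, ?_, ?_⟩
      · simp only [mem_setOf_eq]
        calc (1:ℝ)/(max j k + 1) ≤ 1/(j+1) := by
              apply one_div_le_one_div_of_le (by positivity)
              have : (j:ℝ) ≤ max j k := by exact_mod_cast le_max_left j k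
              linarith
        _ < infDist x A := hj
      · rw [mem_ball]
        calc dist x x0 < k := hk
        _ ≤ max j k + 1 := by
              have : (k:ℝ) ≤ max j k := by exact_mod_cast le_max_right j k
              linarith
  have hWfin : ∀ j, μ (W j) ≠ ⊤ := by
    intro j
    have h1 : W j ⊆ closedBall x0 (j+1) := (inter_subset_right).trans ball_subset_closedBall
    exact ((measure_mono h1).trans_lt (isCompact_closedBall x0 _).measure_lt_top).ne
  have hres : ∀ j : ℕ, ρ.restrict (W j) = μ.restrict (W j) := by
    intro j
    have hρW : ρ (W j) = μ (W j) := hρμ (W j) (hWopen j) (hWsub j)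
    haveI : IsFiniteMeasure (μ.restrict (W j)) :=
      ⟨by rw [Measure.restrict_apply_univ]; exact (hWfin j).lt_top⟩
    haveI : IsFiniteMeasure (ρ.restrict (W j)) :=
      ⟨by rw [Measure.restrict_apply_univ, hρW]; exact (hWfin j).lt_top⟩
    ext B hB
    rw [Set.measure_eq_iInf_isOpen B (ρ.restrict (W j)),
      Set.measure_eq_iInf_isOpen B (μ.restrict (W j))]
    apply le_antisymm <;> {
      apply le_iInf₂
      intro U hBU
      apply le_iInf
      intro hU
      refine iInf₂_le_of_le U hBU (iInf_le_of_le hU ?_)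
      rw [Measure.restrict_apply hU.measurableSet, Measure.restrict_apply hU.measurableSet,
        hρμ (U ∩ W j) (hU.inter (hWopen j)) ((inter_subset_right).trans (hWsub j))]
    }
  ext B hB
  have hsplit : ∀ κ : Measure X, κ A = 0 → κ B = κ (B ∩ Aᶜ) := by
    intro κ hκ
    have h1 : κ (B ∩ A) + κ (B \ A) = κ B := measure_inter_add_diff B hA.measurableSet
    have h2 : κ (B ∩ A) = 0 :=
      le_antisymm ((measure_mono inter_subset_right).trans hκ.le) zero_le
    rw [h2, zero_add] at h1
    rw [← h1, diff_eq]
  rw [hsplit ρ hρA, hsplit μ hμA]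
  have hUeq : B ∩ Aᶜ = ⋃ j, B ∩ W j := by rw [← inter_iUnion, hWunion]
  have hdir : Directed (· ⊆ ·) (fun j => B ∩ W j) :=
    (monotone_const.inter hWmono).directed_le
  rw [hUeq, hdir.measure_iUnion, hdir.measure_iUnion]
  congr 1
  ext j
  calc ρ (B ∩ W j) = ρ.restrict (W j) B := (Measure.restrict_apply hB).symm
  _ = μ.restrict (W j) B := by rw [hres j]
  _ = μ (B ∩ W j) := Measure.restrict_apply hB

end Ext

/-! ### The first-marginal identity for the limit plan -/

section Marg

variable {X : Type*} [MetricSpace X] [ProperSpace X] [MeasurableSpace X] [BorelSpace X]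
  [SecondCountableTopology X]

omit [ProperSpace X] in
lemma costMeasurable (p : ℝ) :
    Measurable fun z : X × X => ENNReal.ofReal (dist z.1 z.2 ^ p) :=
  ((continuous_fst.dist continuous_snd).measurable.pow_const p).ennreal_ofReal

lemma marginal_fst
    (A : Set X) (hA : IsClosed A) (hne : A.Nonempty) (p : ℝ) (hp : 1 ≤ p)
    (μ : Measure X) (hμA : μ A = 0) [IsLocallyFiniteMeasure μ]
    (γseq : ℕ → Measure (X × X))
    (hmarg : ∀ n, ((γseq n).map Prod.fst).restrict Aᶜ = μ)
    (c : ℝ≥0∞) (hc : c ≠ ⊤)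
    (hcost : ∀ n, ptCost p (γseq n) ≤ c + 1)
    (F : Ultrafilter ℕ) (γ' : Measure (X × X))
    (hopen : ∀ U : Set (X×X), IsOpen U → U ⊆ (A ×ˢ A)ᶜ → γ' U ≤ limF F (fun n => γseq n U))
    (hcpt : ∀ K : Set (X×X), IsCompact K → K ⊆ (A ×ˢ A)ᶜ → limF F (fun n => γseq n K) ≤ γ' K) :
    (γ'.map Prod.fst).restrict Aᶜ = μ := by
  classical
  obtain ⟨x0, hx0⟩ := id hne
  have hGn : ∀ n, ∀ S : Set X, MeasurableSet S → S ⊆ Aᶜ → γseq n (S ×ˢ univ) = μ S := by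
    intro n S hS hSA
    have h1 : S ×ˢ (univ : Set X) = (Prod.fst ⁻¹' S : Set (X × X)) := by ext z; simp
    rw [h1, ← Measure.map_apply measurable_fst hS, ← hmarg n,
      Measure.restrict_apply hS, inter_eq_self_of_subset_left hSA]
  have hkey : ∀ U : Set X, IsOpen U → U ⊆ Aᶜ → γ' (U ×ˢ univ) = μ U := by
    intro U hU hUA
    have hUE : (U ×ˢ univ : Set (X×X)) ⊆ (A ×ˢ A)ᶜ := by
      intro z hz hzA
      exact hUA hz.1 hzA.1
    apply le_antisymm
    · calc γ' (U ×ˢ univ) ≤ limF F (fun n => γseq n (U ×ˢ univ)) :=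
            hopen _ (hU.prod isOpen_univ) hUE
      _ = μ U := by
          have h2 : (fun n => γseq n (U ×ˢ univ)) = fun _ => μ U := by
            funext n; exact hGn n U hU.measurableSet hUA
          rw [h2, limF_const]
    · haveI : μ.Regular := inferInstance
      rw [hU.measure_eq_iSup_isCompact μ]
      apply iSup_le; intro K; apply iSup_le; intro hKU; apply iSup_le; intro hK
      have hKA : K ⊆ Aᶜ := hKU.trans hUA
      apply ENNReal.le_of_forall_pos_le_add
      intro ε hε _
      set d := (c+1) * (ε:ℝ≥0∞)⁻¹ with hd
      have h10 : c + 1 ≠ 0 := by simp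
      have h1t : c + 1 ≠ ⊤ := by simp [hc]
      have hdt : d ≠ ⊤ :=
        ENNReal.mul_ne_top h1t (by simp [hε.ne'])
      set T := max 1 (d.toReal + 1) with hT
      have hT1 : (1:ℝ) ≤ T := le_max_left _ _
      have hTd : d < ENNReal.ofReal (T^p) := by
        have h1 : T ≤ T^p := by
          calc T = T^(1:ℝ) := (Real.rpow_one T).symm
          _ ≤ T^p := Real.rpow_le_rpow_of_exponent_le hT1 hp
        calc d < ENNReal.ofReal (d.toReal + 1) := by
              rw [ENNReal.ofReal_add ENNReal.toReal_nonneg zero_le_one,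
                ENNReal.ofReal_toReal hdt, ENNReal.ofReal_one]
              exact ENNReal.lt_add_right hdt one_ne_zero
        _ ≤ ENNReal.ofReal T := ENNReal.ofReal_le_ofReal (le_max_right _ _)
        _ ≤ ENNReal.ofReal (T^p) := ENNReal.ofReal_le_ofReal h1
      obtain ⟨R0, hR0⟩ := hK.isBounded.subset_closedBall x0
      set S := K ×ˢ (closedBall x0 (R0 + T))ᶜ with hS
      have hSlow : ∀ z ∈ S, ENNReal.ofReal (T^p) ≤ ENNReal.ofReal (dist z.1 z.2 ^ p) := by
        intro z hz
        apply ENNReal.ofReal_le_ofReal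
        have h1 : dist z.1 x0 ≤ R0 := hR0 hz.1
        have h2 : R0 + T < dist z.2 x0 := by
          have h5 := hz.2
          simp only [mem_compl_iff, mem_closedBall, not_le] at h5
          linarith [h5]
        have h3 : T ≤ dist z.1 z.2 := by
          have h4 := dist_triangle z.2 z.1 x0
          rw [dist_comm z.2 z.1] at h4
          linarith
        exact Real.rpow_le_rpow (by linarith) h3 (by linarith)
      have hSsmall : ∀ n, γseq n S ≤ (ε:ℝ≥0∞) := by
        intro n
        have h1 : ENNReal.ofReal (T^p) * γseq n S ≤ c + 1 := by
          calc ENNReal.ofReal (T^p) * γseq n S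
              = ∫⁻ _z in S, ENNReal.ofReal (T^p) ∂(γseq n) := by
                rw [setLIntegral_const]
          _ ≤ ∫⁻ z in S, ENNReal.ofReal (dist z.1 z.2 ^ p) ∂(γseq n) :=
                setLIntegral_mono (costMeasurable p) hSlow
          _ ≤ ptCost p (γseq n) := setLIntegral_le_lintegral _ _
          _ ≤ c + 1 := hcost n
        have hTp0 : ENNReal.ofReal (T^p) ≠ 0 := by
          have h6 : (0:ℝ) < T^p := Real.rpow_pos_of_pos (by linarith) p
          simp [ENNReal.ofReal_eq_zero, not_le, h6]
        have h2 : γseq n S ≤ (c+1) / ENNReal.ofReal (T^p) := by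
          rw [ENNReal.le_div_iff_mul_le (Or.inl hTp0) (Or.inl ofReal_ne_top)]
          rw [mul_comm]; exact h1
        calc γseq n S ≤ (c+1) / ENNReal.ofReal (T^p) := h2
        _ ≤ (c+1) / d := ENNReal.div_le_div_left hTd.le _
        _ = (ε:ℝ≥0∞) := by
            rw [hd, div_eq_mul_inv,
              ENNReal.mul_inv (Or.inl h10) (Or.inl h1t), inv_inv, ← mul_assoc,
              ENNReal.mul_inv_cancel h10 h1t, one_mul]
      have hmain : ∀ n, μ K ≤ γseq n (K ×ˢ closedBall x0 (R0 + T)) + (ε:ℝ≥0∞) := by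
        intro n
        have h1 : μ K = γseq n (K ×ˢ univ) := (hGn n K hK.isClosed.measurableSet hKA).symm
        have h2 : (K ×ˢ (univ : Set X)) ⊆ (K ×ˢ closedBall x0 (R0+T)) ∪ S := by
          intro z hz
          by_cases h : z.2 ∈ closedBall x0 (R0+T)
          · exact Or.inl ⟨hz.1, h⟩
          · exact Or.inr ⟨hz.1, h⟩
        calc μ K = γseq n (K ×ˢ univ) := h1
        _ ≤ γseq n ((K ×ˢ closedBall x0 (R0+T)) ∪ S) := measure_mono h2
        _ ≤ γseq n (K ×ˢ closedBall x0 (R0+T)) + γseq n S := measure_union_le _ _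
        _ ≤ γseq n (K ×ˢ closedBall x0 (R0+T)) + ε := by gcongr; exact hSsmall n
      have hKb : IsCompact (K ×ˢ closedBall x0 (R0+T)) := hK.prod (isCompact_closedBall _ _)
      have hKbE : (K ×ˢ closedBall x0 (R0+T) : Set (X×X)) ⊆ (A ×ˢ A)ᶜ := by
        intro z hz hzA
        exact hKA hz.1 hzA.1
      calc μ K = limF F (fun _ => μ K) := (limF_const F _).symm
      _ ≤ limF F (fun n => γseq n (K ×ˢ closedBall x0 (R0+T)) + ε) := limF_mono F hmain
      _ = limF F (fun n => γseq n (K ×ˢ closedBall x0 (R0+T))) + ε := by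
          rw [limF_add F _ (fun _ => (ε:ℝ≥0∞)), limF_const]
      _ ≤ γ' (K ×ˢ closedBall x0 (R0+T)) + ε := by
          gcongr
          exact hcpt _ hKb hKbE
      _ ≤ γ' (U ×ˢ univ) + ε :=
          add_le_add_left (measure_mono (prod_mono hKU (subset_univ _))) _
  apply ext_on_compl A hA hne _ μ ?_ hμA ?_
  · rw [Measure.restrict_apply hA.measurableSet]
    simp
  · intro U hU hUA
    rw [Measure.restrict_apply hU.measurableSet, inter_eq_self_of_subset_left hUA,
      Measure.map_apply measurable_fst hU.measurableSet]
    have h1 : (Prod.fst ⁻¹' U : Set (X × X)) = U ×ˢ (univ : Set X) := by ext z; simp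
    rw [h1]
    exact hkey U hU hUA

end Marg

/-! ### Uniform local bound on admissible plans -/

section UB

variable {X : Type*} [MetricSpace X] [ProperSpace X] [MeasurableSpace X] [BorelSpace X]
  [SecondCountableTopology X]

lemma uniform_bound
    (A : Set X) (hA : IsClosed A) (hne : A.Nonempty)
    (μ ν : Measure X) [IsFiniteMeasureOnCompacts μ] [IsFiniteMeasureOnCompacts ν]
    (γseq : ℕ → Measure (X × X))
    (hmargf : ∀ n, ((γseq n).map Prod.fst).restrict Aᶜ = μ)
    (hmargs : ∀ n, ((γseq n).map Prod.snd).restrict Aᶜ = ν)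
    (K : Set (X × X)) (hK : IsCompact K) (hKE : K ⊆ (A ×ˢ A)ᶜ) :
    ∃ M : ℝ≥0∞, M ≠ ⊤ ∧ ∀ n, γseq n K ≤ M := by
  classical
  rcases K.eq_empty_or_nonempty with h | h
  · exact ⟨0, by simp, fun n => by simp [h]⟩
  set u : X × X → ℝ := fun z => max (infDist z.1 A) (infDist z.2 A) with hu
  have hucont : Continuous u :=
    ((continuous_infDist_pt A).comp continuous_fst).max
      ((continuous_infDist_pt A).comp continuous_snd)
  obtain ⟨z0, hz0K, hz0min'⟩ := hK.exists_isMinOn h hucont.continuousOn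
  have hz0min : ∀ z ∈ K, u z0 ≤ u z := fun z hz => hz0min' hz
  set δ : ℝ := u z0 with hδdef
  have hδpos : 0 < δ := by
    have h1 : z0 ∉ A ×ˢ A := hKE hz0K
    rcases lt_or_ge 0 δ with h2 | h2
    · exact h2
    · exfalso
      have h3 : infDist z0.1 A ≤ 0 := le_trans (le_max_left _ _) h2
      have h4 : infDist z0.2 A ≤ 0 := le_trans (le_max_right _ _) h2
      have h5 : z0.1 ∈ A := by
        rw [← hA.closure_eq]
        exact mem_closure_iff_infDist_zero hne |>.mpr
          (le_antisymm h3 infDist_nonneg)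
      have h6 : z0.2 ∈ A := by
        rw [← hA.closure_eq]
        exact mem_closure_iff_infDist_zero hne |>.mpr
          (le_antisymm h4 infDist_nonneg)
      exact h1 ⟨h5, h6⟩
  set P1 := (Prod.fst '' K) ∩ {x | δ ≤ infDist x A} with hP1
  set P2 := (Prod.snd '' K) ∩ {x | δ ≤ infDist x A} with hP2
  have hP1c : IsCompact P1 :=
    (hK.image continuous_fst).inter_right (isClosed_le continuous_const (continuous_infDist_pt A))
  have hP2c : IsCompact P2 :=
    (hK.image continuous_snd).inter_right (isClosed_le continuous_const (continuous_infDist_pt A))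
  have hP1A : P1 ⊆ Aᶜ := by
    intro x hx hxA
    have h1 : infDist x A = 0 := infDist_zero_of_mem hxA
    have h2 := hx.2
    simp only [mem_setOf_eq, h1] at h2
    linarith
  have hP2A : P2 ⊆ Aᶜ := by
    intro x hx hxA
    have h1 : infDist x A = 0 := infDist_zero_of_mem hxA
    have h2 := hx.2
    simp only [mem_setOf_eq, h1] at h2
    linarith
  have hcover : K ⊆ (P1 ×ˢ (univ : Set X)) ∪ ((univ : Set X) ×ˢ P2) := by
    intro z hz
    have h1 : δ ≤ u z := hz0min z hz
    rcases le_max_iff.mp h1 with h2 | h2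
    · exact Or.inl ⟨⟨mem_image_of_mem Prod.fst hz, h2⟩, mem_univ _⟩
    · exact Or.inr ⟨mem_univ _, ⟨mem_image_of_mem Prod.snd hz, h2⟩⟩
  refine ⟨μ P1 + ν P2, ?_, ?_⟩
  · exact ENNReal.add_ne_top.mpr ⟨hP1c.measure_lt_top.ne, hP2c.measure_lt_top.ne⟩
  · intro n
    have hfst : γseq n (P1 ×ˢ (univ : Set X)) = μ P1 := by
      have h1 : P1 ×ˢ (univ : Set X) = (Prod.fst ⁻¹' P1 : Set (X × X)) := by ext z; simp
      rw [h1, ← Measure.map_apply measurable_fst hP1c.isClosed.measurableSet, ← hmargf n,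
        Measure.restrict_apply hP1c.isClosed.measurableSet, inter_eq_self_of_subset_left hP1A]
    have hsnd : γseq n ((univ : Set X) ×ˢ P2) = ν P2 := by
      have h1 : (univ : Set X) ×ˢ P2 = (Prod.snd ⁻¹' P2 : Set (X × X)) := by ext z; simp
      rw [h1, ← Measure.map_apply measurable_snd hP2c.isClosed.measurableSet, ← hmargs n,
        Measure.restrict_apply hP2c.isClosed.measurableSet, inter_eq_self_of_subset_left hP2A]
    calc γseq n K ≤ γseq n ((P1 ×ˢ (univ : Set X)) ∪ ((univ : Set X) ×ˢ P2)) :=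
          measure_mono hcover
    _ ≤ γseq n (P1 ×ˢ (univ : Set X)) + γseq n ((univ : Set X) ×ˢ P2) := measure_union_le _ _
    _ = μ P1 + ν P2 := by rw [hfst, hsnd]

end UB

theorem exists_optimal_partial_transport_plan
    {X : Type*} [MetricSpace X] [CompleteSpace X] [TopologicalSpace.SeparableSpace X]
    [ProperSpace X] [MeasurableSpace X] [BorelSpace X]
    (A : Set X) (hA : IsClosed A) (hne : A.Nonempty)
    (p : ℝ) (hp : 1 ≤ p)
    (μ ν : Measure X) (hμ : MemMp p A μ) (hν : MemMp p A ν) :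
    ∃ γ ∈ ptAdm A μ ν, ptCost p γ = WbPow p A μ ν := by
  classical
  haveI : Nonempty X := ⟨hne.some⟩
  haveI : SecondCountableTopology X := UniformSpace.secondCountable_of_separable X
  haveI hμloc : IsLocallyFiniteMeasure μ := hμ.2.1
  haveI hνloc : IsLocallyFiniteMeasure ν := hν.2.1
  obtain ⟨a0, ha0⟩ := id hne
  have hm1 : Measurable fun x : X => (x, a0) := measurable_id.prodMk measurable_const
  have hm2 : Measurable fun y : X => (a0, y) := measurable_const.prodMk measurable_id
  -- the trivial admissible plan
  have hmem0 : (μ.map (fun x => (x, a0)) + ν.map (fun y => (a0, y))) ∈ ptAdm A μ ν := by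
    refine ⟨?_, ?_, ?_⟩
    · rw [Measure.add_apply,
        Measure.map_apply hm1 (hA.measurableSet.prod hA.measurableSet),
        Measure.map_apply hm2 (hA.measurableSet.prod hA.measurableSet)]
      have h1 : (fun x : X => (x, a0)) ⁻¹' (A ×ˢ A) = A := by ext x; simp [ha0]
      have h2 : (fun y : X => (a0, y)) ⁻¹' (A ×ˢ A) = A := by ext y; simp [ha0]
      rw [h1, h2, hμ.1, hν.1, add_zero]
    · rw [Measure.map_add _ _ measurable_fst,
        Measure.map_map measurable_fst hm1,
        Measure.map_map measurable_fst hm2]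
      have h1 : (Prod.fst ∘ fun x : X => (x, a0)) = id := rfl
      have h2 : (Prod.fst ∘ fun y : X => (a0, y)) = fun _ => a0 := rfl
      rw [h1, h2, Measure.map_id, Measure.restrict_add]
      have h3 : μ.restrict Aᶜ = μ := by
        apply Measure.restrict_eq_self_of_ae_mem
        rw [Filter.eventually_iff, mem_ae_iff]
        convert hμ.1 using 2
        ext x
        simp
      have h4 : (ν.map (fun _ => a0)).restrict Aᶜ = 0 := by
        rw [Measure.restrict_eq_zero, Measure.map_apply measurable_const hA.measurableSet.compl]
        have h5 : (fun _ : X => a0) ⁻¹' Aᶜ = ∅ := by ext y; simp [ha0]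
        rw [h5, measure_empty]
      rw [h3, h4, add_zero]
    · rw [Measure.map_add _ _ measurable_snd,
        Measure.map_map measurable_snd hm1,
        Measure.map_map measurable_snd hm2]
      have h1 : (Prod.snd ∘ fun x : X => (x, a0)) = fun _ => a0 := rfl
      have h2 : (Prod.snd ∘ fun y : X => (a0, y)) = id := rfl
      rw [h1, h2, Measure.map_id, Measure.restrict_add]
      have h3 : ν.restrict Aᶜ = ν := by
        apply Measure.restrict_eq_self_of_ae_mem
        rw [Filter.eventually_iff, mem_ae_iff]
        convert hν.1 using 2
        ext x
        simp
      have h4 : (μ.map (fun _ => a0)).restrict Aᶜ = 0 := by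
        rw [Measure.restrict_eq_zero, Measure.map_apply measurable_const hA.measurableSet.compl]
        have h5 : (fun _ : X => a0) ⁻¹' Aᶜ = ∅ := by ext y; simp [ha0]
        rw [h5, measure_empty]
      rw [h3, h4, zero_add]
  set c := WbPow p A μ ν with hcdef
  by_cases hctop : c = ⊤
  · refine ⟨_, hmem0, ?_⟩
    have h1 : c ≤ ptCost p (μ.map (fun x => (x, a0)) + ν.map (fun y => (a0, y))) :=
      iInf₂_le _ hmem0
    have h2 : ptCost p (μ.map (fun x => (x, a0)) + ν.map (fun y => (a0, y))) = ⊤ :=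
      top_le_iff.mp (hctop ▸ h1)
    rw [h2, hctop]
  · -- minimizing sequence
    have hseq : ∀ n : ℕ, ∃ γ, γ ∈ ptAdm A μ ν ∧ ptCost p γ ≤ c + ((n+1 : ℕ) : ℝ≥0∞)⁻¹ := by
      intro n
      by_contra hcon
      push_neg at hcon
      have h1 : c + ((n+1 : ℕ) : ℝ≥0∞)⁻¹ ≤ c :=
        le_iInf₂ fun γ hγ => (hcon γ hγ).le
      have h2 : c < c + ((n+1 : ℕ) : ℝ≥0∞)⁻¹ := by
        apply ENNReal.lt_add_right hctop
        simp
      exact absurd h1 (not_le.mpr h2)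
    choose γseq hseqmem hseqcost using hseq
    have hmargf : ∀ n, ((γseq n).map Prod.fst).restrict Aᶜ = μ := fun n => (hseqmem n).2.1
    have hmargs : ∀ n, ((γseq n).map Prod.snd).restrict Aᶜ = ν := fun n => (hseqmem n).2.2
    obtain ⟨F, hF⟩ := Filter.exists_ultrafilter_le (atTop : Filter ℕ)
    have hcost1 : ∀ n, ptCost p (γseq n) ≤ c + 1 := by
      intro n
      refine (hseqcost n).trans ?_
      gcongr
      exact ENNReal.inv_le_one.mpr (by exact_mod_cast Nat.succ_le_succ (Nat.zero_le n))
    have hlimcost : limF F (fun n => ptCost p (γseq n)) ≤ c := by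
      have h2 : Tendsto (fun n : ℕ => (((n+1 : ℕ)) : ℝ≥0∞)⁻¹) atTop (𝓝 0) :=
        ENNReal.tendsto_inv_nat_nhds_zero.comp (tendsto_add_atTop_nat 1)
      have h1 : Tendsto (fun n : ℕ => c + (((n+1 : ℕ)) : ℝ≥0∞)⁻¹) atTop (𝓝 c) := by
        have h4 := Tendsto.const_add c h2
        simpa using h4
      calc limF F (fun n => ptCost p (γseq n))
          ≤ limF F (fun n => c + (((n+1 : ℕ)) : ℝ≥0∞)⁻¹) := limF_mono F hseqcost
      _ = c := limF_eq_of_tendsto F (h1.mono_left hF)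
    -- the ambient open set
    have hEopen : IsOpen ((A ×ˢ A)ᶜ : Set (X × X)) := (hA.prod hA).isOpen_compl
    haveI hELC : LocallyCompactSpace ↥((A ×ˢ A)ᶜ : Set (X × X)) := hEopen.locallyCompactSpace
    have hbound : ∀ K : Set (X×X), IsCompact K → K ⊆ (A ×ˢ A)ᶜ →
        limF F (fun n => γseq n K) ≠ ⊤ := by
      intro K hK hKE
      obtain ⟨M, hMt, hM⟩ := uniform_bound A hA hne μ ν γseq hmargf hmargs K hK hKE
      exact ((limF_mono F hM).trans_lt (by rw [limF_const]; exact hMt.lt_top)).ne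
    set lam : Compacts ↥((A ×ˢ A)ᶜ : Set (X × X)) → ℝ≥0 :=
      fun K => (limF F (fun n => γseq n (Subtype.val '' (K : Set ↥((A ×ˢ A)ᶜ : Set (X × X)))))).toNNReal
      with hlam
    have hlamcoe : ∀ K : Compacts ↥((A ×ˢ A)ᶜ : Set (X × X)),
        (lam K : ℝ≥0∞) = limF F (fun n => γseq n (Subtype.val '' (K : Set ↥((A ×ˢ A)ᶜ : Set (X × X))))) := by
      intro K
      rw [hlam]
      exact ENNReal.coe_toNNReal (hbound _ (K.isCompact.image continuous_subtype_val)
        (by rintro z ⟨w, _, rfl⟩; exact w.2))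
    set cont : Content ↥((A ×ˢ A)ᶜ : Set (X × X)) :=
      { toFun := lam
        mono' := by
          intro K1 K2 hle
          have h1 : (lam K1 : ℝ≥0∞) ≤ (lam K2 : ℝ≥0∞) := by
            rw [hlamcoe, hlamcoe]
            exact limF_mono F (fun n => measure_mono (image_mono hle))
          exact_mod_cast h1
        sup_disjoint' := by
          intro K1 K2 hdis _ _
          have h1 : (lam (K1 ⊔ K2) : ℝ≥0∞) = (lam K1 : ℝ≥0∞) + (lam K2 : ℝ≥0∞) := by
            rw [hlamcoe, hlamcoe, hlamcoe, ← limF_add F]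
            congr 1
            funext n
            rw [Compacts.coe_sup, image_union]
            exact measure_union (disjoint_image_of_injective Subtype.val_injective hdis)
              ((K2.isCompact.image continuous_subtype_val).isClosed.measurableSet)
          exact_mod_cast h1
        sup_le' := by
          intro K1 K2
          have h1 : (lam (K1 ⊔ K2) : ℝ≥0∞) ≤ (lam K1 : ℝ≥0∞) + (lam K2 : ℝ≥0∞) := by
            rw [hlamcoe, hlamcoe, hlamcoe, ← limF_add F]
            apply limF_mono F
            intro n
            rw [Compacts.coe_sup, image_union]
            exact measure_union_le _ _
          exact_mod_cast h1 } with hcont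
    set γE : Measure ↥((A ×ˢ A)ᶜ : Set (X × X)) := cont.measure with hγE
    set γ' : Measure (X × X) := γE.map Subtype.val with hγ'
    have hval : Measurable (Subtype.val : ↥((A ×ˢ A)ᶜ : Set (X × X)) → X × X) :=
      measurable_subtype_coe
    have hopen : ∀ U : Set (X×X), IsOpen U → U ⊆ (A ×ˢ A)ᶜ →
        γ' U ≤ limF F (fun n => γseq n U) := by
      intro U hU hUE
      have hUm : MeasurableSet U := hU.measurableSet
      have hUo : IsOpen (Subtype.val ⁻¹' U : Set ↥((A ×ˢ A)ᶜ : Set (X × X))) :=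
        hU.preimage continuous_subtype_val
      rw [hγ', Measure.map_apply hval hUm, hγE, cont.measure_apply (hUm.preimage hval),
        cont.outerMeasure_of_isOpen _ hUo, Content.innerContent]
      apply iSup₂_le
      intro K hKU
      calc (cont.toFun K : ℝ≥0∞) = (lam K : ℝ≥0∞) := rfl
      _ = limF F (fun n => γseq n (Subtype.val '' (K : Set ↥((A ×ˢ A)ᶜ : Set (X × X))))) :=
          hlamcoe K
      _ ≤ limF F (fun n => γseq n U) := by
          apply limF_mono F
          intro n
          apply measure_mono
          exact image_subset_iff.mpr hKU
    have hcpt : ∀ K : Set (X×X), IsCompact K → K ⊆ (A ×ˢ A)ᶜ →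
        limF F (fun n => γseq n K) ≤ γ' K := by
      intro K hK hKE
      have hKm : MeasurableSet K := hK.isClosed.measurableSet
      have hKim : Subtype.val '' (Subtype.val ⁻¹' K : Set ↥((A ×ˢ A)ᶜ : Set (X × X))) = K := by
        rw [image_preimage_eq_inter_range, Subtype.range_coe]
        exact inter_eq_self_of_subset_left hKE
      have hKc : IsCompact (Subtype.val ⁻¹' K : Set ↥((A ×ˢ A)ᶜ : Set (X × X))) := by
        rw [Subtype.isCompact_iff, hKim]
        exact hK
      rw [hγ', Measure.map_apply hval hKm, hγE, cont.measure_apply (hKm.preimage hval)]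
      calc limF F (fun n => γseq n K)
          = (lam ⟨_, hKc⟩ : ℝ≥0∞) := by
            rw [hlamcoe ⟨_, hKc⟩]
            congr 1
            funext n
            rw [show Subtype.val '' ((⟨Subtype.val ⁻¹' K, hKc⟩ :
              Compacts ↥((A ×ˢ A)ᶜ : Set (X × X))) : Set ↥((A ×ˢ A)ᶜ : Set (X × X))) = K from hKim]
      _ ≤ cont.outerMeasure (Subtype.val ⁻¹' K) := cont.le_outerMeasure_compacts ⟨_, hKc⟩
    -- marginals
    have hmargμ : (γ'.map Prod.fst).restrict Aᶜ = μ :=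
      marginal_fst A hA hne p hp μ hμ.1 γseq hmargf c hctop hcost1 F γ' hopen hcpt
    have hmargν : (γ'.map Prod.snd).restrict Aᶜ = ν := by
      have hswapm : Measurable (Prod.swap : X × X → X × X) := measurable_swap
      have h1 : (γ'.map Prod.swap).map Prod.fst = γ'.map Prod.snd := by
        rw [Measure.map_map measurable_fst hswapm]
        rfl
      rw [← h1]
      have hswapsub : ∀ S : Set (X×X), S ⊆ (A ×ˢ A)ᶜ → Prod.swap ⁻¹' S ⊆ (A ×ˢ A)ᶜ := by
        intro S hS z hz hzA
        exact hS hz ⟨hzA.2, hzA.1⟩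
      apply marginal_fst A hA hne p hp ν hν.1 (fun n => (γseq n).map Prod.swap)
        ?_ c hctop ?_ F _ ?_ ?_
      · intro n
        rw [Measure.map_map measurable_fst hswapm]
        exact hmargs n
      · intro n
        have h2 : ptCost p ((γseq n).map Prod.swap) = ptCost p (γseq n) := by
          rw [ptCost, ptCost, lintegral_map (costMeasurable p) hswapm]
          apply lintegral_congr
          intro z
          rw [Prod.fst_swap, Prod.snd_swap, dist_comm]
        rw [h2]
        exact hcost1 n
      · intro U hU hUE
        rw [Measure.map_apply hswapm hU.measurableSet]
        calc γ' (Prod.swap ⁻¹' U)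
            ≤ limF F (fun n => γseq n (Prod.swap ⁻¹' U)) :=
              hopen _ (hU.preimage continuous_swap) (hswapsub U hUE)
        _ = limF F (fun n => (γseq n).map Prod.swap U) := by
            congr 1
            funext n
            rw [Measure.map_apply hswapm hU.measurableSet]
      · intro K hK hKE
        have hKc : IsCompact (Prod.swap ⁻¹' K : Set (X×X)) := by
          rw [← image_swap_eq_preimage_swap]
          exact hK.image continuous_swap
        calc limF F (fun n => (γseq n).map Prod.swap K)
            = limF F (fun n => γseq n (Prod.swap ⁻¹' K)) := by
              congr 1
              funext n
              rw [Measure.map_apply hswapm hK.isClosed.measurableSet]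
        _ ≤ γ' (Prod.swap ⁻¹' K) := hcpt _ hKc (hswapsub K hKE)
        _ = (γ'.map Prod.swap) K := (Measure.map_apply hswapm hK.isClosed.measurableSet).symm
    -- no mass on A × A
    have hAA : γ' (A ×ˢ A) = 0 := by
      rw [hγ', Measure.map_apply hval (hA.measurableSet.prod hA.measurableSet)]
      have h1 : (Subtype.val ⁻¹' (A ×ˢ A) : Set ↥((A ×ˢ A)ᶜ : Set (X × X))) = ∅ := by
        ext w
        simp only [mem_preimage, mem_empty_iff_false, iff_false]
        exact fun hw => w.2 hw
      rw [h1, measure_empty]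
    -- cost bound
    have hcontcost : Continuous fun z : X × X => ENNReal.ofReal (dist z.1 z.2 ^ p) :=
      ENNReal.continuous_ofReal.comp
        ((continuous_fst.dist continuous_snd).rpow_const (fun z => Or.inr (by linarith)))
    have hγ'cost : ptCost p γ' ≤ c := by
      set g : ↥((A ×ˢ A)ᶜ : Set (X × X)) → ℝ≥0∞ :=
        fun w => ENNReal.ofReal (dist (w : X × X).1 (w : X × X).2 ^ p) with hgdef
      have hgmeas : Measurable g := (costMeasurable p).comp hval
      have h0 : ptCost p γ' = ∫⁻ w, g w ∂γE := by
        rw [ptCost, hγ', lintegral_map (costMeasurable p) hval]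
      rw [h0]
      have h1 : ∀ w, g w = ⨆ m, dy m (g w) := fun w => (iSup_dy _).symm
      rw [lintegral_congr h1, lintegral_iSup (fun m => measurable_dy_comp hgmeas m)
        (fun m m' hmm' w => dy_mono (g w) hmm')]
      apply iSup_le
      intro m
      rw [lintegral_dy γE hgmeas m]
      have h2mt : ((2:ℝ≥0∞)^m)⁻¹ ≠ ⊤ :=
        ENNReal.inv_ne_top.mpr (pow_ne_zero m two_ne_zero)
      have hstep : ∀ i ∈ Finset.range (m*2^m),
          ((2:ℝ≥0∞)^m)⁻¹ * γE {w | dyThr m i < g w}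
            ≤ ((2:ℝ≥0∞)^m)⁻¹ * limF F (fun n =>
                γseq n ({z : X×X | dyThr m i < ENNReal.ofReal (dist z.1 z.2 ^ p)} ∩ (A ×ˢ A)ᶜ)) := by
        intro i _
        gcongr
        have hO : IsOpen ({z : X×X | dyThr m i < ENNReal.ofReal (dist z.1 z.2 ^ p)} ∩ (A ×ˢ A)ᶜ) :=
          (isOpen_lt continuous_const hcontcost).inter hEopen
        have he : {w : ↥((A ×ˢ A)ᶜ : Set (X × X)) | dyThr m i < g w}
            = Subtype.val ⁻¹'
              ({z : X×X | dyThr m i < ENNReal.ofReal (dist z.1 z.2 ^ p)} ∩ (A ×ˢ A)ᶜ) := by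
          ext w
          simp only [mem_setOf_eq, mem_preimage, mem_inter_iff]
          exact ⟨fun h => ⟨h, w.2⟩, fun h => h.1⟩
        rw [he, ← Measure.map_apply hval hO.measurableSet, ← hγ']
        exact hopen _ hO inter_subset_right
      calc ∑ i ∈ Finset.range (m*2^m), ((2:ℝ≥0∞)^m)⁻¹ * γE {w | dyThr m i < g w}
          ≤ ∑ i ∈ Finset.range (m*2^m), ((2:ℝ≥0∞)^m)⁻¹
              * limF F (fun n =>
                  γseq n ({z : X×X | dyThr m i < ENNReal.ofReal (dist z.1 z.2 ^ p)} ∩ (A ×ˢ A)ᶜ)) :=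
            Finset.sum_le_sum hstep
      _ = limF F (fun n => ∑ i ∈ Finset.range (m*2^m), ((2:ℝ≥0∞)^m)⁻¹
              * γseq n ({z : X×X | dyThr m i < ENNReal.ofReal (dist z.1 z.2 ^ p)} ∩ (A ×ˢ A)ᶜ)) := by
            rw [limF_finset_sum]
            apply Finset.sum_congr rfl
            intro i _
            rw [limF_const_mul F _ h2mt]
      _ ≤ limF F (fun n => ptCost p (γseq n)) := by
            apply limF_mono F
            intro n
            have h2 : ∀ i : ℕ,
                γseq n ({z : X×X | dyThr m i < ENNReal.ofReal (dist z.1 z.2 ^ p)} ∩ (A ×ˢ A)ᶜ)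
                  = ((γseq n).restrict ((A ×ˢ A)ᶜ))
                      {z : X×X | dyThr m i < ENNReal.ofReal (dist z.1 z.2 ^ p)} := by
              intro i
              rw [Measure.restrict_apply (isOpen_lt continuous_const hcontcost).measurableSet]
            calc ∑ i ∈ Finset.range (m*2^m), ((2:ℝ≥0∞)^m)⁻¹
                * γseq n ({z : X×X | dyThr m i < ENNReal.ofReal (dist z.1 z.2 ^ p)} ∩ (A ×ˢ A)ᶜ)
                = ∫⁻ z, dy m (ENNReal.ofReal (dist z.1 z.2 ^ p))
                    ∂((γseq n).restrict ((A ×ˢ A)ᶜ)) := by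
                  rw [lintegral_dy _ (costMeasurable p) m]
                  exact Finset.sum_congr rfl (fun i _ => by rw [h2 i])
            _ ≤ ∫⁻ z, ENNReal.ofReal (dist z.1 z.2 ^ p) ∂((γseq n).restrict ((A ×ˢ A)ᶜ)) :=
                  lintegral_mono (fun z => dy_le m _)
            _ ≤ ptCost p (γseq n) := lintegral_mono' Measure.restrict_le_self le_rfl
      _ ≤ c := hlimcost
    have hγ'mem : γ' ∈ ptAdm A μ ν := ⟨hAA, hmargμ, hmargν⟩
    refine ⟨γ', hγ'mem, ?_⟩
    have h1 : c ≤ ptCost p γ' := iInf₂_le _ hγ'mem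
    exact le_antisymm hγ'cost h1
end

section
/- Let (X,A) be a metric pair with X complete, separable and proper, and p ∈ [1,∞). Then the metric space (M_p(X,A), Wb_p) is separable; in fact, the set of finite rational-weighted sums of Dirac masses at points of a countable dense subset of Ω = X \ A is dense in (M_p(X,A), Wb_p). -/
open MeasureTheory Metric Set ENNReal Filter

theorem wb_space_separable
    {X : Type*} [MetricSpace X] [CompleteSpace X] [TopologicalSpace.SeparableSpace X]
    [ProperSpace X] [MeasurableSpace X] [BorelSpace X]
    (A : Set X) (hA : IsClosed A) (hne : A.Nonempty)
    (p : ℝ) (hp : 1 ≤ p)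
    (S : Set X) (hScount : S.Countable) (hSsub : S ⊆ Aᶜ) (hSdense : Aᶜ ⊆ closure S) :
    ∀ μ : Measure X, MemMp p A μ → ∀ ε : ℝ≥0∞, 0 < ε →
      ∃ ν : Measure X,
        (∃ (n : ℕ) (q : Fin n → ℚ) (x : Fin n → X),
          (∀ i, 0 < q i) ∧ (∀ i, x i ∈ S) ∧
          ν = ∑ i, ENNReal.ofReal (q i : ℝ) • Measure.dirac (x i)) ∧
        Wb p A μ ν < ε := by
  classical
  intro μ hμ ε hε
  obtain ⟨hμA, hμloc, hμI⟩ := hμ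
  haveI : IsLocallyFiniteMeasure μ := hμloc
  have hp0 : (0:ℝ) < p := lt_of_lt_of_le one_pos hp
  have hpne : p ≠ 0 := ne_of_gt hp0
  obtain ⟨a₀, ha₀⟩ := hne
  -- continuity / measurability facts
  have hcf : Continuous fun x : X => infDist x A := continuous_infDist_pt A
  have hfpm : Measurable fun x : X => ENNReal.ofReal (infDist x A ^ p) :=
    ENNReal.measurable_ofReal.comp ((hcf.rpow_const fun _ => Or.inr hp0.le).measurable)
  have hgm : Measurable fun z : X × X => ENNReal.ofReal (dist z.1 z.2 ^ p) :=
    ENNReal.measurable_ofReal.comp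
      ((continuous_dist.rpow_const fun _ => Or.inr hp0.le).measurable)
  have hAm : MeasurableSet A := hA.measurableSet
  have hAcm : MeasurableSet Aᶜ := hAm.compl
  have hresAc : μ.restrict Aᶜ = μ := by
    apply Measure.restrict_eq_self_of_ae_mem
    rw [ae_iff]
    have : {x : X | ¬ x ∈ Aᶜ} = A := by ext z; simp
    rwa [this]
  -- target numbers
  set c : ℝ≥0∞ := ε ^ p with hc
  have hcpos : 0 < c := by
    rcases eq_or_ne ε ⊤ with rfl | hεt
    · simp [hc, ENNReal.top_rpow_of_pos hp0]
    · exact ENNReal.rpow_pos hε hεt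
  obtain ⟨r, hr0, hrc⟩ : ∃ r : ℝ, 0 < r ∧ ENNReal.ofReal r < c := by
    rcases eq_or_ne c ⊤ with hct | hct
    · exact ⟨1, one_pos, by simp [hct]⟩
    · have h1 : 0 < c.toReal := ENNReal.toReal_pos hcpos.ne' hct
      refine ⟨c.toReal / 2, by linarith, ?_⟩
      calc ENNReal.ofReal (c.toReal / 2) < ENNReal.ofReal c.toReal :=
            (ENNReal.ofReal_lt_ofReal_iff h1).mpr (by linarith)
        _ = c := ENNReal.ofReal_toReal hct
  set b : ℝ≥0∞ := ENNReal.ofReal (r / 3) with hbdef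
  have hb0 : 0 < b := by rw [hbdef]; exact ENNReal.ofReal_pos.mpr (by linarith)
  have hbbb : b + b + b ≤ ENNReal.ofReal r := by
    have h3 : (0:ℝ) ≤ r/3 := by linarith
    rw [hbdef, ← ENNReal.ofReal_add h3 h3, ← ENNReal.ofReal_add (by linarith) h3]
    exact ENNReal.ofReal_le_ofReal (by linarith)
  -- countable dense subset of A
  obtain ⟨D, hDA, hDc, hAD⟩ :=
    (TopologicalSpace.IsSeparable.of_separableSpace A).exists_countable_dense_subset
  have hDne : D.Nonempty := closure_nonempty_iff.mp ⟨a₀, hAD ha₀⟩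
  obtain ⟨aseq, haseq⟩ := hDc.exists_eq_range hDne
  have haA : ∀ k, aseq k ∈ A := fun k => hDA (by rw [haseq]; exact mem_range_self k)
  have hclD : closure D = A := Subset.antisymm (closure_minimal hDA hA) hAD
  have hfD : ∀ x : X, infDist x D = infDist x A := fun x => by
    rw [← infDist_closure, hclD]
  have hfpos : ∀ x ∉ A, 0 < infDist x A := fun x hx =>
    (hA.notMem_iff_infDist_pos ⟨a₀, ha₀⟩).mp hx
  -- partition of Aᶜ adapted to near-optimal projections to A
  set U : ℕ → Set X := fun k => {x | dist x (aseq k) < 2 * infDist x A} with hUdef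
  have hUopen : ∀ k, IsOpen (U k) := fun k =>
    isOpen_lt (continuous_id.dist continuous_const) (continuous_const.mul hcf)
  set G : ℕ → Set X := fun k => (Aᶜ ∩ U k) \ ⋃ j ∈ Finset.range k, U j with hGdef
  have hGm : ∀ k, MeasurableSet (G k) := fun k =>
    (hAcm.inter (hUopen k).measurableSet).diff
      (MeasurableSet.biUnion (Finset.range k).countable_toSet fun j _ => (hUopen j).measurableSet)
  have hGA : ∀ k, G k ⊆ Aᶜ := fun k x hx => hx.1.1
  have hGU : ∀ k x, x ∈ G k → dist x (aseq k) ≤ 2 * infDist x A := fun k x hx => le_of_lt hx.1.2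
  have hGdisj : Pairwise (Function.onFun Disjoint G) := by
    have key : ∀ {j k : ℕ}, j < k → Disjoint (G j) (G k) := by
      intro j k hjk
      rw [Set.disjoint_left]
      rintro x ⟨⟨_, hxU⟩, _⟩ ⟨_, hxn⟩
      exact hxn (mem_biUnion (Finset.mem_range.mpr hjk) hxU)
    intro j k hjk
    rcases hjk.lt_or_gt with h | h
    · exact key h
    · exact (key h).symm
  have hGcov : ⋃ k, G k = Aᶜ := by
    refine Subset.antisymm (iUnion_subset hGA) fun x hx => ?_
    have hfx : 0 < infDist x A := hfpos x hx
    have hex : ∃ k, x ∈ U k := by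
      have h1 : infDist x D < 2 * infDist x A := by rw [hfD]; linarith
      obtain ⟨y, hyD, hy⟩ := (infDist_lt_iff hDne).mp h1
      rw [haseq] at hyD
      obtain ⟨k, rfl⟩ := hyD
      exact ⟨k, hy⟩
    refine mem_iUnion.mpr ⟨Nat.find hex, ⟨⟨hx, Nat.find_spec hex⟩, ?_⟩⟩
    intro hmem
    obtain ⟨j, hj, hxUj⟩ := mem_iUnion₂.mp hmem
    exact Nat.find_min hex (Finset.mem_range.mp hj) hxUj
  -- the dumping plan
  set dump : Measure X → Measure (X × X) :=
    fun σ => Measure.sum fun k => (σ.restrict (G k)).map (fun x => (x, aseq k)) with hdumpdef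
  have hpm : ∀ k : ℕ, Measurable fun x : X => (x, aseq k) :=
    fun k => measurable_id.prodMk measurable_const
  have hdump_fst : ∀ σ : Measure X, (dump σ).map Prod.fst = σ.restrict Aᶜ := by
    intro σ
    rw [hdumpdef]
    rw [Measure.map_sum measurable_fst.aemeasurable]
    have h1 : ∀ k, ((σ.restrict (G k)).map fun x => (x, aseq k)).map Prod.fst
        = σ.restrict (G k) := by
      intro k
      rw [Measure.map_map measurable_fst (hpm k)]
      exact Measure.map_id' ..
    simp_rw [h1]
    rw [← Measure.restrict_iUnion hGdisj hGm, hGcov]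
  have hdiracA : ∀ x : X, x ∈ A → (Measure.dirac x).restrict Aᶜ = 0 := by
    intro x hx
    rw [Measure.restrict_eq_zero, Measure.dirac_apply' _ hAcm]
    simp [hx]
  have hdump_snd : ∀ σ : Measure X, ((dump σ).map Prod.snd).restrict Aᶜ = 0 := by
    intro σ
    rw [hdumpdef]
    rw [Measure.map_sum measurable_snd.aemeasurable, Measure.restrict_sum _ hAcm]
    have h1 : ∀ k, ((((σ.restrict (G k)).map fun x => (x, aseq k))).map Prod.snd).restrict Aᶜ
        = 0 := by
      intro k
      rw [Measure.map_map measurable_snd (hpm k)]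
      have h2 : (Prod.snd ∘ fun x : X => (x, aseq k)) = fun _ => aseq k := rfl
      rw [h2, Measure.map_const, Measure.restrict_smul, hdiracA _ (haA k), smul_zero]
    simp_rw [h1]
    ext s hs
    rw [Measure.sum_apply _ hs]
    simp
  have hdump_cost : ∀ σ : Measure X, ptCost p (dump σ)
      ≤ ENNReal.ofReal (2 ^ p) * ∫⁻ x, ENNReal.ofReal (infDist x A ^ p) ∂σ := by
    intro σ
    rw [hdumpdef]
    simp only [ptCost]
    rw [lintegral_sum_measure]
    have hterm : ∀ k, ∫⁻ z, ENNReal.ofReal (dist z.1 z.2 ^ p)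
          ∂((σ.restrict (G k)).map fun x => (x, aseq k))
        ≤ ∫⁻ x in G k, ENNReal.ofReal (2 ^ p) * ENNReal.ofReal (infDist x A ^ p) ∂σ := by
      intro k
      rw [lintegral_map hgm (hpm k)]
      refine setLIntegral_mono' (hGm k) fun x hx => ?_
      have h2 : dist x (aseq k) ^ p ≤ (2 * infDist x A) ^ p :=
        Real.rpow_le_rpow dist_nonneg (hGU k x hx) hp0.le
      have h3 : (2 * infDist x A) ^ p = 2 ^ p * infDist x A ^ p :=
        Real.mul_rpow (by norm_num) infDist_nonneg
      calc ENNReal.ofReal (dist x (aseq k) ^ p)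
          ≤ ENNReal.ofReal (2 ^ p * infDist x A ^ p) := ENNReal.ofReal_le_ofReal (h3 ▸ h2)
        _ = ENNReal.ofReal (2 ^ p) * ENNReal.ofReal (infDist x A ^ p) :=
            ENNReal.ofReal_mul (by positivity)
    calc (∑' k, ∫⁻ z, ENNReal.ofReal (dist z.1 z.2 ^ p)
          ∂((σ.restrict (G k)).map fun x => (x, aseq k)))
        ≤ ∑' k, ∫⁻ x in G k, ENNReal.ofReal (2 ^ p) * ENNReal.ofReal (infDist x A ^ p) ∂σ :=
          ENNReal.tsum_le_tsum hterm
      _ = ∫⁻ x in ⋃ k, G k, ENNReal.ofReal (2 ^ p) * ENNReal.ofReal (infDist x A ^ p) ∂σ :=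
          (lintegral_iUnion hGm hGdisj _).symm
      _ ≤ ∫⁻ x, ENNReal.ofReal (2 ^ p) * ENNReal.ofReal (infDist x A ^ p) ∂σ :=
          setLIntegral_le_lintegral _ _
      _ = ENNReal.ofReal (2 ^ p) * ∫⁻ x, ENNReal.ofReal (infDist x A ^ p) ∂σ :=
          lintegral_const_mul _ hfpm
  -- choose the compact core K
  set ρ := μ.withDensity (fun x => ENNReal.ofReal (infDist x A ^ p)) with hρdef
  haveI : IsFiniteMeasure ρ := by
    constructor
    rw [hρdef, withDensity_apply _ MeasurableSet.univ, Measure.restrict_univ]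
    exact lt_top_iff_ne_top.mpr hμI
  set Kse : ℕ → Set X := fun n =>
    closedBall a₀ ((n:ℝ)+1) ∩ {x | 1/((n:ℝ)+1) ≤ infDist x A} with hKse
  have hKseCl : ∀ n, IsClosed (Kse n) :=
    fun n => (isCompact_closedBall a₀ ((n:ℝ)+1)).isClosed.inter (isClosed_le continuous_const hcf)
  have hKseCp : ∀ n, IsCompact (Kse n) :=
    fun n => (isCompact_closedBall _ _).inter_right (isClosed_le continuous_const hcf)
  have hKseA : ∀ n, Kse n ⊆ Aᶜ := by
    intro n x hx hxA
    have h1 := hx.2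
    rw [mem_setOf_eq, infDist_zero_of_mem hxA] at h1
    have h2 : (0:ℝ) < 1/((n:ℝ)+1) := by positivity
    linarith
  have hmono : Antitone fun n => Aᶜ \ Kse n := by
    intro n n' hnn'
    have hcast : ((n:ℝ)+1) ≤ ((n':ℝ)+1) := by exact_mod_cast add_le_add_left (Nat.cast_le.mpr hnn') 1
    have hsub : Kse n ⊆ Kse n' := by
      intro x hx
      refine ⟨closedBall_subset_closedBall hcast hx.1, ?_⟩
      have h1 := hx.2
      rw [mem_setOf_eq] at h1 ⊢
      exact le_trans (one_div_le_one_div_of_le (by positivity) hcast) h1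
    exact diff_subset_diff_right hsub
  have hInter : ⋂ n, (Aᶜ \ Kse n) = ∅ := by
    rw [eq_empty_iff_forall_notMem]
    intro x hx
    have hxA : x ∈ Aᶜ := (mem_iInter.mp hx 0).1
    have hfx : 0 < infDist x A := hfpos x hxA
    obtain ⟨n1, hn1⟩ := exists_nat_ge (dist x a₀)
    obtain ⟨n2, hn2⟩ := exists_nat_ge (1 / infDist x A)
    set n := max n1 n2 with hn
    have hxn := mem_iInter.mp hx n
    apply hxn.2
    have hc1 : (n1:ℝ) ≤ (n:ℝ) := by exact_mod_cast le_max_left n1 n2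
    have hc2 : (n2:ℝ) ≤ (n:ℝ) := by exact_mod_cast le_max_right n1 n2
    constructor
    · exact mem_closedBall.mpr (by linarith)
    · rw [mem_setOf_eq]
      have h1 : 1/infDist x A ≤ (n:ℝ)+1 := by linarith
      calc 1/((n:ℝ)+1) ≤ 1/(1/infDist x A) :=
            one_div_le_one_div_of_le (by positivity) h1
        _ = infDist x A := one_div_one_div _
  have htend := tendsto_measure_iInter_atTop (μ := ρ)
    (fun n => ((hAcm.diff (hKseCl n).measurableSet)).nullMeasurableSet) hmono
    ⟨0, measure_ne_top ρ _⟩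
  rw [hInter, measure_empty] at htend
  have hb2 : (0:ℝ≥0∞) < b / ENNReal.ofReal (2^p) :=
    ENNReal.div_pos hb0.ne' ENNReal.ofReal_ne_top
  obtain ⟨N, hN⟩ := (htend.eventually (gt_mem_nhds hb2)).exists
  set K : Set X := Kse N with hK
  have hKcomp : IsCompact K := hKseCp N
  have hKm : MeasurableSet K := (hKseCl N).measurableSet
  have hKA : K ⊆ Aᶜ := hKseA N
  have hμK : μ K ≠ ⊤ := hKcomp.measure_lt_top.ne
  set W : Set X := Aᶜ \ K with hW
  have hWm : MeasurableSet W := hAcm.diff hKm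
  have hWA : W ⊆ Aᶜ := diff_subset
  have hcost1 : ptCost p (dump (μ.restrict W)) ≤ b := by
    refine le_trans (hdump_cost _) ?_
    have h1 : ∫⁻ x, ENNReal.ofReal (infDist x A ^ p) ∂(μ.restrict W) = ρ W :=
      (withDensity_apply _ hWm).symm
    rw [h1]
    calc ENNReal.ofReal (2^p) * ρ W
        ≤ ENNReal.ofReal (2^p) * (b / ENNReal.ofReal (2^p)) := mul_le_mul_right hN.le _
      _ ≤ b := ENNReal.mul_div_le
  -- choose δ
  set T : ℝ≥0∞ := min (b / (μ K + 1)) 1 with hT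
  have hμK1 : μ K + 1 ≠ ⊤ := ENNReal.add_ne_top.mpr ⟨hμK, ENNReal.one_ne_top⟩
  have hT0 : 0 < T := lt_min (ENNReal.div_pos hb0.ne' hμK1) one_pos
  have hTt : T ≠ ⊤ := ne_top_of_le_ne_top ENNReal.one_ne_top (min_le_right _ _)
  set δ : ℝ := T.toReal ^ (1/p) with hδ
  have hδ0 : 0 < δ := Real.rpow_pos_of_pos (ENNReal.toReal_pos hT0.ne' hTt) _
  have hδp : ENNReal.ofReal (δ ^ p) = T := by
    have h1 : (1/p) * p = 1 := by field_simp
    rw [hδ, ← Real.rpow_mul ENNReal.toReal_nonneg, h1, Real.rpow_one,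
      ENNReal.ofReal_toReal hTt]
  have hδK : ENNReal.ofReal (δ ^ p) * μ K ≤ b := by
    rw [hδp]
    calc T * μ K ≤ (b / (μ K + 1)) * (μ K + 1) :=
          mul_le_mul' (min_le_left _ _) le_self_add
      _ = b := by
          rw [ENNReal.div_mul_cancel (by simp) hμK1]
  -- finite cover of K by δ-balls centred in S
  have hKcov : K ⊆ ⋃ s : ↥S, ball (s : X) δ := by
    intro x hx
    obtain ⟨y, hyS, hy⟩ := Metric.mem_closure_iff.mp (hSdense (hKA hx)) δ hδ0
    exact mem_iUnion.mpr ⟨⟨y, hyS⟩, mem_ball.mpr hy⟩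
  obtain ⟨t, ht⟩ := hKcomp.elim_finite_subcover
    (fun s : ↥S => ball (s : X) δ) (fun _ => isOpen_ball) hKcov
  set m : ℕ := t.card with hm
  set sfun : ℕ → X := fun k => if h : k < m then ((t.equivFin.symm ⟨k, h⟩ : ↥S) : X) else a₀
    with hsfun
  have hsfunS : ∀ k, k < m → sfun k ∈ S := by
    intro k h
    rw [hsfun]
    simp only [dif_pos h]
    exact ((t.equivFin.symm ⟨k, h⟩ : ↥S)).2
  set C : ℕ → Set X := fun k => if h : k < m then K ∩ ball (sfun k) δ else ∅ with hC
  set F : ℕ → Set X := disjointed C with hF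
  have hCm : ∀ k, MeasurableSet (C k) := by
    intro k
    rw [hC]
    dsimp only
    split
    · exact hKm.inter measurableSet_ball
    · exact MeasurableSet.empty
  have hFm : ∀ k, MeasurableSet (F k) := MeasurableSet.disjointed hCm
  have hFdisj : Pairwise (Function.onFun Disjoint F) := disjoint_disjointed C
  have hFC : ∀ k, F k ⊆ C k := disjointed_subset C
  have hCK : ∀ k, C k ⊆ K := by
    intro k
    rw [hC]; dsimp only; split
    · exact inter_subset_left
    · exact empty_subset _
  have hFK : ∀ k, F k ⊆ K := fun k => (hFC k).trans (hCK k)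
  have hFball : ∀ k, ∀ x ∈ F k, dist x (sfun k) ≤ δ := by
    intro k x hx
    have h1 := hFC k hx
    rw [hC] at h1; dsimp only at h1
    by_cases h : k < m
    · rw [dif_pos h] at h1
      exact le_of_lt (mem_ball.mp h1.2)
    · rw [dif_neg h] at h1
      exact absurd h1 (notMem_empty x)
  have hFcup : ⋃ k, F k = K := by
    rw [hF, iUnion_disjointed]
    refine Subset.antisymm (iUnion_subset hCK) fun x hx => ?_
    obtain ⟨i, hit, hxball⟩ := mem_iUnion₂.mp (ht hx)
    refine mem_iUnion.mpr ⟨(t.equivFin ⟨i, hit⟩ : ℕ), ?_⟩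
    rw [hC]; dsimp only
    rw [dif_pos (t.equivFin ⟨i, hit⟩).2]
    have hsk : sfun (t.equivFin ⟨i, hit⟩ : ℕ) = (i : X) := by
      rw [hsfun]; dsimp only
      rw [dif_pos (t.equivFin ⟨i, hit⟩).2]
      congr 1
      have : (⟨((t.equivFin ⟨i, hit⟩ : Fin m) : ℕ), (t.equivFin ⟨i, hit⟩).2⟩ : Fin m)
          = t.equivFin ⟨i, hit⟩ := by
        apply Fin.ext; rfl
      rw [this, Equiv.symm_apply_apply]
    exact ⟨hx, by rwa [hsk]⟩
  have hμFK : ∀ k, μ (F k) ≤ μ K := fun k => measure_mono (hFK k)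
  have hμFt : ∀ k, μ (F k) ≠ ⊤ := fun k => ((hμFK k).trans_lt (lt_top_iff_ne_top.mpr hμK)).ne
  have hFhi : ∀ k, ¬ k < m → μ (F k) = 0 := by
    intro k h
    have hsub : F k ⊆ ∅ := by
      refine (hFC k).trans ?_
      rw [hC]; dsimp only; rw [dif_neg h]
    exact measure_mono_null hsub measure_empty
  -- choose η'
  set Dn : ℝ≥0∞ := ENNReal.ofReal (2^p) * ENNReal.ofReal (((N:ℝ)+1)^p) * (m : ℝ≥0∞) + 1
    with hDn
  have hDnt : Dn ≠ ⊤ := by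
    rw [hDn]
    exact ENNReal.add_ne_top.mpr
      ⟨ENNReal.mul_ne_top (ENNReal.mul_ne_top ENNReal.ofReal_ne_top ENNReal.ofReal_ne_top)
        (ENNReal.natCast_ne_top m), ENNReal.one_ne_top⟩
  have hDn0 : Dn ≠ 0 := by
    rw [hDn]
    simp
  set ηE : ℝ≥0∞ := b / Dn with hηE
  have hηE0 : 0 < ηE := ENNReal.div_pos hb0.ne' hDnt
  have hηEt : ηE ≠ ⊤ := (ENNReal.div_lt_top ENNReal.ofReal_ne_top hDn0).ne
  set η' : ℝ := ηE.toReal with hη'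
  have hη'0 : 0 < η' := ENNReal.toReal_pos hηE0.ne' hηEt
  have hη'E : ENNReal.ofReal η' = ηE := ENNReal.ofReal_toReal hηEt
  -- rational weights
  have hqex : ∀ k : ℕ, ∃ q : ℚ,
      (μ (F k) ≠ 0 → 0 < (q:ℝ) ∧ (q:ℝ) < (μ (F k)).toReal ∧ (μ (F k)).toReal - η' < (q:ℝ))
      ∧ (μ (F k) = 0 → q = 0) := by
    intro k
    by_cases h : μ (F k) = 0
    · exact ⟨0, fun h' => absurd h h', fun _ => rfl⟩
    · have hp1 : 0 < (μ (F k)).toReal := ENNReal.toReal_pos h (hμFt k)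
      have hlt : max 0 ((μ (F k)).toReal - η') < (μ (F k)).toReal :=
        max_lt hp1 (by linarith)
      obtain ⟨q, hq1, hq2⟩ := exists_rat_btwn hlt
      exact ⟨q, fun _ => ⟨lt_of_le_of_lt (le_max_left _ _) hq1, hq2,
        lt_of_le_of_lt (le_max_right _ _) hq1⟩, fun h' => absurd h' h⟩
  choose qf hqf1 hqf2 using hqex
  have hq0 : ∀ k, μ (F k) = 0 → ENNReal.ofReal (qf k) = 0 := by
    intro k h
    rw [hqf2 k h]
    simp
  set cE : ℕ → ℝ≥0∞ := fun k => ENNReal.ofReal (qf k) / μ (F k) with hcE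
  have hcE1 : ∀ k, cE k ≤ 1 := by
    intro k
    by_cases h : μ (F k) = 0
    · rw [hcE]; dsimp only; rw [hq0 k h]; simp
    · rw [hcE]
      refine ENNReal.div_le_of_le_mul ?_
      rw [one_mul]
      calc ENNReal.ofReal (qf k) ≤ ENNReal.ofReal (μ (F k)).toReal :=
            ENNReal.ofReal_le_ofReal (le_of_lt (hqf1 k h).2.1)
        _ = μ (F k) := ENNReal.ofReal_toReal (hμFt k)
  have hcEt : ∀ k, cE k ≠ ⊤ := fun k => ne_top_of_le_ne_top ENNReal.one_ne_top (hcE1 k)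
  have hcEmul : ∀ k, cE k * μ (F k) = ENNReal.ofReal (qf k) := by
    intro k
    by_cases h : μ (F k) = 0
    · rw [h, mul_zero, hq0 k h]
    · rw [hcE]
      exact ENNReal.div_mul_cancel h (hμFt k)
  -- transport pieces
  have hpmS : ∀ k : ℕ, Measurable fun x : X => (x, sfun k) :=
    fun k => measurable_id.prodMk measurable_const
  set τ : ℕ → Measure (X × X) :=
    fun k => ((cE k) • μ.restrict (F k)).map (fun x => (x, sfun k)) with hτ
  set ex : ℕ → Measure X := fun k => (1 - cE k) • μ.restrict (F k) with hexd
  set γ : Measure (X × X) :=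
    dump (μ.restrict W) + Measure.sum τ + Measure.sum (fun k => dump (ex k)) with hγ
  have hrFA : ∀ k, (μ.restrict (F k)).restrict Aᶜ = μ.restrict (F k) := by
    intro k
    rw [Measure.restrict_restrict hAcm, inter_eq_self_of_subset_right ((hFK k).trans hKA)]
  have hrWA : (μ.restrict W).restrict Aᶜ = μ.restrict W := by
    rw [Measure.restrict_restrict hAcm, inter_eq_self_of_subset_right hWA]
  -- first marginal
  have hτfst : ∀ k, (τ k).map Prod.fst = cE k • μ.restrict (F k) := by
    intro k
    rw [hτ]; dsimp only
    rw [Measure.map_map measurable_fst (hpmS k)]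
    exact Measure.map_id' ..
  have hγfst : γ.map Prod.fst = μ.restrict Aᶜ := by
    rw [hγ, Measure.map_add _ _ measurable_fst, Measure.map_add _ _ measurable_fst,
      hdump_fst, hrWA, Measure.map_sum measurable_fst.aemeasurable,
      Measure.map_sum measurable_fst.aemeasurable]
    simp_rw [hτfst]
    have h2 : ∀ k, (dump (ex k)).map Prod.fst = (1 - cE k) • μ.restrict (F k) := by
      intro k
      rw [hdump_fst, hexd]; dsimp only
      rw [Measure.restrict_smul, hrFA k]
    simp_rw [h2]
    have h3 : (Measure.sum fun k => cE k • μ.restrict (F k))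
        + (Measure.sum fun k => (1 - cE k) • μ.restrict (F k))
        = Measure.sum (fun k => μ.restrict (F k)) := by
      ext s hs
      rw [Measure.add_apply, Measure.sum_apply _ hs, Measure.sum_apply _ hs,
        Measure.sum_apply _ hs, ← ENNReal.tsum_add]
      refine tsum_congr fun k => ?_
      rw [Measure.smul_apply, Measure.smul_apply, smul_eq_mul, smul_eq_mul, ← add_mul,
        add_tsub_cancel_of_le (hcE1 k), one_mul]
    rw [add_assoc, h3, ← Measure.restrict_iUnion hFdisj hFm, hFcup,
      ← Measure.restrict_union disjoint_sdiff_left hKm]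
    rw [diff_union_self, union_eq_left.mpr hKA]
  have hadm2 : (γ.map Prod.fst).restrict Aᶜ = μ := by
    rw [hγfst, Measure.restrict_restrict hAcm, inter_self, hresAc]
  have hadm1 : γ (A ×ˢ A) = 0 := by
    have hsub : A ×ˢ A ⊆ Prod.fst ⁻¹' A := fun z hz => hz.1
    have h1 : γ (Prod.fst ⁻¹' A) = 0 := by
      have h2 : (γ.map Prod.fst) A = 0 := by
        rw [hγfst, Measure.restrict_apply hAm]
        simp
      rwa [Measure.map_apply measurable_fst hAm] at h2
    exact measure_mono_null hsub h1
  -- second marginal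
  have hτsnd : ∀ k, (τ k).map Prod.snd = (cE k * μ (F k)) • Measure.dirac (sfun k) := by
    intro k
    rw [hτ]; dsimp only
    rw [Measure.map_map measurable_snd (hpmS k)]
    have h2 : (Prod.snd ∘ fun x : X => (x, sfun k)) = fun _ => sfun k := rfl
    rw [h2, Measure.map_const, Measure.smul_apply, Measure.restrict_apply_univ, smul_eq_mul]
  have hsndres : ∀ k, ((cE k * μ (F k)) • Measure.dirac (sfun k)).restrict Aᶜ
      = ENNReal.ofReal (qf k) • Measure.dirac (sfun k) := by
    intro k
    by_cases h : μ (F k) = 0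
    · rw [h, mul_zero, zero_smul, hq0 k h, zero_smul, Measure.restrict_zero]
    · have hk : k < m := by by_contra hk; exact h (hFhi k hk)
      have hsS : sfun k ∈ Aᶜ := hSsub (hsfunS k hk)
      rw [hcEmul k, Measure.restrict_smul]
      congr 1
      apply Measure.restrict_eq_self_of_ae_mem
      rw [ae_iff]
      have h2 : {x : X | ¬ x ∈ Aᶜ} = A := by ext z; simp
      rw [h2, Measure.dirac_apply' _ hAm]
      simpa using hsS
  set ν : Measure X := Measure.sum (fun k => ENNReal.ofReal (qf k) • Measure.dirac (sfun k))
    with hν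
  have hγsnd : (γ.map Prod.snd).restrict Aᶜ = ν := by
    rw [hγ, Measure.map_add _ _ measurable_snd, Measure.map_add _ _ measurable_snd,
      Measure.restrict_add, Measure.restrict_add, hdump_snd,
      Measure.map_sum measurable_snd.aemeasurable, Measure.map_sum measurable_snd.aemeasurable,
      Measure.restrict_sum _ hAcm, Measure.restrict_sum _ hAcm]
    simp_rw [hτsnd, hsndres]
    have h1 : ∀ k, (((dump (ex k)).map Prod.snd).restrict Aᶜ) = 0 := fun k => hdump_snd (ex k)
    simp_rw [h1]
    have h2 : (Measure.sum fun _ : ℕ => (0 : Measure X)) = 0 := by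
      ext s hs
      rw [Measure.sum_apply _ hs]
      simp
    rw [h2, hν]
    simp
  have hadm : γ ∈ ptAdm A μ ν := ⟨hadm1, hadm2, hγsnd⟩
  -- cost estimates
  have hcost2 : ptCost p (Measure.sum τ) ≤ b := by
    simp only [ptCost]
    rw [lintegral_sum_measure]
    have hterm : ∀ k, ∫⁻ z, ENNReal.ofReal (dist z.1 z.2 ^ p) ∂(τ k)
        ≤ ENNReal.ofReal (δ ^ p) * μ (F k) := by
      intro k
      rw [hτ]; dsimp only
      rw [Measure.map_smul, lintegral_smul_measure, lintegral_map hgm (hpmS k)]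
      have h1 : ∫⁻ x in F k, ENNReal.ofReal (dist x (sfun k) ^ p) ∂μ
          ≤ ENNReal.ofReal (δ ^ p) * μ (F k) := by
        calc ∫⁻ x in F k, ENNReal.ofReal (dist x (sfun k) ^ p) ∂μ
            ≤ ∫⁻ _ in F k, ENNReal.ofReal (δ ^ p) ∂μ :=
              setLIntegral_mono' (hFm k) fun x hx =>
                ENNReal.ofReal_le_ofReal
                  (Real.rpow_le_rpow dist_nonneg (hFball k x hx) hp0.le)
          _ = ENNReal.ofReal (δ ^ p) * μ (F k) := setLIntegral_const _ _
      calc cE k * ∫⁻ x in F k, ENNReal.ofReal (dist x (sfun k) ^ p) ∂μ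
          ≤ 1 * (ENNReal.ofReal (δ ^ p) * μ (F k)) := mul_le_mul' (hcE1 k) h1
        _ = ENNReal.ofReal (δ ^ p) * μ (F k) := one_mul _
    calc (∑' k, ∫⁻ z, ENNReal.ofReal (dist z.1 z.2 ^ p) ∂(τ k))
        ≤ ∑' k, ENNReal.ofReal (δ ^ p) * μ (F k) := ENNReal.tsum_le_tsum hterm
      _ = ENNReal.ofReal (δ ^ p) * ∑' k, μ (F k) := ENNReal.tsum_mul_left
      _ = ENNReal.ofReal (δ ^ p) * μ K := by rw [← measure_iUnion hFdisj hFm, hFcup]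
      _ ≤ b := hδK
  set Jf : Finset ℕ := (Finset.range m).filter (fun k => μ (F k) ≠ 0) with hJf
  set cst : ℝ≥0∞ := ENNReal.ofReal (2^p) * (ENNReal.ofReal (((N:ℝ)+1)^p) * ENNReal.ofReal η')
    with hcst
  have hcost3 : ptCost p (Measure.sum fun k => dump (ex k)) ≤ b := by
    simp only [ptCost]
    rw [lintegral_sum_measure]
    have hterm : ∀ k, (∫⁻ z, ENNReal.ofReal (dist z.1 z.2 ^ p) ∂(dump (ex k)))
        ≤ (if k ∈ Jf then cst else 0) := by
      intro k
      have hbase := hdump_cost (ex k)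
      by_cases h : μ (F k) = 0
      · have hz : ∫⁻ x, ENNReal.ofReal (infDist x A ^ p) ∂(ex k) = 0 := by
          rw [hexd]; dsimp only
          rw [lintegral_smul_measure, setLIntegral_measure_zero _ _ h, smul_zero]
        have : (if k ∈ Jf then cst else 0) = 0 := by
          rw [if_neg]
          rw [hJf]
          simp [h]
        rw [this]
        calc (∫⁻ z, ENNReal.ofReal (dist z.1 z.2 ^ p) ∂(dump (ex k)))
            ≤ ENNReal.ofReal (2^p) * ∫⁻ x, ENNReal.ofReal (infDist x A ^ p) ∂(ex k) :=
              by simpa [ptCost] using hbase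
          _ = 0 := by rw [hz, mul_zero]
      · have hk : k < m := by by_contra hk; exact h (hFhi k hk)
        have hmem : k ∈ Jf := by rw [hJf]; simp [hk, h]
        rw [if_pos hmem]
        have hint : ∫⁻ x in F k, ENNReal.ofReal (infDist x A ^ p) ∂μ
            ≤ ENNReal.ofReal (((N:ℝ)+1)^p) * μ (F k) := by
          refine le_trans (setLIntegral_mono' (hFm k) fun x hx => ?_)
            (le_of_eq (setLIntegral_const _ _))
          refine ENNReal.ofReal_le_ofReal (Real.rpow_le_rpow infDist_nonneg ?_ hp0.le)
          have hK' : x ∈ closedBall a₀ ((N:ℝ)+1) := (hFK k hx).1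
          exact le_trans (infDist_le_dist_of_mem ha₀) (mem_closedBall.mp hK')
        have hsub1 : (1 - cE k) * μ (F k) ≤ ENNReal.ofReal η' := by
          have h1 : (1 - cE k) * μ (F k) = μ (F k) - ENNReal.ofReal (qf k) := by
            rw [ENNReal.sub_mul (fun _ _ => hμFt k), one_mul, hcEmul k]
          rw [h1, ← ENNReal.ofReal_toReal (hμFt k),
            ← ENNReal.ofReal_sub _ (le_of_lt (hqf1 k h).1)]
          exact ENNReal.ofReal_le_ofReal (by linarith [(hqf1 k h).2.2])
        calc (∫⁻ z, ENNReal.ofReal (dist z.1 z.2 ^ p) ∂(dump (ex k)))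
            ≤ ENNReal.ofReal (2^p) * ∫⁻ x, ENNReal.ofReal (infDist x A ^ p) ∂(ex k) :=
              by simpa [ptCost] using hbase
          _ = ENNReal.ofReal (2^p)
              * ((1 - cE k) * ∫⁻ x in F k, ENNReal.ofReal (infDist x A ^ p) ∂μ) := by
                rw [hexd]; dsimp only; rw [lintegral_smul_measure, smul_eq_mul]
          _ ≤ ENNReal.ofReal (2^p)
              * ((1 - cE k) * (ENNReal.ofReal (((N:ℝ)+1)^p) * μ (F k))) := by
                gcongr
          _ = ENNReal.ofReal (2^p)
              * (ENNReal.ofReal (((N:ℝ)+1)^p) * ((1 - cE k) * μ (F k))) := by ring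
          _ ≤ cst := by
                rw [hcst]
                gcongr
    calc (∑' k, ∫⁻ z, ENNReal.ofReal (dist z.1 z.2 ^ p) ∂(dump (ex k)))
        ≤ ∑' k, (if k ∈ Jf then cst else 0) := ENNReal.tsum_le_tsum hterm
      _ = ∑ k ∈ Jf, (if k ∈ Jf then cst else 0) := tsum_eq_sum (fun k hk => if_neg hk)
      _ = ∑ _k ∈ Jf, cst := Finset.sum_congr rfl fun k hk => if_pos hk
      _ = (Jf.card : ℝ≥0∞) * cst := by rw [Finset.sum_const, nsmul_eq_mul]
      _ ≤ (m : ℝ≥0∞) * cst := by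
          gcongr
          exact_mod_cast le_trans (Finset.card_filter_le _ _) (le_of_eq (Finset.card_range m))
      _ ≤ b := by
          have h1 : (m : ℝ≥0∞) * cst
              = (ENNReal.ofReal (2^p) * ENNReal.ofReal (((N:ℝ)+1)^p) * (m : ℝ≥0∞)) * ηE := by
            rw [hcst, hη'E]; ring
          rw [h1]
          calc (ENNReal.ofReal (2^p) * ENNReal.ofReal (((N:ℝ)+1)^p) * (m : ℝ≥0∞)) * ηE
              ≤ Dn * ηE := by
                gcongr
                rw [hDn]
                exact le_self_add
            _ = Dn * (b / Dn) := by rw [hηE]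
            _ ≤ b := ENNReal.mul_div_le
  have hcost : ptCost p γ ≤ ENNReal.ofReal r := by
    have h1 : ptCost p γ = ptCost p (dump (μ.restrict W)) + ptCost p (Measure.sum τ)
        + ptCost p (Measure.sum fun k => dump (ex k)) := by
      rw [hγ]
      simp only [ptCost]
      rw [lintegral_add_measure, lintegral_add_measure]
    rw [h1]
    exact le_trans (add_le_add (add_le_add hcost1 hcost2) hcost3) hbbb
  have hWbPow : WbPow p A μ ν ≤ ENNReal.ofReal r := by
    refine le_trans ?_ hcost
    simp only [WbPow]
    exact iInf₂_le γ hadm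
  -- the discrete representation of ν
  refine ⟨ν, ?_, ?_⟩
  · refine ⟨Jf.card, fun i => qf ((Jf.equivFin.symm i : ℕ)),
      fun i => sfun ((Jf.equivFin.symm i : ℕ)), ?_, ?_, ?_⟩
    · intro i
      have hmem := Finset.mem_filter.mp (Jf.equivFin.symm i).2
      have h1 := (hqf1 _ hmem.2).1
      exact_mod_cast h1
    · intro i
      have hmem := Finset.mem_filter.mp (Jf.equivFin.symm i).2
      exact hsfunS _ (Finset.mem_range.mp hmem.1)
    · rw [hν]
      ext s hs
      rw [Measure.sum_apply _ hs]
      have hz : ∀ k ∉ Jf, (ENNReal.ofReal (qf k) • Measure.dirac (sfun k)) s = 0 := by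
        intro k hk
        have hqz : μ (F k) = 0 := by
          by_contra hne'
          have hkm : k < m := by by_contra hkm; exact hne' (hFhi k hkm)
          exact hk (by rw [hJf]; simp [hkm, hne'])
        rw [hq0 k hqz, zero_smul]
        rfl
      rw [tsum_eq_sum (s := Jf) (fun k hk => hz k hk)]
      have h4 : (∑ i : Fin Jf.card,
          ENNReal.ofReal (qf ((Jf.equivFin.symm i : ℕ))) •
            Measure.dirac (sfun ((Jf.equivFin.symm i : ℕ)))) s
          = ∑ i : Fin Jf.card,
            (ENNReal.ofReal (qf ((Jf.equivFin.symm i : ℕ))) •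
              Measure.dirac (sfun ((Jf.equivFin.symm i : ℕ)))) s := by
        rw [Measure.finset_sum_apply]
      rw [h4]
      rw [Equiv.sum_comp Jf.equivFin.symm
        (fun x : ↥Jf => (ENNReal.ofReal (qf (x : ℕ)) • Measure.dirac (sfun (x : ℕ))) s)]
      rw [Finset.sum_coe_sort Jf (fun k => (ENNReal.ofReal (qf k) • Measure.dirac (sfun k)) s)]
  · have h1 : WbPow p A μ ν < c := lt_of_le_of_lt hWbPow hrc
    have h2 : Wb p A μ ν < c ^ (1/p) := by
      simp only [Wb]
      exact ENNReal.rpow_lt_rpow h1 (by positivity)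
    rw [hc, ← ENNReal.rpow_mul, mul_one_div_cancel hpne, ENNReal.rpow_one] at h2
    exact h2
end

section
/- Let X be a complete, separable, proper, geodesic metric space. Then there exists a Borel measurable map GeoSel : X × X → Geo(X) (the space of constant speed geodesics ξ : [0,1] → X with the uniform metric) such that for all (x,y), GeoSel(x,y)(0) = x and GeoSel(x,y)(1) = y. -/
open Metric Set

namespace GeoSelAux

variable {X : Type*} [MetricSpace X]

def midSet (x y : X) : Set X :=
  {z | dist x z = dist x y / 2 ∧ dist z y = dist x y / 2}

lemma isClosed_midSet (x y : X) : IsClosed (midSet x y) := by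
  have h1 : IsClosed {z : X | dist x z = dist x y / 2} :=
    isClosed_eq (continuous_const.dist continuous_id) continuous_const
  have h2 : IsClosed {z : X | dist z y = dist x y / 2} :=
    isClosed_eq (continuous_id.dist continuous_const) continuous_const
  exact h1.inter h2

lemma isClosed_hitSet [ProperSpace X] (w : X) (r : ℝ) :
    IsClosed {p : X × X | ∃ z ∈ midSet p.1 p.2, dist z w ≤ r} := by
  haveI : CompactSpace (closedBall w r) :=
    isCompact_iff_compactSpace.1 (isCompact_closedBall w r)
  have key : {p : X × X | ∃ z ∈ midSet p.1 p.2, dist z w ≤ r} =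
      Prod.snd '' {zp : closedBall w r × (X × X) |
        dist zp.2.1 (zp.1 : X) = dist zp.2.1 zp.2.2 / 2 ∧
        dist (zp.1 : X) zp.2.2 = dist zp.2.1 zp.2.2 / 2} := by
    ext p
    constructor
    · rintro ⟨z, ⟨h1, h2⟩, hz⟩
      exact ⟨⟨⟨z, mem_closedBall.2 hz⟩, p⟩, ⟨h1, h2⟩, rfl⟩
    · rintro ⟨⟨z, q⟩, ⟨h1, h2⟩, rfl⟩
      exact ⟨z, ⟨h1, h2⟩, mem_closedBall.1 z.2⟩
  rw [key]
  apply isClosedMap_snd_of_compactSpace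
  apply IsClosed.inter
  · exact isClosed_eq (by fun_prop) (by fun_prop)
  · exact isClosed_eq (by fun_prop) (by fun_prop)

lemma exists_measurable_midSelection [CompleteSpace X]
    [TopologicalSpace.SeparableSpace X] [ProperSpace X]
    [MeasurableSpace X] [BorelSpace X]
    (hne : ∀ x y : X, (midSet x y).Nonempty) :
    ∃ mid : X × X → X, Measurable mid ∧ ∀ p : X × X, mid p ∈ midSet p.1 p.2 := by
  classical
  cases isEmpty_or_nonempty X with
  | inl h => exact ⟨fun p => isEmptyElim p.1, fun s _ => by
      convert MeasurableSet.empty; ext p; exact isEmptyElim p.1,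
      fun p => isEmptyElim p.1⟩
  | inr h => ?_
  haveI : SecondCountableTopology X := UniformSpace.secondCountable_of_separable X
  set q : ℕ → X := TopologicalSpace.denseSeq X with hq
  have hqd : DenseRange q := TopologicalSpace.denseRange_denseSeq X
  -- predicate
  set P : ℕ → X × X → ℕ → Prop :=
    fun k p i => ∃ z ∈ midSet p.1 p.2, dist z (q i) ≤ (1/2 : ℝ) ^ k with hP
  have hPmeas : ∀ k i, MeasurableSet {p : X × X | P k p i} := by
    intro k i
    exact (isClosed_hitSet (q i) ((1/2 : ℝ) ^ k)).measurableSet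
  -- base existence
  have base : ∀ (p : X × X) (k : ℕ), ∃ i, P k p i := by
    intro p k
    obtain ⟨z, hz⟩ := hne p.1 p.2
    obtain ⟨i, hi⟩ := Metric.denseRange_iff.1 hqd z ((1/2 : ℝ) ^ k) (by positivity)
    exact ⟨i, z, hz, le_of_lt hi⟩
  -- step existence
  have step : ∀ (p : X × X) (k j : ℕ), P k p j →
      ∃ i, P (k+1) p i ∧ dist (q i) (q j) ≤ (1/2 : ℝ) ^ k + (1/2 : ℝ) ^ (k+1) := by
    intro p k j ⟨z, hzM, hzd⟩
    obtain ⟨i, hi⟩ := Metric.denseRange_iff.1 hqd z ((1/2 : ℝ) ^ (k+1)) (by positivity)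
    refine ⟨i, ⟨z, hzM, le_of_lt hi⟩, ?_⟩
    calc dist (q i) (q j) ≤ dist (q i) z + dist z (q j) := dist_triangle _ _ _
      _ ≤ (1/2 : ℝ) ^ (k+1) + (1/2 : ℝ) ^ k := by
          have := le_of_lt hi; rw [dist_comm] at this; linarith
      _ = (1/2 : ℝ) ^ k + (1/2 : ℝ) ^ (k+1) := by ring
  -- recursive selection of indices
  let G : (p : X × X) → (k : ℕ) → {i : ℕ // P k p i} := fun p =>
    Nat.rec (motive := fun k => {i : ℕ // P k p i})
      ⟨Nat.find (base p 0), Nat.find_spec (base p 0)⟩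
      (fun k prev => ⟨Nat.find (step p k prev.1 prev.2),
        (Nat.find_spec (step p k prev.1 prev.2)).1⟩)
  have hGP : ∀ p k, P k p ((G p k).1) := fun p k => (G p k).2
  have hGsucc : ∀ p k, (G p (k+1)).1 =
      Nat.find (step p k ((G p k).1) ((G p k).2)) := fun p k => rfl
  have hGdist : ∀ p k, dist (q ((G p (k+1)).1)) (q ((G p k).1)) ≤
      (1/2 : ℝ) ^ k + (1/2 : ℝ) ^ (k+1) := fun p k =>
    (Nat.find_spec (step p k ((G p k).1) ((G p k).2))).2
  -- measurability of the index functions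
  have measG : ∀ k, Measurable fun p => (G p k).1 := by
    intro k
    induction k with
    | zero =>
      apply measurable_to_countable'
      intro i
      have : (fun p => (G p 0).1) ⁻¹' {i} =
          {p : X × X | P 0 p i} ∩ ⋂ j ∈ Finset.range i, {p : X × X | P 0 p j}ᶜ := by
        ext p
        simp only [mem_preimage, mem_singleton_iff, mem_inter_iff, mem_setOf_eq,
          Finset.mem_range, mem_iInter, mem_compl_iff]
        show Nat.find (base p 0) = i ↔ _
        rw [Nat.find_eq_iff]
      rw [this]
      exact (hPmeas 0 i).inter
        (MeasurableSet.biInter (Finset.range i).countable_toSet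
          (fun j _ => (hPmeas 0 j).compl))
    | succ k ih =>
      apply measurable_to_countable'
      intro i
      have : (fun p => (G p (k+1)).1) ⁻¹' {i} =
          ⋃ m : ℕ, ((fun p => (G p k).1) ⁻¹' {m}) ∩
            ({p : X × X | P (k+1) p i ∧ dist (q i) (q m) ≤ (1/2:ℝ)^k + (1/2:ℝ)^(k+1)} ∩
             ⋂ j ∈ Finset.range i,
               {p : X × X | P (k+1) p j ∧ dist (q j) (q m) ≤ (1/2:ℝ)^k + (1/2:ℝ)^(k+1)}ᶜ) := by
        ext p
        simp only [mem_preimage, mem_singleton_iff, mem_iUnion, mem_inter_iff, mem_setOf_eq,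
          Finset.mem_range, mem_iInter, mem_compl_iff]
        constructor
        · intro hi
          refine ⟨(G p k).1, rfl, ?_⟩
          rw [Nat.find_eq_iff] at hi
          tauto
        · rintro ⟨m, hm, hcond⟩
          rw [Nat.find_eq_iff]
          rw [hm]
          tauto
      rw [this]
      refine MeasurableSet.iUnion fun m => (ih (measurableSet_singleton m)).inter ?_
      refine MeasurableSet.inter ?_ ?_
      · by_cases hd : dist (q i) (q m) ≤ (1/2:ℝ)^k + (1/2:ℝ)^(k+1)
        · have : {p : X × X | P (k+1) p i ∧ dist (q i) (q m) ≤ (1/2:ℝ)^k + (1/2:ℝ)^(k+1)} =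
              {p : X × X | P (k+1) p i} := by
            ext p; simp only [mem_setOf_eq, and_iff_left hd]
          rw [this]; exact hPmeas (k+1) i
        · have : {p : X × X | P (k+1) p i ∧ dist (q i) (q m) ≤ (1/2:ℝ)^k + (1/2:ℝ)^(k+1)} =
              (∅ : Set (X × X)) := by
            ext p
            simp only [mem_setOf_eq, mem_empty_iff_false, iff_false]
            exact fun h => hd h.2
          rw [this]; exact MeasurableSet.empty
      · refine MeasurableSet.biInter (Finset.range i).countable_toSet fun j _ => ?_
        by_cases hd : dist (q j) (q m) ≤ (1/2:ℝ)^k + (1/2:ℝ)^(k+1)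
        · have : {p : X × X | P (k+1) p j ∧ dist (q j) (q m) ≤ (1/2:ℝ)^k + (1/2:ℝ)^(k+1)} =
              {p : X × X | P (k+1) p j} := by
            ext p; simp only [mem_setOf_eq, and_iff_left hd]
          rw [this]; exact (hPmeas (k+1) j).compl
        · have : {p : X × X | P (k+1) p j ∧ dist (q j) (q m) ≤ (1/2:ℝ)^k + (1/2:ℝ)^(k+1)} =
              (∅ : Set (X × X)) := by
            ext p
            simp only [mem_setOf_eq, mem_empty_iff_false, iff_false]
            exact fun h => hd h.2
          rw [this]; exact MeasurableSet.empty.compl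
  -- the limit
  have hcau : ∀ p : X × X, CauchySeq (fun k => q ((G p k).1)) := by
    intro p
    apply cauchySeq_of_le_geometric (1/2 : ℝ) 2 (by norm_num)
    intro k
    rw [dist_comm]
    have h1 := hGdist p k
    have h2 : (1/2 : ℝ) ^ (k+1) ≤ (1/2 : ℝ) ^ k := by
      apply pow_le_pow_of_le_one <;> norm_num
    calc dist (q ((G p (k+1)).1)) (q ((G p k).1)) ≤ (1/2:ℝ)^k + (1/2:ℝ)^(k+1) := h1
      _ ≤ 2 * (1/2:ℝ)^k := by linarith
  choose mid hmid using fun p => cauchySeq_tendsto_of_complete (hcau p)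
  refine ⟨mid, ?_, ?_⟩
  · apply measurable_of_tendsto_metrizable
      (f := fun k p => q ((G p k).1)) (fun k => ?_) (tendsto_pi_nhds.2 hmid)
    exact measurable_from_top.comp (measG k)
  · intro p
    have hcl : mid p ∈ closure (midSet p.1 p.2) := by
      rw [Metric.mem_closure_iff]
      intro ε hε
      have h1 : ∀ᶠ k in Filter.atTop, dist (q ((G p k).1)) (mid p) < ε/2 := by
        have := (hmid p).eventually (Metric.ball_mem_nhds (mid p) (half_pos hε))
        simpa [Metric.mem_ball] using this
      have h2 : ∀ᶠ k in Filter.atTop, (1/2:ℝ)^k < ε/2 := by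
        have ht : Filter.Tendsto (fun k : ℕ => (1/2:ℝ)^k) Filter.atTop (nhds 0) :=
          tendsto_pow_atTop_nhds_zero_of_lt_one (by norm_num) (by norm_num)
        exact ht.eventually (gt_mem_nhds (half_pos hε))
      obtain ⟨k, hk1, hk2⟩ := (h1.and h2).exists
      obtain ⟨z, hzM, hzd⟩ := hGP p k
      refine ⟨z, hzM, ?_⟩
      calc dist (mid p) z ≤ dist (mid p) (q ((G p k).1)) + dist (q ((G p k).1)) z :=
            dist_triangle _ _ _
        _ < ε/2 + ε/2 := by
            rw [dist_comm] at hk1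
            have : dist (q ((G p k).1)) z ≤ (1/2:ℝ)^k := by rw [dist_comm]; exact hzd
            linarith
        _ = ε := by ring
    rwa [(isClosed_midSet p.1 p.2).closure_eq] at hcl

noncomputable def dyadicB (mid : X × X → X) (p : X × X) : ℕ → ℕ → X
  | 0, j => if j = 0 then p.1 else p.2
  | (n+1), j =>
    if j % 2 = 0 then dyadicB mid p n (j / 2)
    else mid (dyadicB mid p n (j / 2), dyadicB mid p n (j / 2 + 1))

lemma dyadicB_zero (mid : X × X → X) (p : X × X) (n : ℕ) :
    dyadicB mid p n 0 = p.1 := by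
  induction n with
  | zero => simp [dyadicB]
  | succ n ih => simp [dyadicB, ih]

lemma dyadicB_top (mid : X × X → X) (p : X × X) (n : ℕ) :
    dyadicB mid p n (2 ^ n) = p.2 := by
  induction n with
  | zero => simp [dyadicB]
  | succ n ih =>
    have h1 : 2 ^ (n+1) % 2 = 0 := by
      simp [pow_succ, Nat.mul_mod_left]
    have h2 : 2 ^ (n+1) / 2 = 2 ^ n := by
      rw [pow_succ, Nat.mul_div_cancel] <;> norm_num
    simp [dyadicB, h1, h2, ih]

lemma measurable_dyadicB [MeasurableSpace X]
    {mid : X × X → X} (hmid : Measurable mid) :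
    ∀ n j, Measurable fun p : X × X => dyadicB mid p n j := by
  intro n
  induction n with
  | zero =>
    intro j
    by_cases h : j = 0 <;> simp only [dyadicB, if_pos, if_neg, h] <;> [exact measurable_fst; exact measurable_snd]
  | succ n ih =>
    intro j
    by_cases h : j % 2 = 0
    · simpa only [dyadicB, if_pos h] using ih (j / 2)
    · simpa only [dyadicB, if_neg h, Function.comp_def] using hmid.comp ((ih (j/2)).prodMk (ih (j/2+1)))

lemma dist_dyadicB {mid : X × X → X} (hmid : ∀ p : X × X, mid p ∈ midSet p.1 p.2)
    (p : X × X) :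
    ∀ (n j l : ℕ), j ≤ 2 ^ n → l ≤ 2 ^ n →
      dist (dyadicB mid p n j) (dyadicB mid p n l) =
        |(j : ℝ) - (l : ℝ)| / 2 ^ n * dist p.1 p.2 := by
  intro n
  induction n with
  | zero =>
    intro j l hj hl
    norm_num at hj hl
    interval_cases j <;> interval_cases l <;>
      simp [dyadicB, dist_comm p.1 p.2]
  | succ n ih =>
    -- adjacent points at level n+1
    have adj : ∀ j < 2 ^ (n+1),
        dist (dyadicB mid p (n+1) j) (dyadicB mid p (n+1) (j+1)) =
          dist p.1 p.2 / 2 ^ (n+1) := by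
      intro j hj
      rcases Nat.even_or_odd j with ⟨m, hm⟩ | ⟨m, hm⟩
      · -- j = 2 * m
        subst hm
        have hmod : m + m = 2 * m := by ring
        have hb1 : (m + m) % 2 = 0 := by omega
        have hd1 : (m + m) / 2 = m := by omega
        have hb2 : (m + m + 1) % 2 ≠ 0 := by omega
        have hd2 : (m + m + 1) / 2 = m := by omega
        have hmb : m + 1 ≤ 2 ^ n := by
          have : m + m < 2 ^ (n+1) := hj
          rw [pow_succ] at this; omega
        have key := (hmid (dyadicB mid p n m, dyadicB mid p n (m+1))).1
        simp only [dyadicB, if_pos hb1, if_neg hb2, hd1, hd2]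
        rw [key, ih m (m+1) (by omega) hmb]
        push_cast
        rw [pow_succ]
        rw [abs_of_nonpos (by linarith : (m:ℝ) - (m+1) ≤ 0)]
        ring
      · -- j = 2 * m + 1
        subst hm
        have hb1 : (2*m + 1) % 2 ≠ 0 := by omega
        have hd1 : (2*m + 1) / 2 = m := by omega
        have hb2 : (2*m + 1 + 1) % 2 = 0 := by omega
        have hd2 : (2*m + 1 + 1) / 2 = m + 1 := by omega
        have hmb : m + 1 ≤ 2 ^ n := by
          have : 2*m + 1 < 2 ^ (n+1) := hj
          rw [pow_succ] at this; omega
        have key := (hmid (dyadicB mid p n m, dyadicB mid p n (m+1))).2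
        simp only [dyadicB, if_neg hb1, if_pos hb2, hd1, hd2]
        rw [key, ih m (m+1) (by omega) hmb]
        push_cast
        rw [pow_succ]
        rw [abs_of_nonpos (by linarith : (m:ℝ) - (m+1) ≤ 0)]
        ring
    -- chain bound
    have chain : ∀ j l : ℕ, j ≤ l → l ≤ 2 ^ (n+1) →
        dist (dyadicB mid p (n+1) j) (dyadicB mid p (n+1) l) ≤
          ((l : ℝ) - j) / 2 ^ (n+1) * dist p.1 p.2 := by
      intro j l hjl hl
      induction l, hjl using Nat.le_induction with
      | base => simp
      | succ l hjl ihl =>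
        have hl' : l ≤ 2 ^ (n+1) := by omega
        have hll : l < 2 ^ (n+1) := by omega
        calc dist (dyadicB mid p (n+1) j) (dyadicB mid p (n+1) (l+1))
            ≤ dist (dyadicB mid p (n+1) j) (dyadicB mid p (n+1) l) +
              dist (dyadicB mid p (n+1) l) (dyadicB mid p (n+1) (l+1)) :=
              dist_triangle _ _ _
          _ ≤ ((l : ℝ) - j) / 2 ^ (n+1) * dist p.1 p.2 +
              dist p.1 p.2 / 2 ^ (n+1) := by
              rw [adj l hll]; exact add_le_add (ihl hl') le_rfl
          _ = (((l:ℕ)+1 : ℝ) - j) / 2 ^ (n+1) * dist p.1 p.2 := by ring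
          _ = ((((l+1:ℕ)) : ℝ) - j) / 2 ^ (n+1) * dist p.1 p.2 := by push_cast; ring
    -- equality for ordered pairs
    have ordered : ∀ j l : ℕ, j ≤ l → l ≤ 2 ^ (n+1) →
        dist (dyadicB mid p (n+1) j) (dyadicB mid p (n+1) l) =
          ((l : ℝ) - j) / 2 ^ (n+1) * dist p.1 p.2 := by
      intro j l hjl hl
      have hj2 : j ≤ 2 ^ (n+1) := le_trans hjl hl
      refine le_antisymm (chain j l hjl hl) ?_
      have h1 := chain 0 j (Nat.zero_le _) hj2
      rw [Nat.cast_zero] at h1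
      have h2 : dist (dyadicB mid p (n+1) l) (dyadicB mid p (n+1) (2 ^ (n+1))) ≤
          (((2:ℝ) ^ (n+1) : ℝ) - l) / 2 ^ (n+1) * dist p.1 p.2 := by
        have := chain l (2 ^ (n+1)) hl le_rfl
        convert this using 3
        push_cast
        ring
      rw [dyadicB_zero] at h1
      rw [dyadicB_top] at h2
      have htri : dist p.1 p.2 ≤
          dist p.1 (dyadicB mid p (n+1) j) +
          dist (dyadicB mid p (n+1) j) (dyadicB mid p (n+1) l) +
          dist (dyadicB mid p (n+1) l) p.2 := dist_triangle4 _ _ _ _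
      have hpow : (0:ℝ) < 2 ^ (n+1) := by positivity
      have hD : (0:ℝ) ≤ dist p.1 p.2 := dist_nonneg
      have expand : ((j : ℝ) - 0) / 2 ^ (n+1) * dist p.1 p.2 +
          (((2:ℝ) ^ (n+1)) - l) / 2 ^ (n+1) * dist p.1 p.2 =
          dist p.1 p.2 - ((l : ℝ) - j) / 2 ^ (n+1) * dist p.1 p.2 := by
        field_simp
        ring
      nlinarith [h1, h2, htri]
    intro j l hj hl
    rcases le_total j l with h | h
    · rw [ordered j l h hl, abs_of_nonpos (by
        have : (j:ℝ) ≤ l := by exact_mod_cast h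
        linarith)]
      try ring
    · rw [dist_comm, ordered l j h hj, abs_of_nonneg (by
        have : (l:ℝ) ≤ j := by exact_mod_cast h
        linarith)]
      try ring

lemma dyadicB_lift (mid : X × X → X) (p : X × X) (n k j : ℕ) :
    dyadicB mid p (n + k) (j * 2 ^ k) = dyadicB mid p n j := by
  induction k with
  | zero => simp
  | succ k ih =>
    have h2 : j * 2 ^ (k+1) = 2 * (j * 2 ^ k) := by ring
    show dyadicB mid p ((n+k)+1) (j * 2 ^ (k+1)) = _
    rw [h2]
    have hb : (2 * (j * 2 ^ k)) % 2 = 0 := Nat.mul_mod_right 2 _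
    have hdd : (2 * (j * 2 ^ k)) / 2 = j * 2 ^ k := by omega
    simp only [dyadicB, if_pos hb, hdd, ih]

end GeoSelAux

open Metric Set unitInterval

theorem exists_measurable_geodesic_selection
    {X : Type*} [MetricSpace X] [CompleteSpace X] [TopologicalSpace.SeparableSpace X]
    [ProperSpace X] [MeasurableSpace X] [BorelSpace X]
    (hgeodesic : ∀ x y : X, ∃ ξ : C(unitInterval, X), ξ 0 = x ∧ ξ 1 = y ∧
      ∀ s t : unitInterval, dist (ξ s) (ξ t) = |(s : ℝ) - (t : ℝ)| * dist x y) :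
    ∃ GeoSel : X × X → C(unitInterval, X),
      @Measurable (X × X) C(unitInterval, X) _ (borel _) GeoSel ∧
      ∀ x y : X, GeoSel (x, y) 0 = x ∧ GeoSel (x, y) 1 = y ∧
        ∀ s t : unitInterval,
          dist (GeoSel (x, y) s) (GeoSel (x, y) t) = |(s : ℝ) - (t : ℝ)| * dist x y := by
  classical
  cases isEmpty_or_nonempty X with
  | inl hemp =>
    refine ⟨fun p => isEmptyElim p.1, ?_, fun x => isEmptyElim x⟩
    intro s _
    convert MeasurableSet.empty
    ext p; exact isEmptyElim p.1
  | inr hX => ?_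
  haveI : SecondCountableTopology X := UniformSpace.secondCountable_of_separable X
  -- midpoints exist
  have hne : ∀ x y : X, (GeoSelAux.midSet x y).Nonempty := by
    intro x y
    obtain ⟨ξ, h0, h1, hd⟩ := hgeodesic x y
    set t2 : unitInterval := ⟨1/2, by constructor <;> norm_num⟩ with ht2
    refine ⟨ξ t2, ?_, ?_⟩
    · have h2 := hd 0 t2
      rw [h0] at h2
      rw [h2]
      norm_num [ht2]
      ring
    · have h2 := hd t2 1
      rw [h1] at h2
      rw [h2]
      norm_num [ht2]
      ring
  obtain ⟨mid, midmeas, midmem⟩ := GeoSelAux.exists_measurable_midSelection hne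
  set B : X × X → ℕ → ℕ → X := GeoSelAux.dyadicB mid with hB
  set a : ℕ → unitInterval → ℕ := fun n t => ⌊(t : ℝ) * 2 ^ n⌋₊ with ha
  have ha_le : ∀ (n : ℕ) (t : unitInterval), a n t ≤ 2 ^ n := by
    intro n t
    have h1 : (t : ℝ) * 2 ^ n ≤ ((2 ^ n : ℕ) : ℝ) := by
      push_cast
      exact mul_le_of_le_one_left (by positivity) t.2.2
    calc a n t ≤ ⌊((2 ^ n : ℕ) : ℝ)⌋₊ := Nat.floor_le_floor h1
      _ = 2 ^ n := Nat.floor_natCast _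
  have ha_dist : ∀ (n : ℕ) (t : unitInterval),
      |((a n t : ℝ)) / 2 ^ n - (t : ℝ)| ≤ 1 / 2 ^ n := by
    intro n t
    have hp : (0:ℝ) < 2 ^ n := by positivity
    have h0 : (0:ℝ) ≤ (t : ℝ) * 2 ^ n := mul_nonneg t.2.1 (by positivity)
    have hfl : ((a n t : ℝ)) ≤ (t : ℝ) * 2 ^ n := Nat.floor_le h0
    have hfu : (t : ℝ) * 2 ^ n < (a n t : ℝ) + 1 := Nat.lt_floor_add_one _
    have e1 : (a n t : ℝ) / 2 ^ n - (t : ℝ) = ((a n t : ℝ) - (t : ℝ) * 2 ^ n) / 2 ^ n := by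
      field_simp
    rw [e1, abs_div, abs_of_pos hp]
    apply (div_le_div_iff_of_pos_right hp).mpr
    rw [abs_le]
    constructor <;> linarith
  -- distances at the same level
  have key : ∀ (p : X × X) (n : ℕ) (s t : unitInterval),
      dist (B p n (a n s)) (B p n (a n t)) =
        |(a n s : ℝ) - (a n t : ℝ)| / 2 ^ n * dist p.1 p.2 :=
    fun p n s t => GeoSelAux.dist_dyadicB midmem p n _ _ (ha_le n s) (ha_le n t)
  -- distances across levels
  have cross : ∀ (p : X × X) (s : unitInterval) (n k : ℕ),
      dist (B p n (a n s)) (B p (n + k) (a (n + k) s)) =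
        |(a n s : ℝ) / 2 ^ n - (a (n + k) s : ℝ) / 2 ^ (n + k)| * dist p.1 p.2 := by
    intro p s n k
    have hlift : B p (n + k) (a n s * 2 ^ k) = B p n (a n s) :=
      GeoSelAux.dyadicB_lift mid p n k (a n s)
    rw [← hlift]
    rw [GeoSelAux.dist_dyadicB midmem p (n + k) _ _
      (by rw [pow_add]; exact Nat.mul_le_mul_right _ (ha_le n s)) (ha_le (n + k) s)]
    congr 1
    have hp : (0:ℝ) < 2 ^ (n + k) := by positivity
    rw [← abs_of_pos hp, ← abs_div]
    congr 1
    rw [abs_of_pos hp]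
    field_simp
    rw [pow_add]
    push_cast
    ring
  -- Cauchy sequences
  have hcauchy : ∀ (p : X × X) (t : unitInterval),
      CauchySeq (fun n => B p n (a n t)) := by
    intro p t
    apply cauchySeq_of_le_tendsto_0 (fun N => 2 * (1/2:ℝ) ^ N * dist p.1 p.2)
    · intro n m N hn hm
      wlog hnm : n ≤ m generalizing n m
      · rw [dist_comm]; exact this m n hm hn (by omega)
      obtain ⟨k, rfl⟩ := Nat.exists_eq_add_of_le hnm
      rw [cross p t n k]
      have h1 : |(a n t : ℝ) / 2 ^ n - (a (n + k) t : ℝ) / 2 ^ (n + k)| ≤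
          1 / 2 ^ n + 1 / 2 ^ (n + k) := by
        have d1 := ha_dist n t
        have d2 := ha_dist (n + k) t
        calc |(a n t : ℝ) / 2 ^ n - (a (n + k) t : ℝ) / 2 ^ (n + k)| ≤
            |(a n t : ℝ) / 2 ^ n - (t:ℝ)| + |(t:ℝ) - (a (n + k) t : ℝ) / 2 ^ (n + k)| :=
              abs_sub_le _ _ _
          _ ≤ 1 / 2 ^ n + 1 / 2 ^ (n + k) := by
              rw [abs_sub_comm ((t:ℝ))]
              exact add_le_add d1 d2
      have h2 : (1:ℝ) / 2 ^ n + 1 / 2 ^ (n + k) ≤ 2 * (1/2:ℝ) ^ N := by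
        have e1 : (1:ℝ) / 2 ^ n = (1/2:ℝ) ^ n := by
          rw [div_pow, one_pow]
        have e2 : (1:ℝ) / 2 ^ (n + k) = (1/2:ℝ) ^ (n + k) := by
          rw [div_pow, one_pow]
        rw [e1, e2]
        have b1 : ((1:ℝ)/2) ^ n ≤ (1/2:ℝ) ^ N :=
          pow_le_pow_of_le_one (by norm_num) (by norm_num) hn
        have b2 : ((1:ℝ)/2) ^ (n + k) ≤ (1/2:ℝ) ^ N :=
          pow_le_pow_of_le_one (by norm_num) (by norm_num) (by omega)
        linarith
      calc |(a n t : ℝ) / 2 ^ n - (a (n + k) t : ℝ) / 2 ^ (n + k)| * dist p.1 p.2 ≤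
          (2 * (1/2:ℝ) ^ N) * dist p.1 p.2 :=
            mul_le_mul_of_nonneg_right (h1.trans h2) dist_nonneg
        _ = 2 * (1/2:ℝ) ^ N * dist p.1 p.2 := by ring
    · have := tendsto_pow_atTop_nhds_zero_of_lt_one
        (by norm_num : (0:ℝ) ≤ 1/2) (by norm_num : (1/2:ℝ) < 1)
      have h2 := (this.const_mul 2).mul_const (dist p.1 p.2)
      simpa using h2
  choose ξ hξ using fun (p : X × X) (t : unitInterval) =>
    cauchySeq_tendsto_of_complete (hcauchy p t)
  -- convergence of dyadic approximations of t
  have hta : ∀ t : unitInterval,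
      Filter.Tendsto (fun n => (a n t : ℝ) / 2 ^ n) Filter.atTop (nhds (t : ℝ)) := by
    intro t
    rw [tendsto_iff_dist_tendsto_zero]
    apply squeeze_zero (fun n => dist_nonneg) (fun n => ?_)
        (tendsto_pow_atTop_nhds_zero_of_lt_one
          (by norm_num : (0:ℝ) ≤ 1/2) (by norm_num : (1/2:ℝ) < 1))
    rw [Real.dist_eq]
    calc |(a n t : ℝ) / 2 ^ n - (t : ℝ)| ≤ 1 / 2 ^ n := ha_dist n t
      _ = (1/2:ℝ) ^ n := by rw [div_pow, one_pow]
  -- the geodesic distance formula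
  have hdist : ∀ (p : X × X) (s t : unitInterval),
      dist (ξ p s) (ξ p t) = |(s : ℝ) - (t : ℝ)| * dist p.1 p.2 := by
    intro p s t
    have l1 : Filter.Tendsto (fun n => dist (B p n (a n s)) (B p n (a n t)))
        Filter.atTop (nhds (dist (ξ p s) (ξ p t))) := (hξ p s).dist (hξ p t)
    have l2 : Filter.Tendsto (fun n => dist (B p n (a n s)) (B p n (a n t)))
        Filter.atTop (nhds (|(s : ℝ) - (t : ℝ)| * dist p.1 p.2)) := by
      have e : (fun n => dist (B p n (a n s)) (B p n (a n t))) =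
          (fun n => |(a n s : ℝ) / 2 ^ n - (a n t : ℝ) / 2 ^ n| * dist p.1 p.2) := by
        funext n
        rw [key p n s t]
        congr 1
        have hp : (0:ℝ) < 2 ^ n := by positivity
        rw [div_sub_div_same, abs_div, abs_of_pos hp]
      rw [e]
      exact (((hta s).sub (hta t)).abs).mul_const _
    exact tendsto_nhds_unique l1 l2
  -- endpoints
  have hend0 : ∀ p : X × X, ξ p 0 = p.1 := by
    intro p
    have hz : ∀ n, B p n (a n 0) = p.1 := by
      intro n
      have : a n 0 = 0 := by simp [ha]
      rw [this]
      exact GeoSelAux.dyadicB_zero mid p n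
    have : Filter.Tendsto (fun n => B p n (a n 0)) Filter.atTop (nhds p.1) := by
      simp only [hz]; exact tendsto_const_nhds
    exact tendsto_nhds_unique (hξ p 0) this
  have hend1 : ∀ p : X × X, ξ p 1 = p.2 := by
    intro p
    have hz : ∀ n, B p n (a n 1) = p.2 := by
      intro n
      have h1 : a n 1 = 2 ^ n := by
        have : ((1 : unitInterval) : ℝ) * 2 ^ n = ((2 ^ n : ℕ) : ℝ) := by
          push_cast; ring
        simp only [ha, this, Nat.floor_natCast]
      rw [h1]
      exact GeoSelAux.dyadicB_top mid p n
    have : Filter.Tendsto (fun n => B p n (a n 1)) Filter.atTop (nhds p.2) := by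
      simp only [hz]; exact tendsto_const_nhds
    exact tendsto_nhds_unique (hξ p 1) this
  -- the selection map
  have hcont : ∀ p : X × X, Continuous (fun t => ξ p t) := by
    intro p
    apply LipschitzWith.continuous (K := Real.toNNReal (dist p.1 p.2))
    apply LipschitzWith.of_dist_le_mul
    intro s t
    rw [hdist p s t, Subtype.dist_eq, Real.dist_eq,
      Real.coe_toNNReal _ dist_nonneg]
    exact le_of_eq (mul_comm _ _)
  set GeoSel : X × X → C(unitInterval, X) := fun p => ⟨fun t => ξ p t, hcont p⟩ with hGS
  -- evaluation measurability
  have evalmeas : ∀ t : unitInterval, Measurable fun p => ξ p t := by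
    intro t
    apply measurable_of_tendsto_metrizable
      (f := fun n p => B p n (a n t))
      (fun n => GeoSelAux.measurable_dyadicB midmeas n (a n t))
    exact tendsto_pi_nhds.2 fun p => hξ p t
  -- measurability into C(I, X) with the Borel σ-algebra
  letI : MeasurableSpace C(unitInterval, X) := borel _
  haveI : BorelSpace C(unitInterval, X) := ⟨rfl⟩
  have τd : DenseRange (TopologicalSpace.denseSeq unitInterval) :=
    TopologicalSpace.denseRange_denseSeq unitInterval
  set e : C(unitInterval, X) → (ℕ → X) :=
    fun f n => f (TopologicalSpace.denseSeq unitInterval n) with he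
  have econt : Continuous e :=
    continuous_pi fun n => continuous_eval_const _
  have einj : Function.Injective e := by
    intro f g hfg
    have : ⇑f = ⇑g := τd.equalizer f.continuous g.continuous (funext fun n =>
      congrFun hfg n)
    exact ContinuousMap.coe_injective this
  have hemb : MeasurableEmbedding e :=
    econt.measurable.measurableEmbedding einj
  have hcomp : Measurable (e ∘ GeoSel) := by
    apply measurable_pi_iff.2
    intro n
    exact evalmeas _
  refine ⟨GeoSel, hemb.measurable_comp_iff.1 hcomp, ?_⟩
  intro x y
  refine ⟨hend0 (x, y), hend1 (x, y), fun s t => hdist (x, y) s t⟩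
end

section
/- Let (X,A) be a metric pair with X complete, separable, proper and geodesic, p ∈ [1,∞), and μ⁰, μ¹ ∈ M_p(X,A). Let γ ∈ Opt(μ⁰,μ¹) and let 𝛄 = GeoSel_# γ be the push-forward of γ under a measurable geodesic selection. Define μ_t = (e_t)_# 𝛄 restricted to Ω for t ∈ [0,1], where e_t is evaluation at time t. Then μ_0 = μ⁰, μ_1 = μ¹, each μ_t ∈ M_p(X,A), and for all s,t ∈ [0,1], Wb_p(μ_s,μ_t) ≤ |s−t| · Wb_p(μ_0,μ_1); consequently (μ_t) is a constant speed geodesic in (M_p(X,A), Wb_p) and M_p(X,A) is a geodesic space. -/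
open MeasureTheory Metric Set ENNReal Filter

private lemma aux_add_rpow_le {a b p : ℝ} (ha : 0 ≤ a) (hb : 0 ≤ b) (hp : 0 ≤ p) :
    (a + b) ^ p ≤ 2 ^ p * (a ^ p + b ^ p) := by
  have h1 : a + b ≤ 2 * max a b := by
    rcases le_total a b with h | h
    · rw [max_eq_right h]; linarith
    · rw [max_eq_left h]; linarith
  calc (a + b) ^ p ≤ (2 * max a b) ^ p := Real.rpow_le_rpow (by positivity) h1 hp
    _ = 2 ^ p * max a b ^ p := Real.mul_rpow (by norm_num) (le_max_of_le_left ha)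
    _ ≤ 2 ^ p * (a ^ p + b ^ p) := by
        apply mul_le_mul_of_nonneg_left _ (Real.rpow_nonneg (by norm_num) p)
        rcases le_total a b with h | h
        · rw [max_eq_right h]
          nlinarith [Real.rpow_nonneg ha p]
        · rw [max_eq_left h]
          nlinarith [Real.rpow_nonneg hb p]

open unitInterval in
theorem displacement_interpolation_is_geodesic
    {X : Type*} [MetricSpace X] [CompleteSpace X] [TopologicalSpace.SeparableSpace X]
    [ProperSpace X] [MeasurableSpace X] [BorelSpace X]
    (A : Set X) (hA : IsClosed A) (hne : A.Nonempty)
    (p : ℝ) (hp : 1 ≤ p)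
    (hgeodesic : ∀ x y : X, ∃ ξ : C(unitInterval, X), ξ 0 = x ∧ ξ 1 = y ∧
      ∀ s t : unitInterval, dist (ξ s) (ξ t) = |(s : ℝ) - (t : ℝ)| * dist x y)
    (μ₀ μ₁ : Measure X) (h₀ : MemMp p A μ₀) (h₁ : MemMp p A μ₁)
    (GeoSel : X × X → C(unitInterval, X))
    (hGmeas : @Measurable (X × X) C(unitInterval, X) _ (borel _) GeoSel)
    (hG0 : ∀ z : X × X, GeoSel z 0 = z.1) (hG1 : ∀ z : X × X, GeoSel z 1 = z.2)
    (hGspeed : ∀ z : X × X, ∀ s t : unitInterval,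
      dist (GeoSel z s) (GeoSel z t) = |(s : ℝ) - (t : ℝ)| * dist z.1 z.2)
    (γ : Measure (X × X)) (hγ : γ ∈ ptAdm A μ₀ μ₁)
    (hopt : ptCost p γ = WbPow p A μ₀ μ₁) :
    ((γ.map (fun z => GeoSel z 0)).restrict Aᶜ = μ₀) ∧
    ((γ.map (fun z => GeoSel z 1)).restrict Aᶜ = μ₁) ∧
    (∀ t : unitInterval, MemMp p A ((γ.map (fun z => GeoSel z t)).restrict Aᶜ)) ∧
    (∀ s t : unitInterval,
      Wb p A ((γ.map (fun z => GeoSel z s)).restrict Aᶜ)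
        ((γ.map (fun z => GeoSel z t)).restrict Aᶜ) ≤
        ENNReal.ofReal |(s : ℝ) - (t : ℝ)| * Wb p A μ₀ μ₁) := by
  classical
  obtain ⟨hγAA, hγfst, hγsnd⟩ := hγ
  have hp0 : (0:ℝ) < p := lt_of_lt_of_le one_pos hp
  have hpne : p ≠ 0 := ne_of_gt hp0
  have hAm : MeasurableSet A := hA.measurableSet
  letI : MeasurableSpace C(unitInterval, X) := borel _
  haveI : BorelSpace C(unitInterval, X) := ⟨rfl⟩
  have hE : ∀ t : unitInterval, Measurable fun z : X × X => GeoSel z t := fun t =>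
    ((continuous_eval_const t).measurable).comp hGmeas
  have hcostm : Measurable fun z : X × X => ENNReal.ofReal (dist z.1 z.2 ^ p) :=
    (ENNReal.continuous_ofReal.comp
      ((Real.continuous_rpow_const hp0.le).comp continuous_dist)).measurable
  have hmom : Measurable fun x : X => ENNReal.ofReal (infDist x A ^ p) :=
    (ENNReal.continuous_ofReal.comp
      ((Real.continuous_rpow_const hp0.le).comp (continuous_infDist_pt A))).measurable
  -- Part 1 and 2
  have h0eq : (γ.map fun z => GeoSel z 0).restrict Aᶜ = μ₀ := by
    have : (fun z : X × X => GeoSel z 0) = Prod.fst := funext hG0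
    rw [this]; exact hγfst
  have h1eq : (γ.map fun z => GeoSel z 1).restrict Aᶜ = μ₁ := by
    have : (fun z : X × X => GeoSel z 1) = Prod.snd := funext hG1
    rw [this]; exact hγsnd
  -- measurable quasi-projection onto A
  haveI : Nonempty A := hne.to_subtype
  obtain ⟨u, hu⟩ := TopologicalSpace.exists_dense_seq A
  set a : ℕ → X := fun n => (u n : X) with ha_def
  have haA : ∀ n, a n ∈ A := fun n => (u n).2
  have hex : ∀ x : X, x ∉ A → ∃ n, dist x (a n) < 2 * infDist x A := by
    intro x hx
    have hpos : 0 < infDist x A := (hA.notMem_iff_infDist_pos hne).1 hx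
    have h32 : infDist x A < (3/2) * infDist x A := by nlinarith
    obtain ⟨y, hyA, hy⟩ := (infDist_lt_iff hne).1 h32
    obtain ⟨n, hn⟩ := hu.exists_dist_lt (⟨y, hyA⟩ : A) (show (0:ℝ) < infDist x A / 2 by linarith)
    refine ⟨n, ?_⟩
    have hd : dist y (a n) < infDist x A / 2 := by
      simpa [Subtype.dist_eq] using hn
    calc dist x (a n) ≤ dist x y + dist y (a n) := dist_triangle _ _ _
      _ < 2 * infDist x A := by linarith
  set N : X → ℕ := fun x => if h : x ∉ A then Nat.find (hex x h) else 0 with hN_def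
  set pA : X → X := fun x => if x ∈ A then x else a (N x) with hpA_def
  have hpA_mem : ∀ x, pA x ∈ A := by
    intro x
    by_cases hx : x ∈ A
    · simp [hpA_def, hx]
    · simp [hpA_def, hx, haA]
  have hpA_dist : ∀ x, dist x (pA x) ≤ 2 * infDist x A := by
    intro x
    by_cases hx : x ∈ A
    · simp only [hpA_def, if_pos hx, dist_self]
      exact mul_nonneg (by norm_num) infDist_nonneg
    · have h1 : N x = Nat.find (hex x hx) := by simp [hN_def, hx]
      have := Nat.find_spec (hex x hx)
      simp only [hpA_def, if_neg hx, h1]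
      exact this.le
  have hPm : ∀ k : ℕ, MeasurableSet {x : X | dist x (a k) < 2 * infDist x A} :=
    fun k => (isOpen_lt (continuous_id.dist continuous_const)
      (continuous_const.mul (continuous_infDist_pt A))).measurableSet
  have hNmeas : Measurable N := by
    apply measurable_to_countable'
    intro k
    have hset : N ⁻¹' {k} = ((if k = 0 then A else (∅ : Set X)) ∪
        (Aᶜ ∩ {x : X | dist x (a k) < 2 * infDist x A} ∩
          ⋂ j ∈ Finset.range k, {x : X | dist x (a j) < 2 * infDist x A}ᶜ)) := by
      ext x
      by_cases hx : x ∈ A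
      · have hNx : N x = 0 := by simp [hN_def, hx]
        by_cases hk : k = 0 <;>
          simp [Set.mem_preimage, hNx, hk, hx, eq_comm]
      · have hNx : N x = Nat.find (hex x hx) := by simp [hN_def, hx]
        simp only [Set.mem_preimage, Set.mem_singleton_iff, hNx, Nat.find_eq_iff (hex x hx),
          Set.mem_union, Set.mem_inter_iff, Set.mem_compl_iff, Set.mem_setOf_eq,
          Set.mem_iInter, Finset.mem_range]
        constructor
        · rintro ⟨h1, h2⟩
          exact Or.inr ⟨⟨hx, h1⟩, fun j hj => h2 j hj⟩
        · rintro (h | ⟨⟨-, h1⟩, h2⟩)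
          · split_ifs at h with hk
            · exact absurd h hx
            · exact absurd h (Set.notMem_empty x)
          · exact ⟨h1, fun j hj => h2 j hj⟩
    rw [hset]
    refine MeasurableSet.union ?_ ((hAm.compl.inter (hPm k)).inter ?_)
    · split_ifs
      · exact hAm
      · exact MeasurableSet.empty
    · exact MeasurableSet.biInter (Set.to_countable _) (fun j _ => (hPm j).compl)
  have hpAmeas : Measurable pA := by
    have heq : pA = A.piecewise id (a ∘ N) := by
      ext x; by_cases hx : x ∈ A <;> simp [hpA_def, Set.piecewise, hx]
    rw [heq]
    exact Measurable.piecewise hAm measurable_id (measurable_from_top.comp hNmeas)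
  -- finiteness of the optimal cost
  have hmoment_bound : ∀ (μ : Measure X), μ A = 0 →
      (∫⁻ x, ENNReal.ofReal (infDist x A ^ p) ∂μ ≠ ⊤) →
      ∫⁻ x, ENNReal.ofReal (dist x (pA x) ^ p) ∂μ ≠ ⊤ := by
    intro μ hμA hμm
    have hb : ∀ x, ENNReal.ofReal (dist x (pA x) ^ p) ≤
        ENNReal.ofReal (2 ^ p) * ENNReal.ofReal (infDist x A ^ p) := by
      intro x
      rw [← ENNReal.ofReal_mul (Real.rpow_nonneg (by norm_num) p)]
      apply ENNReal.ofReal_le_ofReal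
      calc dist x (pA x) ^ p ≤ (2 * infDist x A) ^ p :=
            Real.rpow_le_rpow dist_nonneg (hpA_dist x) hp0.le
        _ = 2 ^ p * infDist x A ^ p := Real.mul_rpow (by norm_num) (infDist_nonneg)
    refine ne_top_of_le_ne_top ?_ (lintegral_mono hb)
    rw [lintegral_const_mul'' _ hmom.aemeasurable]
    exact ENNReal.mul_ne_top ENNReal.ofReal_ne_top hμm
  have hγ₀cost : ∃ γ₀ ∈ ptAdm A μ₀ μ₁, ptCost p γ₀ ≠ ⊤ := by
    have hdiag0 : Measurable fun x : X => (x, pA x) := measurable_id.prodMk hpAmeas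
    have hdiag1 : Measurable fun x : X => (pA x, x) := hpAmeas.prodMk measurable_id
    refine ⟨μ₀.map (fun x => (x, pA x)) + μ₁.map (fun x => (pA x, x)), ⟨?_, ?_, ?_⟩, ?_⟩
    · rw [Measure.add_apply]
      have e0 : (μ₀.map fun x => (x, pA x)) (A ×ˢ A) = 0 := by
        rw [Measure.map_apply hdiag0 (hAm.prod hAm)]
        refine measure_mono_null ?_ h₀.1
        intro x hx; exact hx.1
      have e1 : (μ₁.map fun x => (pA x, x)) (A ×ˢ A) = 0 := by
        rw [Measure.map_apply hdiag1 (hAm.prod hAm)]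
        refine measure_mono_null ?_ h₁.1
        intro x hx; exact hx.2
      rw [e0, e1, add_zero]
    · rw [Measure.map_add _ _ measurable_fst,
        Measure.map_map measurable_fst hdiag0, Measure.map_map measurable_fst hdiag1]
      have e0 : (Prod.fst ∘ fun x : X => (x, pA x)) = id := rfl
      have e1 : (Prod.fst ∘ fun x : X => (pA x, x)) = pA := rfl
      rw [e0, e1, Measure.map_id, Measure.restrict_add]
      have r0 : μ₀.restrict Aᶜ = μ₀ := by
        apply Measure.restrict_eq_self_of_ae_mem
        rw [ae_iff]
        simpa using h₀.1
      have r1 : (μ₁.map pA).restrict Aᶜ = 0 := by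
        rw [Measure.restrict_eq_zero, Measure.map_apply hpAmeas hAm.compl]
        have : pA ⁻¹' Aᶜ = ∅ := by
          ext x; simp [hpA_mem x]
        rw [this, measure_empty]
      rw [r0, r1, add_zero]
    · rw [Measure.map_add _ _ measurable_snd,
        Measure.map_map measurable_snd hdiag0, Measure.map_map measurable_snd hdiag1]
      have e0 : (Prod.snd ∘ fun x : X => (x, pA x)) = pA := rfl
      have e1 : (Prod.snd ∘ fun x : X => (pA x, x)) = id := rfl
      rw [e0, e1, Measure.map_id, Measure.restrict_add]
      have r0 : μ₁.restrict Aᶜ = μ₁ := by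
        apply Measure.restrict_eq_self_of_ae_mem
        rw [ae_iff]
        simpa using h₁.1
      have r1 : (μ₀.map pA).restrict Aᶜ = 0 := by
        rw [Measure.restrict_eq_zero, Measure.map_apply hpAmeas hAm.compl]
        have : pA ⁻¹' Aᶜ = ∅ := by
          ext x; simp [hpA_mem x]
        rw [this, measure_empty]
      rw [r1, r0, zero_add]
    · unfold ptCost
      rw [lintegral_add_measure, lintegral_map hcostm hdiag0, lintegral_map hcostm hdiag1]
      apply ENNReal.add_ne_top.2
      constructor
      · exact hmoment_bound μ₀ h₀.1 h₀.2.2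
      · have : ∀ x : X, ENNReal.ofReal (dist (pA x) x ^ p) =
            ENNReal.ofReal (dist x (pA x) ^ p) := by
          intro x; rw [dist_comm]
        simp only [this]
        exact hmoment_bound μ₁ h₁.1 h₁.2.2
  have hWfin : WbPow p A μ₀ μ₁ ≠ ⊤ := by
    obtain ⟨γ₀, hγ₀adm, hγ₀⟩ := hγ₀cost
    exact ne_top_of_le_ne_top hγ₀ (iInf₂_le γ₀ hγ₀adm)
  have hγcost : ptCost p γ ≠ ⊤ := by rw [hopt]; exact hWfin
  -- `ν t` and its basic structure
  set ν : unitInterval → Measure X := fun t => (γ.map (fun z => GeoSel z t)).restrict Aᶜ with hν_def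
  -- integral over first marginal
  have hI₁ : ∫⁻ z : X × X, ENNReal.ofReal (infDist z.1 A ^ p) ∂γ =
      ∫⁻ x, ENNReal.ofReal (infDist x A ^ p) ∂μ₀ := by
    have hAf : MeasurableSet (Prod.fst ⁻¹' A : Set (X × X)) := measurable_fst hAm
    rw [← lintegral_add_compl (fun z : X × X => ENNReal.ofReal (infDist z.1 A ^ p)) hAf]
    have hz : ∫⁻ z : X × X in Prod.fst ⁻¹' A, ENNReal.ofReal (infDist z.1 A ^ p) ∂γ = 0 := by
      have hae : ∀ᵐ z : X × X ∂γ, z ∈ Prod.fst ⁻¹' A →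
          ENNReal.ofReal (infDist z.1 A ^ p) = (fun _ : X × X => (0:ℝ≥0∞)) z :=
        ae_of_all _ fun z hz => by
          rw [show infDist z.1 A = 0 from infDist_zero_of_mem hz, Real.zero_rpow hpne,
            ENNReal.ofReal_zero]
      rw [setLIntegral_congr_fun_ae hAf hae, lintegral_zero]
    rw [hz, zero_add, ← hγfst, Measure.restrict_map measurable_fst hAm.compl,
      lintegral_map hmom measurable_fst]
    rfl
  have hI₁ne : ∫⁻ z : X × X, ENNReal.ofReal (infDist z.1 A ^ p) ∂γ ≠ ⊤ := by
    rw [hI₁]; exact h₀.2.2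
  -- MemMp for ν t
  have hmem : ∀ t : unitInterval, MemMp p A (ν t) := by
    intro t
    have htabs : |(t:ℝ) - (0:ℝ)| ≤ 1 := by
      rw [sub_zero, abs_of_nonneg t.2.1]; exact t.2.2
    have hdist0 : ∀ z : X × X, dist (GeoSel z t) z.1 ≤ dist z.1 z.2 := by
      intro z
      have := hGspeed z t 0
      rw [hG0 z] at this
      rw [this]
      calc |(t:ℝ) - ((0: unitInterval):ℝ)| * dist z.1 z.2 ≤ 1 * dist z.1 z.2 := by
            apply mul_le_mul_of_nonneg_right _ dist_nonneg
            simpa using htabs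
        _ = dist z.1 z.2 := one_mul _
    refine ⟨?_, ?_, ?_⟩
    · simp only [hν_def]
      rw [Measure.restrict_apply hAm, Set.inter_compl_self, measure_empty]
    · constructor
      intro x
      refine ⟨closedBall x 1, closedBall_mem_nhds x one_pos, ?_⟩
      have hνle : ν t (closedBall x 1) ≤ γ ((fun z => GeoSel z t) ⁻¹' closedBall x 1) := by
        simp only [hν_def]
        rw [Measure.restrict_apply (measurableSet_closedBall),
          Measure.map_apply (hE t) ((measurableSet_closedBall).inter hAm.compl)]
        exact measure_mono (Set.preimage_mono Set.inter_subset_left)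
      have hsub : (fun z => GeoSel z t) ⁻¹' closedBall x 1 ⊆
          ({z : X × X | 1 ≤ dist z.1 z.2} ∪ Prod.fst ⁻¹' (closedBall x 2 ∩ Aᶜ)) ∪
          (Prod.snd ⁻¹' (closedBall x 2 ∩ Aᶜ) ∪ A ×ˢ A) := by
        intro z hz
        simp only [Set.mem_preimage, Metric.mem_closedBall] at hz
        by_cases hd : 1 ≤ dist z.1 z.2
        · exact Or.inl (Or.inl hd)
        push_neg at hd
        have hz1 : dist z.1 x ≤ 2 := by
          calc dist z.1 x ≤ dist z.1 (GeoSel z t) + dist (GeoSel z t) x := dist_triangle _ _ _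
            _ ≤ dist z.1 z.2 + 1 := by
                refine add_le_add ?_ hz
                rw [dist_comm]; exact hdist0 z
            _ ≤ 2 := by linarith
        have hz2 : dist z.2 x ≤ 2 := by
          have hd1 : dist (GeoSel z t) z.2 ≤ dist z.1 z.2 := by
            have := hGspeed z t 1
            rw [hG1 z] at this
            rw [this]
            have h1t : |(t:ℝ) - ((1:unitInterval):ℝ)| ≤ 1 := by
              rw [abs_sub_comm]
              have : ((1:unitInterval):ℝ) = 1 := rfl
              rw [this, abs_of_nonneg (by linarith [t.2.2])]
              linarith [t.2.1]
            calc |(t:ℝ) - ((1:unitInterval):ℝ)| * dist z.1 z.2 ≤ 1 * dist z.1 z.2 :=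
                  mul_le_mul_of_nonneg_right h1t dist_nonneg
              _ = dist z.1 z.2 := one_mul _
          calc dist z.2 x ≤ dist z.2 (GeoSel z t) + dist (GeoSel z t) x := dist_triangle _ _ _
            _ ≤ dist z.1 z.2 + 1 := by
                refine add_le_add ?_ hz
                rw [dist_comm]; exact hd1
            _ ≤ 2 := by linarith
        by_cases h1 : z.1 ∈ A
        · by_cases h2 : z.2 ∈ A
          · exact Or.inr (Or.inr ⟨h1, h2⟩)
          · exact Or.inr (Or.inl ⟨Metric.mem_closedBall.2 hz2, h2⟩)
        · exact Or.inl (Or.inr ⟨Metric.mem_closedBall.2 hz1, h1⟩)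
      have hD : γ {z : X × X | 1 ≤ dist z.1 z.2} ≤ ptCost p γ := by
        have hDm : MeasurableSet {z : X × X | 1 ≤ dist z.1 z.2} :=
          (isClosed_le continuous_const continuous_dist).measurableSet
        calc γ {z : X × X | 1 ≤ dist z.1 z.2}
            = ∫⁻ z in {z : X × X | 1 ≤ dist z.1 z.2}, 1 ∂γ := (setLIntegral_one _).symm
          _ ≤ ∫⁻ z in {z : X × X | 1 ≤ dist z.1 z.2},
              ENNReal.ofReal (dist z.1 z.2 ^ p) ∂γ := by
              apply setLIntegral_mono hcostm
              intro z hz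
              have h1 : (1:ℝ) ≤ dist z.1 z.2 ^ p := by
                calc (1:ℝ) = 1 ^ p := (Real.one_rpow p).symm
                  _ ≤ dist z.1 z.2 ^ p := Real.rpow_le_rpow (by norm_num) hz hp0.le
              calc (1:ℝ≥0∞) = ENNReal.ofReal 1 := by simp
                _ ≤ ENNReal.ofReal (dist z.1 z.2 ^ p) := ENNReal.ofReal_le_ofReal h1
          _ ≤ ptCost p γ := setLIntegral_le_lintegral _ _
      have hB0 : γ (Prod.fst ⁻¹' (closedBall x 2 ∩ Aᶜ)) = μ₀ (closedBall x 2 ∩ Aᶜ) := by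
        rw [← hγfst, Measure.restrict_apply (measurableSet_closedBall.inter hAm.compl),
          Measure.map_apply measurable_fst
            ((measurableSet_closedBall.inter hAm.compl).inter hAm.compl)]
        congr 1
        rw [Set.inter_assoc, Set.inter_self]
      have hB1 : γ (Prod.snd ⁻¹' (closedBall x 2 ∩ Aᶜ)) = μ₁ (closedBall x 2 ∩ Aᶜ) := by
        rw [← hγsnd, Measure.restrict_apply (measurableSet_closedBall.inter hAm.compl),
          Measure.map_apply measurable_snd
            ((measurableSet_closedBall.inter hAm.compl).inter hAm.compl)]
        congr 1
        rw [Set.inter_assoc, Set.inter_self]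
      haveI := h₀.2.1
      haveI := h₁.2.1
      have hfin0 : μ₀ (closedBall x 2 ∩ Aᶜ) < ⊤ :=
        lt_of_le_of_lt (measure_mono Set.inter_subset_left)
          (isCompact_closedBall x 2).measure_lt_top
      have hfin1 : μ₁ (closedBall x 2 ∩ Aᶜ) < ⊤ :=
        lt_of_le_of_lt (measure_mono Set.inter_subset_left)
          (isCompact_closedBall x 2).measure_lt_top
      calc ν t (closedBall x 1) ≤ γ ((fun z => GeoSel z t) ⁻¹' closedBall x 1) := hνle
        _ ≤ γ (({z : X × X | 1 ≤ dist z.1 z.2} ∪ Prod.fst ⁻¹' (closedBall x 2 ∩ Aᶜ)) ∪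
            (Prod.snd ⁻¹' (closedBall x 2 ∩ Aᶜ) ∪ A ×ˢ A)) := measure_mono hsub
        _ ≤ (γ {z : X × X | 1 ≤ dist z.1 z.2} + γ (Prod.fst ⁻¹' (closedBall x 2 ∩ Aᶜ))) +
            (γ (Prod.snd ⁻¹' (closedBall x 2 ∩ Aᶜ)) + γ (A ×ˢ A)) :=
          le_trans (measure_union_le _ _) (add_le_add (measure_union_le _ _) (measure_union_le _ _))
        _ < ⊤ := by
            rw [hB0, hB1, hγAA, add_zero]
            apply ENNReal.add_lt_top.2
            constructor
            · apply ENNReal.add_lt_top.2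
              exact ⟨lt_of_le_of_lt hD (lt_top_iff_ne_top.2 hγcost), hfin0⟩
            · exact hfin1
    · -- finite p-moment
      have hbound : ∀ z : X × X, ENNReal.ofReal (infDist (GeoSel z t) A ^ p) ≤
          ENNReal.ofReal (2 ^ p) *
            (ENNReal.ofReal (infDist z.1 A ^ p) + ENNReal.ofReal (dist z.1 z.2 ^ p)) := by
        intro z
        have h1 : infDist (GeoSel z t) A ≤ infDist z.1 A + dist z.1 z.2 := by
          calc infDist (GeoSel z t) A ≤ infDist z.1 A + dist (GeoSel z t) z.1 :=
                infDist_le_infDist_add_dist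
            _ ≤ infDist z.1 A + dist z.1 z.2 := add_le_add le_rfl (hdist0 z)
        have h2 : infDist (GeoSel z t) A ^ p ≤ 2 ^ p * (infDist z.1 A ^ p + dist z.1 z.2 ^ p) :=
          le_trans (Real.rpow_le_rpow infDist_nonneg h1 hp0.le)
            (aux_add_rpow_le infDist_nonneg dist_nonneg hp0.le)
        calc ENNReal.ofReal (infDist (GeoSel z t) A ^ p) ≤
            ENNReal.ofReal (2 ^ p * (infDist z.1 A ^ p + dist z.1 z.2 ^ p)) :=
              ENNReal.ofReal_le_ofReal h2
          _ = ENNReal.ofReal (2 ^ p) *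
              (ENNReal.ofReal (infDist z.1 A ^ p) + ENNReal.ofReal (dist z.1 z.2 ^ p)) := by
              rw [ENNReal.ofReal_mul (Real.rpow_nonneg (by norm_num) p),
                ENNReal.ofReal_add (Real.rpow_nonneg infDist_nonneg p)
                  (Real.rpow_nonneg dist_nonneg p)]
      have hmain : ∫⁻ x, ENNReal.ofReal (infDist x A ^ p) ∂(ν t) ≤
          ENNReal.ofReal (2 ^ p) *
            ((∫⁻ z : X × X, ENNReal.ofReal (infDist z.1 A ^ p) ∂γ) + ptCost p γ) := by
        calc ∫⁻ x, ENNReal.ofReal (infDist x A ^ p) ∂(ν t)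
            ≤ ∫⁻ x, ENNReal.ofReal (infDist x A ^ p) ∂(γ.map (fun z => GeoSel z t)) :=
              lintegral_mono' Measure.restrict_le_self le_rfl
          _ = ∫⁻ z : X × X, ENNReal.ofReal (infDist (GeoSel z t) A ^ p) ∂γ :=
              lintegral_map hmom (hE t)
          _ ≤ ∫⁻ z : X × X, ENNReal.ofReal (2 ^ p) *
              (ENNReal.ofReal (infDist z.1 A ^ p) + ENNReal.ofReal (dist z.1 z.2 ^ p)) ∂γ :=
              lintegral_mono hbound
          _ = ENNReal.ofReal (2 ^ p) *
              ((∫⁻ z : X × X, ENNReal.ofReal (infDist z.1 A ^ p) ∂γ) + ptCost p γ) := by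
              have hmf : Measurable fun z : X × X => ENNReal.ofReal (infDist z.1 A ^ p) :=
                hmom.comp measurable_fst
              rw [lintegral_const_mul'' _ ((hmf.fun_add hcostm).aemeasurable)]
              congr 1
              exact lintegral_add_left hmf _
      refine ne_top_of_le_ne_top ?_ hmain
      exact ENNReal.mul_ne_top ENNReal.ofReal_ne_top (ENNReal.add_ne_top.2 ⟨hI₁ne, hγcost⟩)
  -- key inequality for WbPow
  have key : ∀ s t : unitInterval, WbPow p A (ν s) (ν t) ≤
      ENNReal.ofReal (|(s:ℝ) - (t:ℝ)| ^ p) * WbPow p A μ₀ μ₁ := by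
    intro s t
    have hFm : Measurable fun z : X × X => (GeoSel z s, GeoSel z t) := (hE s).prodMk (hE t)
    have hAA : MeasurableSet (A ×ˢ A : Set (X × X)) := hAm.prod hAm
    set π : Measure (X × X) :=
      (γ.map fun z : X × X => (GeoSel z s, GeoSel z t)).restrict (A ×ˢ A)ᶜ with hπ_def
    have hπadm : π ∈ ptAdm A (ν s) (ν t) := by
      refine ⟨?_, ?_, ?_⟩
      · simp only [hπ_def]
        rw [Measure.restrict_apply hAA, Set.inter_compl_self, measure_empty]
      · apply Measure.ext
        intro S hS
        simp only [hπ_def, hν_def]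
        rw [Measure.restrict_apply hS,
          Measure.map_apply measurable_fst (hS.inter hAm.compl),
          Measure.restrict_apply (measurable_fst (hS.inter hAm.compl)),
          Measure.map_apply hFm ((measurable_fst (hS.inter hAm.compl)).inter hAA.compl),
          Measure.restrict_apply hS,
          Measure.map_apply (hE s) (hS.inter hAm.compl)]
        congr 1
        ext z
        simp only [Set.mem_preimage, Set.mem_inter_iff, Set.mem_compl_iff, Set.mem_prod]
        constructor
        · rintro ⟨⟨h1, h2⟩, -⟩
          exact ⟨h1, h2⟩
        · rintro ⟨h1, h2⟩
          exact ⟨⟨h1, h2⟩, fun h => h2 h.1⟩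
      · apply Measure.ext
        intro S hS
        simp only [hπ_def, hν_def]
        rw [Measure.restrict_apply hS,
          Measure.map_apply measurable_snd (hS.inter hAm.compl),
          Measure.restrict_apply (measurable_snd (hS.inter hAm.compl)),
          Measure.map_apply hFm ((measurable_snd (hS.inter hAm.compl)).inter hAA.compl),
          Measure.restrict_apply hS,
          Measure.map_apply (hE t) (hS.inter hAm.compl)]
        congr 1
        ext z
        simp only [Set.mem_preimage, Set.mem_inter_iff, Set.mem_compl_iff, Set.mem_prod]
        constructor
        · rintro ⟨⟨h1, h2⟩, -⟩
          exact ⟨h1, h2⟩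
        · rintro ⟨h1, h2⟩
          exact ⟨⟨h1, h2⟩, fun h => h2 h.2⟩
    calc WbPow p A (ν s) (ν t) ≤ ptCost p π := iInf₂_le π hπadm
      _ ≤ ∫⁻ z : X × X,
          ENNReal.ofReal (dist (GeoSel z s) (GeoSel z t) ^ p) ∂γ := by
          simp only [hπ_def]
          unfold ptCost
          refine le_trans (lintegral_mono' Measure.restrict_le_self le_rfl) ?_
          exact (lintegral_map hcostm hFm).le
      _ = ENNReal.ofReal (|(s:ℝ) - (t:ℝ)| ^ p) * ptCost p γ := by
          unfold ptCost
          rw [← lintegral_const_mul'' _ hcostm.aemeasurable]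
          congr 1
          ext z
          rw [hGspeed z s t, Real.mul_rpow (abs_nonneg _) dist_nonneg,
            ENNReal.ofReal_mul (Real.rpow_nonneg (abs_nonneg _) _)]
      _ = ENNReal.ofReal (|(s:ℝ) - (t:ℝ)| ^ p) * WbPow p A μ₀ μ₁ := by rw [hopt]
  refine ⟨h0eq, h1eq, hmem, ?_⟩
  intro s t
  have h4 : Wb p A (ν s) (ν t) ≤
      (ENNReal.ofReal (|(s:ℝ) - (t:ℝ)| ^ p) * WbPow p A μ₀ μ₁) ^ (1 / p) :=
    ENNReal.rpow_le_rpow (key s t) (by positivity)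
  rw [ENNReal.mul_rpow_of_nonneg _ _ (by positivity : (0:ℝ) ≤ 1 / p),
    ← ENNReal.ofReal_rpow_of_nonneg (abs_nonneg _) hp0.le,
    ← ENNReal.rpow_mul, mul_one_div, div_self hpne, ENNReal.rpow_one] at h4
  exact h4
end
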